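/- arXiv:1202.1797 — 9 statements merged into one kernel-verified Lean document; each statement's English description precedes it below -/
import Mathlib

section
/- Let X be a positive bounded operator on a complex Hilbert space H whose range is closed, let P be the orthogonal projection of H onto the range of X, and let T be a bounded operator on H such that the commutator T X − X T is a compact operator. Then T P − P T is a compact operator. -/
open ContinuousLinearMap RCLike
open scoped InnerProductSpace


set_option maxHeartbeats 1600000 in
/-- If `X` is a positive operator with closed range on a complex Hilbert
space, `P` is the orthogonal projection onto the range of `X` (a self-adjoint idempotent with
range equal to the range of `X`), and `T` is a bounded operator such that `T X - X T` is
compact, then `T P - P T` is compact. -/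
theorem stmt_2 {H : Type*} [NormedAddCommGroup H] [InnerProductSpace ℂ H] [CompleteSpace H]
    (X : H →L[ℂ] H) (hX : X.IsPositive) (hXr : IsClosed (Set.range ⇑X))
    (P : H →L[ℂ] H)
    (hP : IsSelfAdjoint P ∧ IsIdempotentElem P ∧ LinearMap.range (P : H →ₗ[ℂ] H) = LinearMap.range (X : H →ₗ[ℂ] H))
    (T : H →L[ℂ] H) (hT : IsCompactOperator ⇑(T * X - X * T)) :
    IsCompactOperator ⇑(T * P - P * T) := by
  classical
  obtain ⟨hPsa, hPidem, hPrange⟩ := hP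
  have hXsym : ∀ u v : H, ⟪X u, v⟫_ℂ = ⟪u, X v⟫_ℂ :=
    fun u v => hX.1 u v
  have hPsym : ∀ u v : H, ⟪P u, v⟫_ℂ = ⟪u, P v⟫_ℂ :=
    fun u v => (isSelfAdjoint_iff_isSymmetric.mp hPsa) u v
  -- P fixes the range of X
  have hPfix : ∀ v ∈ LinearMap.range (X : H →ₗ[ℂ] H), P v = v := by
    intro v hv
    rw [← hPrange] at hv
    obtain ⟨y, rfl⟩ := hv
    have := congrArg (fun S : H →L[ℂ] H => S y) hPidem
    simpa [ContinuousLinearMap.mul_apply] using this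
  have hPXop : P * X = X := by
    ext h; exact hPfix _ ⟨h, rfl⟩
  have hXPop : X * P = X := by
    have := congrArg star hPXop
    rwa [star_mul, hPsa.star_eq, hX.isSelfAdjoint.star_eq] at this
  -- the range submodule
  set R : Submodule ℂ H := LinearMap.range (X : H →ₗ[ℂ] H) with hR
  have hRclosed : IsClosed (R : Set H) := by
    convert hXr using 1
    exact LinearMap.coe_range (X : H →ₗ[ℂ] H)
  haveI : CompleteSpace R := hRclosed.completeSpace_coe
  -- restriction of X to R is a bijection
  have hmem : ∀ v : R, X ((R.subtypeL : R →L[ℂ] H) v) ∈ R := fun v =>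
    LinearMap.mem_range.mpr ⟨v.1, rfl⟩
  set X' : R →L[ℂ] R := (X.comp R.subtypeL).codRestrict R hmem with hX'
  have hX'apply : ∀ v : R, ((X' v : R) : H) = X v.1 := fun v => rfl
  have hker : LinearMap.ker (X' : R →ₗ[ℂ] R) = ⊥ := by
    rw [LinearMap.ker_eq_bot']
    intro v hv
    have hXv : X v.1 = 0 := by
      have := congrArg (fun w : R => (w : H)) hv
      simpa [hX'apply] using this
    obtain ⟨y, hy⟩ := v.2
    have : ⟪(v : H), (v : H)⟫_ℂ = 0 := by
      calc ⟪(v : H), (v : H)⟫_ℂ = ⟪X y, (v : H)⟫_ℂ := by rw [← hy]; rfl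
        _ = ⟪y, X v.1⟫_ℂ := hXsym y v.1
        _ = 0 := by rw [hXv, inner_zero_right]
    have : (v : H) = 0 := inner_self_eq_zero.mp this
    exact Subtype.ext this
  have hrange : LinearMap.range (X' : R →ₗ[ℂ] R) = ⊤ := by
    rw [LinearMap.range_eq_top]
    rintro ⟨v, hv⟩
    obtain ⟨y, hy⟩ := hv
    refine ⟨⟨P y, ?_⟩, ?_⟩
    · rw [← hPrange]; exact ⟨y, rfl⟩
    · apply Subtype.ext
      show X (P y) = v
      rw [← ContinuousLinearMap.mul_apply, hXPop]; exact hy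
  set e : R ≃L[ℂ] R := ContinuousLinearEquiv.ofBijective X' hker hrange with he
  set M : ℝ := ‖(e.symm : R →L[ℂ] R)‖ with hM
  have hM0 : 0 ≤ M := hM ▸ norm_nonneg ((e.symm : R →L[ℂ] R))
  have hbound : ∀ v : R, ‖(v : H)‖ ≤ M * ‖X v.1‖ := by
    intro v
    have h1 := e.antilipschitz.le_mul_dist v 0
    simp only [dist_zero_right, map_zero] at h1
    have he' : ‖e v‖ = ‖X v.1‖ := by
      have : e v = X' v := by
        rw [he]; exact congrFun (ContinuousLinearEquiv.coeFn_ofBijective X' hker hrange) v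
      rw [this]
      rfl
    calc ‖(v : H)‖ = ‖v‖ := rfl
      _ ≤ M * ‖e v‖ := by exact_mod_cast h1
      _ = M * ‖X v.1‖ := by rw [he']
  -- P is a contraction
  have hPcontr : ∀ h : H, ‖P h‖ ≤ ‖h‖ := by
    intro h
    by_cases h0 : ‖P h‖ = 0
    · rw [h0]; exact norm_nonneg h
    have hsq : ‖P h‖ ^ 2 ≤ ‖P h‖ * ‖h‖ := by
      have h1 : ⟪P h, P h⟫_ℂ = ⟪P h, h⟫_ℂ := by
        calc ⟪P h, P h⟫_ℂ = ⟪h, P (P h)⟫_ℂ := hPsym h (P h)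
          _ = ⟪h, P h⟫_ℂ := by
              rw [show P (P h) = P h from by
                have := congrArg (fun S : H →L[ℂ] H => S h) hPidem
                simpa [ContinuousLinearMap.mul_apply] using this]
          _ = ⟪P h, h⟫_ℂ := by rw [← hPsym]
      calc ‖P h‖ ^ 2 = re ⟪P h, P h⟫_ℂ := (inner_self_eq_norm_sq _).symm
        _ = re ⟪P h, h⟫_ℂ := by rw [h1]
        _ ≤ ‖⟪P h, h⟫_ℂ‖ := re_le_norm _
        _ ≤ ‖P h‖ * ‖h‖ := norm_inner_le_norm _ _
    have hpos : 0 < ‖P h‖ := lt_of_le_of_ne (norm_nonneg _) (Ne.symm h0)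
    nlinarith
  clear_value M e X' R
  -- the approximants
  have key : ∀ ε : ℝ, 0 < ε → ∃ Q : H →L[ℂ] H,
      IsCompactOperator ⇑(T * Q - Q * T) ∧ ‖Q - P‖ ≤ ε * M := by
    intro ε hε
    set A : H →L[ℂ] H := X + (ε : ℂ) • 1 with hA
    have hAapply : ∀ h : H, A h = X h + (ε : ℂ) • h := by
      intro h; simp [hA]
    have hAinner : ∀ h : H, ‖h‖ ^ 2 * ε ≤ ‖⟪A h, h⟫_ℂ‖ := by
      intro h
      have h1 : re ⟪A h, h⟫_ℂ = re ⟪X h, h⟫_ℂ + ε * ‖h‖ ^ 2 := by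
        rw [hAapply, inner_add_left, inner_smul_left, map_add]
        congr 1
        rw [inner_self_eq_norm_sq_to_K (𝕜 := ℂ)]
        simp [Complex.conj_ofReal, ← Complex.ofReal_pow, ← Complex.ofReal_mul]
      have h2 : ε * ‖h‖ ^ 2 ≤ re ⟪A h, h⟫_ℂ := by
        rw [h1]
        have := hX.2 h
        rw [ContinuousLinearMap.reApplyInnerSelf] at this
        linarith
      calc ‖h‖ ^ 2 * ε = ε * ‖h‖ ^ 2 := by ring
        _ ≤ re ⟪A h, h⟫_ℂ := h2
        _ ≤ ‖⟪A h, h⟫_ℂ‖ := re_le_norm _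
    have hU : IsUnit A := by
      refine ContinuousLinearMap.isUnit_of_forall_le_norm_inner_map A
        (c := ⟨ε, le_of_lt hε⟩) hε ?_
      exact hAinner
    obtain ⟨u, hu⟩ := hU
    set Rε : H →L[ℂ] H := ((u⁻¹ : (H →L[ℂ] H)ˣ) : H →L[ℂ] H) with hRε
    have hARε : A * Rε = 1 := by rw [hRε, ← hu]; exact u.mul_inv
    have hRεA : Rε * A = 1 := by rw [hRε, ← hu]; exact u.inv_mul
    clear_value A Rε
    clear hu u hRε
    set C : H →L[ℂ] H := T * X - X * T with hC
    set Q : H →L[ℂ] H := X * Rε with hQ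
    clear_value C Q
    -- commutator identity
    have e1 : Rε * (T * A) * Rε = Rε * T := by
      rw [← mul_assoc, mul_assoc (Rε * T) A Rε, hARε, mul_one]
    have e2 : Rε * (A * T) * Rε = T * Rε := by
      rw [← mul_assoc, hRεA, one_mul]
    have h1 : T * A - A * T = C := by
      rw [hA, hC]; noncomm_ring
    have h2 : Rε * T - T * Rε = Rε * C * Rε := by
      calc Rε * T - T * Rε = Rε * (T * A) * Rε - Rε * (A * T) * Rε := by rw [e1, e2]
        _ = Rε * (T * A - A * T) * Rε := by rw [mul_sub, sub_mul]
        _ = Rε * C * Rε := by rw [h1]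
    have hRT : Rε * T = T * Rε + Rε * C * Rε := by
      rw [← h2]; abel
    have hid : T * Q - Q * T = C * Rε - X * (Rε * C * Rε) := by
      have h3 : Q * T = X * (T * Rε + Rε * C * Rε) := by
        rw [hQ, mul_assoc, hRT]
      rw [h3, hQ, hC]
      noncomm_ring
    have hcomp : IsCompactOperator ⇑(T * Q - Q * T) := by
      rw [hid]
      have hfun : ⇑(C * Rε - X * (Rε * C * Rε))
          = (⇑C ∘ ⇑Rε) - (⇑X ∘ (⇑Rε ∘ (⇑C ∘ ⇑Rε))) := by
        funext x
        simp [ContinuousLinearMap.mul_apply, Function.comp]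
      rw [hfun]
      exact (hT.comp_clm Rε).sub (((hT.comp_clm Rε).clm_comp Rε).clm_comp X)
    refine ⟨Q, hcomp, ?_⟩
    -- norm bound
    refine ContinuousLinearMap.opNorm_le_bound _ (by positivity) ?_
    intro h
    set v : H := P h with hv
    set u0 : H := h - P h with hu0
    clear_value v u0
    have hXu0 : X u0 = 0 := by
      rw [hu0, map_sub, ← ContinuousLinearMap.mul_apply X P, hXPop, sub_self]
    have hεC : (ε : ℂ) ≠ 0 := by exact_mod_cast (ne_of_gt hε)
    have hAu0 : A ((ε : ℂ)⁻¹ • u0) = u0 := by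
      rw [map_smul, hAapply, hXu0, zero_add, smul_smul, inv_mul_cancel₀ hεC, one_smul]
    have hRεu0 : Rε u0 = (ε : ℂ)⁻¹ • u0 := by
      conv_lhs => rw [← hAu0]
      rw [← ContinuousLinearMap.mul_apply, hRεA, ContinuousLinearMap.one_apply]
    have hQu0 : Q u0 = 0 := by
      rw [hQ, ContinuousLinearMap.mul_apply, hRεu0, map_smul, hXu0, smul_zero]
    set w : H := Rε v with hw
    clear_value w
    have hPRε : P * Rε = Rε * P := by
      have hPA : P * A = A * P := by
        rw [hA, mul_add, add_mul, hPXop, hXPop]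
        congr 1
        rw [mul_smul_comm, smul_mul_assoc, mul_one, one_mul]
      calc P * Rε = Rε * A * (P * Rε) := by rw [hRεA, one_mul]
        _ = Rε * (A * P) * Rε := by rw [mul_assoc, ← mul_assoc A P Rε, ← mul_assoc]
        _ = Rε * (P * A) * Rε := by rw [hPA]
        _ = Rε * P * (A * Rε) := by rw [← mul_assoc, mul_assoc (Rε * P) A Rε]
        _ = Rε * P := by rw [hARε, mul_one]
    have hPv : P v = v := by
      rw [hv, ← ContinuousLinearMap.mul_apply, hPidem]
    have hPw : P w = w := by
      rw [hw, ← ContinuousLinearMap.mul_apply, hPRε, ContinuousLinearMap.mul_apply, hPv]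
    have hwR : w ∈ R := hPrange ▸ ⟨w, hPw⟩
    have hAw : A w = v := by
      rw [hw, ← ContinuousLinearMap.mul_apply, hARε, ContinuousLinearMap.one_apply]
    have hXw_le : ‖X w‖ ≤ ‖v‖ := by
      have hAw2 : ‖A w‖ ^ 2 = ‖X w‖ ^ 2 + 2 * (ε * re ⟪X w, w⟫_ℂ) + ‖(ε : ℂ) • w‖ ^ 2 := by
        rw [hAapply, norm_add_sq (𝕜 := ℂ)]
        congr 2
        rw [inner_smul_right]
        simp
      have hre : 0 ≤ re ⟪X w, w⟫_ℂ := hX.2 w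
      have h2 : ‖X w‖ ^ 2 ≤ ‖A w‖ ^ 2 := by nlinarith [sq_nonneg ‖(ε : ℂ) • w‖]
      rw [hAw] at h2
      exact (pow_le_pow_iff_left₀ (norm_nonneg (X w)) (norm_nonneg v) two_ne_zero).mp h2
    have hwbd : ‖w‖ ≤ M * ‖v‖ := by
      have := hbound ⟨w, hwR⟩
      simp only at this
      calc ‖w‖ ≤ M * ‖X w‖ := this
        _ ≤ M * ‖v‖ := by exact mul_le_mul_of_nonneg_left hXw_le hM0
    have hsplit : (Q - P) h = -((ε : ℂ) • w) := by
      have hh : h = u0 + v := by rw [hu0, hv]; abel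
      have hQh : Q h = Q v := by
        rw [hh, map_add, hQu0, zero_add]
      have hPh : P h = v := hv.symm
      have hQv : Q v = v - (ε : ℂ) • w := by
        rw [hQ, ContinuousLinearMap.mul_apply, ← hw]
        have := hAapply w
        rw [hAw] at this
        rw [eq_sub_iff_add_eq, ← this]
      rw [ContinuousLinearMap.sub_apply, hQh, hPh, hQv]
      abel
    calc ‖(Q - P) h‖ = ε * ‖w‖ := by
          rw [hsplit, norm_neg, norm_smul]
          simp [abs_of_pos hε]
      _ ≤ ε * (M * ‖v‖) := by exact mul_le_mul_of_nonneg_left hwbd (le_of_lt hε)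
      _ ≤ ε * (M * ‖h‖) := by
          refine mul_le_mul_of_nonneg_left (mul_le_mul_of_nonneg_left ?_ hM0) (le_of_lt hε)
          rw [hv]; exact hPcontr h
      _ = ε * M * ‖h‖ := by ring
  -- take the limit
  choose Q hQc hQn using fun n : ℕ => key (1 / (n + 1)) (by positivity)
  apply isCompactOperator_of_tendsto (l := Filter.atTop)
    (F := fun n : ℕ => T * Q n - Q n * T)
  · rw [tendsto_iff_norm_sub_tendsto_zero]
    have hb : ∀ n : ℕ, ‖(T * Q n - Q n * T) - (T * P - P * T)‖ ≤ 2 * ‖T‖ * (1 / (n + 1) * M) := by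
      intro n
      have hgoal : (T * Q n - Q n * T) - (T * P - P * T)
          = T * (Q n - P) - (Q n - P) * T := by noncomm_ring
      rw [hgoal]
      calc ‖T * (Q n - P) - (Q n - P) * T‖
          ≤ ‖T * (Q n - P)‖ + ‖(Q n - P) * T‖ := norm_sub_le _ _
        _ ≤ ‖T‖ * ‖Q n - P‖ + ‖Q n - P‖ * ‖T‖ := by
            gcongr <;> exact norm_mul_le _ _
        _ = 2 * ‖T‖ * ‖Q n - P‖ := by ring
        _ ≤ 2 * ‖T‖ * (1 / (n + 1) * M) :=
            mul_le_mul_of_nonneg_left (hQn n) (by positivity)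
    refine squeeze_zero (fun n => norm_nonneg _) hb ?_
    have h1 : Filter.Tendsto (fun n : ℕ => 1 / ((n : ℝ) + 1)) Filter.atTop (nhds 0) :=
      tendsto_one_div_add_atTop_nhds_zero_nat
    have := (h1.const_mul (2 * ‖T‖ * M))
    simp only [mul_zero] at this
    convert this using 2 with n
    ring
  · exact Filter.Eventually.of_forall fun n => hQc n
end

section
/- Let H be a complex Hilbert space, let T be a bounded operator on H, and let N_1, …, N_n be closed subspaces of H with orthogonal projections P_{N_1}, …, P_{N_n} such that each commutator T P_{N_i} − P_{N_i} T (1 ≤ i ≤ n) is a compact operator and such that the algebraic sum N = N_1 + ⋯ + N_n is closed. Then, with P_N the orthogonal projection onto N, the commutator T P_N − P_N T is a compact operator. -/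
open ContinuousLinearMap

/-- Sum of submodules is below any submodule containing each summand. -/
lemma aux_sum_le {R M : Type*} [Semiring R] [AddCommMonoid M] [Module R M]
    {ι : Type*} (s : Finset ι) (f : ι → Submodule R M) (p : Submodule R M)
    (h : ∀ i ∈ s, f i ≤ p) : (∑ i ∈ s, f i) ≤ p := by
  classical
  induction s using Finset.induction with
  | empty => simp
  | insert _ _ hnot ih =>
    rw [Finset.sum_insert hnot, Submodule.add_eq_sup]
    exact sup_le (h _ (Finset.mem_insert_self _ _))
      (ih fun i hi => h i (Finset.mem_insert_of_mem hi))

/-- A finite sum of compact operators is compact. -/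
lemma aux_compact_sum {H : Type*} [NormedAddCommGroup H] [InnerProductSpace ℂ H]
    {ι : Type*} (s : Finset ι) (f : ι → H →L[ℂ] H)
    (h : ∀ i ∈ s, IsCompactOperator ⇑(f i)) :
    IsCompactOperator ⇑(∑ i ∈ s, f i) := by
  classical
  induction s using Finset.induction with
  | empty => simpa using isCompactOperator_zero
  | insert _ _ hnot ih =>
    rw [Finset.sum_insert hnot]
    exact (h _ (Finset.mem_insert_self _ _)).add
      (ih fun i hi => h i (Finset.mem_insert_of_mem hi))

/-- Composing a compact operator with bounded operators on both sides is compact. -/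
lemma aux_compact_mul {H : Type*} [NormedAddCommGroup H] [InnerProductSpace ℂ H]
    (A B C : H →L[ℂ] H) (hB : IsCompactOperator ⇑B) :
    IsCompactOperator ⇑(A * B * C) := by
  have h := (hB.comp_clm C).clm_comp A
  have he : ⇑(A * B * C) = ⇑A ∘ ⇑B ∘ ⇑C := by
    ext x; simp [ContinuousLinearMap.mul_apply, Function.comp]
  rw [he]; exact h

set_option maxHeartbeats 1000000 in
set_option synthInstance.maxHeartbeats 400000 in
/-- If `T` essentially commutes (modulo compacts) with the orthogonal
projections onto closed subspaces `N 1, …, N n`, and the algebraic sum `N = N 1 + ⋯ + N n`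
(the submodule sum `∑ i, N i`) is closed, then `T` essentially commutes with the orthogonal
projection onto `N`. -/
theorem stmt_3 {H : Type*} [NormedAddCommGroup H] [InnerProductSpace ℂ H] [CompleteSpace H]
    {n : ℕ} (T : H →L[ℂ] H) (N : Fin n → Submodule ℂ H)
    (hNc : ∀ i, IsClosed ((N i : Set H)))
    (P : Fin n → H →L[ℂ] H)
    (hP : ∀ i, IsSelfAdjoint (P i) ∧ IsIdempotentElem (P i) ∧ LinearMap.range (P i).toLinearMap = N i)
    (hcomm : ∀ i, IsCompactOperator ⇑(T * P i - P i * T))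
    (hclosed : IsClosed ((∑ i, N i : Submodule ℂ H) : Set H))
    (Q : H →L[ℂ] H)
    (hQ : IsSelfAdjoint Q ∧ IsIdempotentElem Q ∧ LinearMap.range (Q : H →L[ℂ] H).toLinearMap = ∑ i, N i) :
    IsCompactOperator ⇑(T * Q - Q * T) := by
  classical
  set M : Submodule ℂ H := ∑ i, N i with hM
  haveI : ∀ i, CompleteSpace (N i) := fun i => (hNc i).completeSpace_coe
  haveI : CompleteSpace M := hclosed.completeSpace_coe
  -- the Hilbert direct sum of the N i
  set E := PiLp 2 (fun i => ↥(N i)) with hE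
  haveI : CompleteSpace E := inferInstance
  -- the summation map
  set φ : E →L[ℂ] H :=
    ∑ i, ((N i).subtypeL.comp (PiLp.proj 2 (fun j => ↥(N j)) i)) with hφ
  have φ_apply : ∀ v : E, φ v = ∑ i, ((v i : H)) := by
    intro v
    rw [hφ, ContinuousLinearMap.sum_apply]
    exact Finset.sum_congr rfl fun i _ => rfl
  have hle : ∀ i, N i ≤ M := fun i =>
    Finset.single_le_sum (f := N) (fun j _ => zero_le) (Finset.mem_univ i)
  have hmemM : ∀ v : E, φ v ∈ M := by
    intro v
    rw [φ_apply]
    exact Submodule.sum_mem M fun i _ => hle i (v i).2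
  have hNle : ∀ i, N i ≤ LinearMap.range (φ : E →ₗ[ℂ] H) := by
    intro i x hx
    refine ⟨(WithLp.equiv 2 _).symm (Pi.single i (⟨x, hx⟩ : N i)), ?_⟩
    rw [ContinuousLinearMap.coe_coe, φ_apply]
    rw [Finset.sum_eq_single i]
    · simp
    · intro j _ hj; simp [Pi.single_eq_of_ne hj]
    · intro hj; exact absurd (Finset.mem_univ i) hj
  have hMrange : M ≤ LinearMap.range (φ : E →ₗ[ℂ] H) :=
    aux_sum_le Finset.univ N _ fun i _ => hNle i
  -- corestriction of φ to M
  set φ' : E →L[ℂ] M := φ.codRestrict M hmemM with hφ'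
  have hker_closed : IsClosed ((LinearMap.ker (φ' : E →ₗ[ℂ] M) : Submodule ℂ E) : Set E) :=
    ContinuousLinearMap.isClosed_ker φ'
  haveI : CompleteSpace (LinearMap.ker (φ' : E →ₗ[ℂ] M)) := hker_closed.completeSpace_coe
  set K : Submodule ℂ E := (LinearMap.ker (φ' : E →ₗ[ℂ] M))ᗮ with hK
  haveI : CompleteSpace K := (Submodule.isClosed_orthogonal _).completeSpace_coe
  have hcompl : IsCompl (LinearMap.ker (φ' : E →ₗ[ℂ] M)) K :=
    Submodule.isCompl_orthogonal_of_hasOrthogonalProjection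
  set ψ : K →L[ℂ] M := φ'.comp K.subtypeL with hψ
  have hψ_inj : LinearMap.ker (ψ : K →ₗ[ℂ] M) = ⊥ := by
    rw [Submodule.eq_bot_iff]
    rintro ⟨x, hxK⟩ hx
    have hxker : x ∈ LinearMap.ker (φ' : E →ₗ[ℂ] M) := by
      simpa [hψ] using hx
    have hx0 : x ∈ (⊥ : Submodule ℂ E) :=
      hcompl.disjoint.le_bot ⟨hxker, hxK⟩
    apply Subtype.ext
    simpa using hx0
  have hψ_surj : LinearMap.range (ψ : K →ₗ[ℂ] M) = ⊤ := by
    rw [Submodule.eq_top_iff']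
    intro m
    obtain ⟨e, he⟩ := hMrange m.2
    have hsup : e ∈ LinearMap.ker (φ' : E →ₗ[ℂ] M) ⊔ K := by
      rw [hcompl.sup_eq_top]; trivial
    obtain ⟨a, ha, b, hb, hab⟩ := Submodule.mem_sup.mp hsup
    refine ⟨⟨b, hb⟩, ?_⟩
    have hb' : φ' b = m := by
      have h1 : φ' e = m := Subtype.ext he
      have h2 : φ' a = 0 := ha
      rw [← hab, map_add, h2, zero_add] at h1
      exact h1
    simpa [hψ] using hb'
  set eqv : K ≃L[ℂ] M := ContinuousLinearEquiv.ofBijective ψ hψ_inj hψ_surj with heqv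
  set S : M →L[ℂ] E := K.subtypeL.comp (eqv.symm : M →L[ℂ] K) with hS
  have hSval : ∀ m : M, φ (S m) = (m : H) := by
    intro m
    have h1 : ψ (eqv.symm m) = m := by
      have h2 : eqv (eqv.symm m) = m := eqv.apply_symm_apply m
      rwa [ContinuousLinearEquiv.coeFn_ofBijective] at h2
    have h3 : φ' ((eqv.symm m : K) : E) = m := h1
    exact congrArg (Subtype.val) h3
  -- corestriction of Q to M
  set Qc : H →L[ℂ] M := Q.codRestrict M
    (fun x => hQ.2.2 ▸ LinearMap.mem_range_self _ x) with hQc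
  set R : Fin n → (H →L[ℂ] H) := fun i =>
    (N i).subtypeL.comp ((PiLp.proj 2 (fun j => ↥(N j)) i).comp (S.comp Qc)) with hR
  have hsum : ∑ i, R i = Q := by
    ext x
    rw [ContinuousLinearMap.sum_apply]
    have h1 : φ (S (Qc x)) = ((Qc x : M) : H) := hSval (Qc x)
    rw [φ_apply] at h1
    have h2 : ((Qc x : M) : H) = Q x := rfl
    simpa [hR, h2] using h1
  have hfix : ∀ (A : H →L[ℂ] H), IsIdempotentElem A →
      ∀ x ∈ LinearMap.range (A : H →ₗ[ℂ] H), A x = x := by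
    rintro A hA x ⟨w, rfl⟩
    have : (A * A) w = A w := by rw [hA]
    simpa [ContinuousLinearMap.mul_apply] using this
  have hPR : ∀ i, P i * R i = R i := by
    intro i
    ext x
    rw [ContinuousLinearMap.mul_apply]
    refine hfix (P i) (hP i).2.1 _ ?_
    rw [(hP i).2.2]
    exact Subtype.coe_prop _
  have hQP : ∀ i, Q * P i = P i := by
    intro i
    ext x
    rw [ContinuousLinearMap.mul_apply]
    refine hfix Q hQ.2.1 _ ?_
    rw [hQ.2.2]
    exact hle i ((hP i).2.2 ▸ LinearMap.mem_range_self _ x)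
  -- starred versions
  have hRP' : ∀ i, star (R i) * P i = star (R i) := by
    intro i
    have := congrArg star (hPR i)
    rwa [star_mul, (hP i).1.star_eq] at this
  have hPQ' : ∀ i, P i * Q = P i := by
    intro i
    have := congrArg star (hQP i)
    rwa [star_mul, (hP i).1.star_eq, hQ.1.star_eq] at this
  have hsum' : ∑ i, star (R i) = Q := by
    have := congrArg star hsum
    rwa [star_sum, hQ.1.star_eq] at this
  -- the two key factorizations
  have keyA : (1 - Q) * T * Q = ∑ i, ((1 - Q) * (T * P i - P i * T) * R i) := by
    have h1 : ∀ i, (1 - Q) * (T * P i - P i * T) * R i = (1 - Q) * T * R i := by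
      intro i
      have h0 : (1 - Q) * P i = 0 := by rw [sub_mul, one_mul, hQP i, sub_self]
      have h2 : (1 - Q) * (T * P i - P i * T) * R i =
          (1 - Q) * T * (P i * R i) - ((1 - Q) * P i) * (T * R i) := by noncomm_ring
      rw [h2, hPR i, h0, zero_mul, sub_zero]
    rw [Finset.sum_congr rfl fun i _ => h1 i, ← Finset.mul_sum, hsum]
  have keyB : Q * T * (1 - Q) = ∑ i, (star (R i) * (P i * T - T * P i) * (1 - Q)) := by
    have h1 : ∀ i, star (R i) * (P i * T - T * P i) * (1 - Q) =
        star (R i) * (T * (1 - Q)) := by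
      intro i
      have h0 : P i * (1 - Q) = 0 := by rw [mul_sub, mul_one, hPQ' i, sub_self]
      have h2 : star (R i) * (P i * T - T * P i) * (1 - Q) =
          (star (R i) * P i) * (T * (1 - Q)) - star (R i) * (T * (P i * (1 - Q))) := by
        noncomm_ring
      rw [h2, hRP' i, h0, mul_zero, mul_zero, sub_zero]
    rw [Finset.sum_congr rfl fun i _ => h1 i, ← Finset.sum_mul, hsum', mul_assoc]
  -- compactness
  have hA : IsCompactOperator ⇑((1 - Q) * T * Q) := by
    rw [keyA]
    exact aux_compact_sum _ _ fun i _ => aux_compact_mul _ _ _ (hcomm i)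
  have hB : IsCompactOperator ⇑(Q * T * (1 - Q)) := by
    rw [keyB]
    refine aux_compact_sum _ _ fun i _ => aux_compact_mul _ _ _ ?_
    have h2 : P i * T - T * P i = -(T * P i - P i * T) := by noncomm_ring
    rw [h2, ContinuousLinearMap.coe_neg']
    exact (hcomm i).neg
  have hfin : T * Q - Q * T = (1 - Q) * T * Q - Q * T * (1 - Q) := by noncomm_ring
  rw [hfin]
  rw [ContinuousLinearMap.coe_sub']
  exact hA.sub hB
end

section
/- Let n ≥ 2 and let N_1, …, N_n be closed subspaces of a complex Hilbert space H, not all equal to the closure N of their algebraic sum N_1 + ⋯ + N_n. Then c(N_1, …, N_n) = (n/(n−1)) · ‖(1/n)(P_{N_1} + ⋯ + P_{N_n}) − P_N‖ − 1/(n−1), where the norm is the operator norm and P_{N_i}, P_N are the orthogonal projections onto N_i and N respectively. -/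
set_option maxHeartbeats 2000000

open scoped ComplexConjugate

namespace BGMAux
set_option linter.unusedSectionVars false


variable {H : Type*} [NormedAddCommGroup H] [InnerProductSpace ℂ H] [CompleteSpace H]

local notation "⟪" x ", " y "⟫" => @inner ℂ _ _ x y

variable {P : H →L[ℂ] H} {M : Submodule ℂ H}

theorem sym (hsa : IsSelfAdjoint P) (x y : H) : ⟪P x, y⟫ = ⟪x, P y⟫ :=
  hsa.isSymmetric x y

theorem proj_mem (hrg : LinearMap.range (P : H →ₗ[ℂ] H) = M) (x : H) : P x ∈ M := by
  rw [← hrg]; exact LinearMap.mem_range_self _ x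

theorem proj_fix (hid : IsIdempotentElem P) (hrg : LinearMap.range (P : H →ₗ[ℂ] H) = M) {x : H}
    (hx : x ∈ M) : P x = x := by
  rw [← hrg] at hx
  obtain ⟨y, rfl⟩ := hx
  have h := DFunLike.congr_fun hid y
  simpa [ContinuousLinearMap.mul_apply] using h

theorem proj_zero (hsa : IsSelfAdjoint P) (hid : IsIdempotentElem P)
    (hrg : LinearMap.range (P : H →ₗ[ℂ] H) = M) {x : H} (hx : x ∈ Mᗮ) : P x = 0 := by
  have h1 : ⟪P x, P x⟫ = ⟪x, P x⟫ := by
    rw [sym hsa x (P x)]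
    congr 1
    have h := DFunLike.congr_fun hid x
    simpa [ContinuousLinearMap.mul_apply] using h
  have h2 : ⟪x, P x⟫ = 0 := (Submodule.mem_orthogonal' M x).1 hx _ (proj_mem hrg x)
  rw [h2, inner_self_eq_zero] at h1
  exact h1

theorem proj_inner (hsa : IsSelfAdjoint P) (hid : IsIdempotentElem P) (x : H) :
    ⟪P x, x⟫ = ((‖P x‖ ^ 2 : ℝ) : ℂ) := by
  have h1 : ⟪P x, x⟫ = ⟪P x, P x⟫ := by
    rw [sym hsa x x]
    rw [sym hsa x (P x)]
    congr 1
    have h := DFunLike.congr_fun hid x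
    simpa [ContinuousLinearMap.mul_apply] using (h.symm)
  rw [h1, inner_self_eq_norm_sq_to_K]
  norm_cast

theorem proj_sub_mem (hsa : IsSelfAdjoint P) (hid : IsIdempotentElem P)
    (hrg : LinearMap.range (P : H →ₗ[ℂ] H) = M) (x : H) : x - P x ∈ Mᗮ := by
  rw [Submodule.mem_orthogonal]
  intro u hu
  have hPu : P u = u := proj_fix hid hrg hu
  have : ⟪u, x - P x⟫ = ⟪P u, x - P x⟫ := by rw [hPu]
  rw [this, sym hsa]
  have h := DFunLike.congr_fun hid x
  have hPP : P (P x) = P x := by simpa [ContinuousLinearMap.mul_apply] using h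
  simp [map_sub, hPP]

theorem proj_norm_sub_sq (hsa : IsSelfAdjoint P) (hid : IsIdempotentElem P) (x : H) :
    ‖x - P x‖ ^ 2 = ‖x‖ ^ 2 - ‖P x‖ ^ 2 := by
  have h := @norm_sub_sq ℂ _ _ _ _ x (P x)
  have h2 : RCLike.re ⟪x, P x⟫ = ‖P x‖ ^ 2 := by
    rw [inner_re_symm, proj_inner hsa hid]
    exact RCLike.ofReal_re _
  rw [h, h2]; ring

theorem proj_norm_le (hsa : IsSelfAdjoint P) (hid : IsIdempotentElem P) (x : H) :
    ‖P x‖ ≤ ‖x‖ := by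
  have h := proj_norm_sub_sq hsa hid x
  nlinarith [sq_nonneg ‖x - P x‖, norm_nonneg (P x), norm_nonneg x]


theorem sym' (S : H →L[ℂ] H) (hsa : IsSelfAdjoint S) (x y : H) : ⟪S x, y⟫ = ⟪x, S y⟫ :=
  hsa.isSymmetric x y

theorem inner_self_re (x : H) : (⟪x, x⟫).re = ‖x‖ ^ 2 := by
  rw [inner_self_eq_norm_sq_to_K (𝕜 := ℂ)]
  norm_cast

theorem smul_re (r : ℝ) (z : ℂ) : (r • z).re = r * z.re := by
  simp [Complex.real_smul]

theorem inner_rsmul_left (r : ℝ) (x y : H) : ⟪r • x, y⟫ = (r : ℂ) * ⟪x, y⟫ := by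
  rw [RCLike.real_smul_eq_coe_smul (K := ℂ), inner_smul_left]
  simp [Complex.conj_ofReal]

theorem inner_rsmul_right (r : ℝ) (x y : H) : ⟪x, r • y⟫ = (r : ℂ) * ⟪x, y⟫ := by
  rw [RCLike.real_smul_eq_coe_smul (K := ℂ), inner_smul_right]
  rfl

theorem re_ofReal_mul' (r : ℝ) (z : ℂ) : ((r : ℂ) * z).re = r * z.re := by
  simp [Complex.mul_re]

theorem pos_norm_exists (S : H →L[ℂ] H) (hsa : IsSelfAdjoint S)
    (hpos : ∀ x : H, 0 ≤ (⟪S x, x⟫).re) {ε : ℝ} (hε : 0 < ε) :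
    ∃ x : H, ‖x‖ ≤ 1 ∧ ‖S‖ - ε < (⟪S x, x⟫).re := by
  by_contra hcon
  push_neg at hcon
  set m : ℝ := ‖S‖ - ε with hm
  have hm0 : 0 ≤ m := by
    have := hcon 0 (by simp)
    simpa using this
  have hq : ∀ z : H, (⟪S z, z⟫).re ≤ m * ‖z‖ ^ 2 := by
    intro z
    rcases eq_or_ne z 0 with rfl | hz
    · simp
    · have hz0 : (0:ℝ) < ‖z‖ := norm_pos_iff.2 hz
      have h1 := hcon (‖z‖⁻¹ • z) (by
        rw [norm_smul, norm_inv, norm_norm, inv_mul_cancel₀ hz0.ne'])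
      have h2 : (⟪S (‖z‖⁻¹ • z), ‖z‖⁻¹ • z⟫).re
          = ‖z‖⁻¹ * (‖z‖⁻¹ * (⟪S z, z⟫).re) := by
        rw [S.map_smul_of_tower, inner_rsmul_left, inner_rsmul_right,
          re_ofReal_mul', re_ofReal_mul']
      rw [h2] at h1
      have hz2 : (0:ℝ) < ‖z‖ ^ 2 := by positivity
      calc (⟪S z, z⟫).re = (‖z‖⁻¹ * (‖z‖⁻¹ * (⟪S z, z⟫).re)) * ‖z‖ ^ 2 := by
            rw [sq]; field_simp
        _ ≤ m * ‖z‖ ^ 2 := by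
            exact mul_le_mul_of_nonneg_right h1 hz2.le
  have hsym2 : ∀ a b : H, (⟪S b, a⟫).re = (⟪S a, b⟫).re := by
    intro a b
    rw [sym' S hsa b a, ← inner_conj_symm]
    exact Complex.conj_re _
  have hbound : ∀ x y : H, ‖x‖ ≤ 1 → ‖y‖ ≤ 1 → (⟪S x, y⟫).re ≤ m := by
    intro x y hx hy
    have hpol : (⟪S (x+y), x+y⟫).re - (⟪S (x-y), x-y⟫).re = 4 * (⟪S x, y⟫).re := by
      simp only [map_add, map_sub, inner_add_left, inner_add_right, inner_sub_left,
        inner_sub_right, Complex.add_re, Complex.sub_re]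
      have := hsym2 x y
      linarith
    have h1 : (⟪S (x+y), x+y⟫).re ≤ m * ‖x+y‖ ^ 2 := hq _
    have h2 : 0 ≤ (⟪S (x-y), x-y⟫).re := hpos _
    have h3 : ‖x + y‖ ≤ 2 := by
      calc ‖x + y‖ ≤ ‖x‖ + ‖y‖ := norm_add_le x y
        _ ≤ 2 := by linarith
    have h4 : ‖x + y‖ ^ 2 ≤ 4 := by nlinarith [norm_nonneg (x + y)]
    have h5 : m * ‖x + y‖ ^ 2 ≤ m * 4 := mul_le_mul_of_nonneg_left h4 hm0
    linarith
  have hnorm : ∀ x : H, ‖x‖ ≤ 1 → ‖S x‖ ≤ m := by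
    intro x hx
    rcases eq_or_ne (S x) 0 with h0 | h0
    · rw [h0]; simpa using hm0
    · have hS0 : (0:ℝ) < ‖S x‖ := norm_pos_iff.2 h0
      have h1 := hbound x (‖S x‖⁻¹ • S x) hx (by
        rw [norm_smul, norm_inv, norm_norm, inv_mul_cancel₀ hS0.ne'])
      have h2 : (⟪S x, ‖S x‖⁻¹ • S x⟫).re = ‖S x‖⁻¹ * ‖S x‖ ^ 2 := by
        rw [inner_rsmul_right, re_ofReal_mul', inner_self_re]
      rw [h2] at h1
      calc ‖S x‖ = ‖S x‖⁻¹ * ‖S x‖ ^ 2 := by field_simp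
        _ ≤ m := h1
  have hle : ‖S‖ ≤ m := by
    refine ContinuousLinearMap.opNorm_le_bound S hm0 ?_
    intro x
    rcases eq_or_ne x 0 with rfl | hx
    · simp
    · have hx0 : (0:ℝ) < ‖x‖ := norm_pos_iff.2 hx
      have h1 := hnorm (‖x‖⁻¹ • x) (by
        rw [norm_smul, norm_inv, norm_norm, inv_mul_cancel₀ hx0.ne'])
      rw [S.map_smul_of_tower, norm_smul, norm_inv, norm_norm] at h1
      rw [inv_mul_le_iff₀ hx0] at h1
      exact h1.trans_eq (mul_comm _ _)
  rw [hm] at hle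
  linarith

theorem sum_erase_re {n : ℕ} (x : Fin n → H) :
    ∑ i, ∑ j ∈ Finset.univ.erase i, ((⟪x i, x j⟫ : ℂ)).re
      = ‖∑ i, x i‖ ^ 2 - ∑ i, ‖x i‖ ^ 2 := by
  have h1 : ‖∑ i, x i‖ ^ 2 = ∑ i, ∑ j, ((⟪x i, x j⟫ : ℂ)).re := by
    rw [← inner_self_re (∑ i, x i), sum_inner, Complex.re_sum]
    exact Finset.sum_congr rfl fun i _ => by rw [inner_sum, Complex.re_sum]
  have h2 : ∀ i : Fin n, ∑ j, ((⟪x i, x j⟫ : ℂ)).re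
      = ‖x i‖ ^ 2 + ∑ j ∈ Finset.univ.erase i, ((⟪x i, x j⟫ : ℂ)).re := by
    intro i
    rw [← Finset.add_sum_erase _ _ (Finset.mem_univ i), inner_self_re]
  rw [h1, Finset.sum_congr rfl fun i _ => h2 i, Finset.sum_add_distrib]
  ring

end BGMAux


/-- The cosine `c(N₁, …, Nₙ)` of a finite family of subspaces of a complex Hilbert space. -/
noncomputable def cosine {H : Type*} [NormedAddCommGroup H] [InnerProductSpace ℂ H]
    {n : ℕ} (N : Fin n → Submodule ℂ H) : ℝ :=
  sSup {c : ℝ | ∃ x : Fin n → H,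
    (∀ i, x i ∈ (N i)ᗮ ⊓ (∑ j, N j).topologicalClosure) ∧ x ≠ 0 ∧
    c = (1 / ((n : ℝ) - 1)) *
        (∑ i, ∑ j ∈ Finset.univ.erase i, ((inner ℂ (x i) (x j) : ℂ)).re) /
        (∑ i, ‖x i‖ ^ 2)}

open BGMAux in
/-- (Badea–Grivaux–Müller formula.) For `n ≥ 2` closed subspaces
`N₁, …, Nₙ`, not all equal to the closure `N` of their algebraic sum, with orthogonal
projections `P i` onto `N i` and `Q` onto `N`:
`c(N₁,…,Nₙ) = (n/(n−1)) ‖(1/n)(P₁ + ⋯ + Pₙ) − Q‖ − 1/(n−1)`. -/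
theorem stmt_5 {H : Type*} [NormedAddCommGroup H] [InnerProductSpace ℂ H] [CompleteSpace H]
    {n : ℕ} (hn : 2 ≤ n) (N : Fin n → Submodule ℂ H)
    (hNc : ∀ i, IsClosed ((N i : Set H)))
    (hne : ¬ ∀ i, N i = (∑ j, N j).topologicalClosure)
    (P : Fin n → H →L[ℂ] H)
    (hP : ∀ i, IsSelfAdjoint (P i) ∧ IsIdempotentElem (P i) ∧ LinearMap.range (P i : H →ₗ[ℂ] H) = N i)
    (Q : H →L[ℂ] H)
    (hQ : IsSelfAdjoint Q ∧ IsIdempotentElem Q ∧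
      LinearMap.range (Q : H →ₗ[ℂ] H) = (∑ j, N j).topologicalClosure) :
    cosine N = ((n : ℝ) / ((n : ℝ) - 1)) * ‖(1 / (n : ℂ)) • (∑ i, P i) - Q‖ -
      1 / ((n : ℝ) - 1) := by
  classical
  obtain ⟨hQsa, hQid, hQrg⟩ := hQ
  set M : Submodule ℂ H := (∑ j, N j).topologicalClosure with hMdef
  have hPsa : ∀ i, IsSelfAdjoint (P i) := fun i => (hP i).1
  have hPid : ∀ i, IsIdempotentElem (P i) := fun i => (hP i).2.1
  have hPrg : ∀ i, LinearMap.range (P i : H →ₗ[ℂ] H) = N i := fun i => (hP i).2.2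
  have hnR : (2:ℝ) ≤ (n:ℝ) := by exact_mod_cast hn
  have hn1 : (0:ℝ) < (n:ℝ) - 1 := by linarith
  have hn0 : (0:ℝ) < (n:ℝ) := by linarith
  have hnC : (n:ℂ) ≠ 0 := Nat.cast_ne_zero.2 (by omega)
  have hnRne : (n:ℝ) ≠ 0 := hn0.ne'
  have hNleM : ∀ i, N i ≤ M := fun i =>
    le_trans (Finset.single_le_sum (f := N) (fun j _ => zero_le) (Finset.mem_univ i))
      (Submodule.le_topologicalClosure _)
  set T : H →L[ℂ] H := (1 / (n:ℂ)) • (∑ i, P i) with hTdef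
  set S : H →L[ℂ] H := Q - T with hSdef
  have hQmem : ∀ x, Q x ∈ M := proj_mem hQrg
  have hQfix : ∀ {x : H}, x ∈ M → Q x = x := fun hx => proj_fix hQid hQrg hx
  have hPmem : ∀ i x, P i x ∈ N i := fun i => proj_mem (hPrg i)
  have hPzero : ∀ i, ∀ {x : H}, x ∈ (N i)ᗮ → P i x = 0 :=
    fun i _ hx => proj_zero (hPsa i) (hPid i) (hPrg i) hx
  have hPQ : ∀ i x, P i (Q x) = P i x := by
    intro i x
    have h1 : x - Q x ∈ (N i)ᗮ :=
      Submodule.orthogonal_le (hNleM i) (proj_sub_mem hQsa hQid hQrg x)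
    have h2 : P i (x - Q x) = 0 := hPzero i h1
    rw [map_sub, sub_eq_zero] at h2
    exact h2.symm
  have hSapp : ∀ x, S x = Q x - (1/(n:ℂ)) • ∑ i, P i x := by
    intro x
    simp [hSdef, hTdef, ContinuousLinearMap.sub_apply, ContinuousLinearMap.smul_apply,
      ContinuousLinearMap.sum_apply]
  have hSre : ∀ x, ((inner ℂ (S x) x : ℂ)).re = ‖Q x‖^2 - (1/(n:ℝ)) * ∑ i, ‖P i x‖^2 := by
    intro x
    rw [hSapp, inner_sub_left, inner_smul_left, sum_inner]
    have hconj : (starRingEnd ℂ) (1/(n:ℂ)) = (1/(n:ℂ)) := by simp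
    rw [hconj]
    have hsum : ∑ i, (inner ℂ (P i x) x : ℂ) = ((∑ i, ‖P i x‖^2 : ℝ) : ℂ) := by
      rw [Finset.sum_congr rfl fun i _ => proj_inner (hPsa i) (hPid i) x]
      norm_cast
    rw [hsum, proj_inner hQsa hQid]
    have hcast : (1/(n:ℂ)) = ((1/(n:ℝ) : ℝ) : ℂ) := by push_cast; ring
    rw [hcast, ← Complex.ofReal_mul, ← Complex.ofReal_sub, Complex.ofReal_re]
  have hSreM : ∀ x ∈ M, ((inner ℂ (S x) x : ℂ)).re = (1/(n:ℝ)) * ∑ i, ‖x - P i x‖^2 := by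
    intro x hx
    rw [hSre, hQfix hx]
    rw [Finset.sum_congr rfl fun i _ => proj_norm_sub_sq (hPsa i) (hPid i) x,
      Finset.sum_sub_distrib, Finset.sum_const, Finset.card_univ, Fintype.card_fin,
      nsmul_eq_mul]
    field_simp
  have hSpos : ∀ x, 0 ≤ ((inner ℂ (S x) x : ℂ)).re := by
    intro x
    rw [hSre]
    have h1 : ∀ i, ‖P i x‖^2 ≤ ‖Q x‖^2 := by
      intro i
      rw [← hPQ i x]
      have h := proj_norm_le (hPsa i) (hPid i) (Q x)
      nlinarith [norm_nonneg (P i (Q x)), norm_nonneg (Q x)]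
    have h2 : ∑ i, ‖P i x‖^2 ≤ (n:ℝ) * ‖Q x‖^2 := by
      calc ∑ i, ‖P i x‖^2 ≤ ∑ _i : Fin n, ‖Q x‖^2 := Finset.sum_le_sum fun i _ => h1 i
        _ = (n:ℝ) * ‖Q x‖^2 := by
          rw [Finset.sum_const, Finset.card_univ, Fintype.card_fin, nsmul_eq_mul]
    have h3 : (1/(n:ℝ)) * ∑ i, ‖P i x‖^2 ≤ (1/(n:ℝ)) * ((n:ℝ) * ‖Q x‖^2) :=
      mul_le_mul_of_nonneg_left h2 (by positivity)
    have h4 : (1/(n:ℝ)) * ((n:ℝ) * ‖Q x‖^2) = ‖Q x‖^2 := by field_simp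
    linarith
  have hSsa : IsSelfAdjoint S := by
    have hsum : IsSelfAdjoint (∑ i, P i) := by
      rw [IsSelfAdjoint, star_sum]
      exact Finset.sum_congr rfl fun i _ => hPsa i
    have hT : IsSelfAdjoint T := by
      rw [hTdef]
      have hc : IsSelfAdjoint (1/(n:ℂ)) := by
        rw [IsSelfAdjoint]
        simp [Complex.star_def, Complex.conj_natCast]
      exact hc.smul hsum
    exact hQsa.sub hT
  have hQQ : ∀ x, Q (Q x) = Q x := by
    intro x
    have h := DFunLike.congr_fun hQid x
    simpa [ContinuousLinearMap.mul_apply] using h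
  have hSQ : ∀ x, S (Q x) = S x := by
    intro x
    rw [hSapp, hSapp]
    rw [hQQ]
    congr 2
    exact Finset.sum_congr rfl fun i _ => hPQ i x
  have hSmem : ∀ x, S x ∈ M := by
    intro x
    rw [hSapp]
    exact M.sub_mem (hQmem x) (M.smul_mem _ (M.sum_mem fun i _ => hNleM i (hPmem i x)))
  have hub : ∀ x, ((inner ℂ (S x) x : ℂ)).re ≤ ‖S‖ * ‖x‖^2 := by
    intro x
    calc ((inner ℂ (S x) x : ℂ)).re ≤ ‖(inner ℂ (S x) x : ℂ)‖ := by
          exact Complex.re_le_norm _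
      _ ≤ ‖S x‖ * ‖x‖ := norm_inner_le_norm _ _
      _ ≤ (‖S‖ * ‖x‖) * ‖x‖ := mul_le_mul_of_nonneg_right (S.le_opNorm x) (norm_nonneg x)
      _ = ‖S‖ * ‖x‖^2 := by ring
  have hSnormpos : 0 < ‖S‖ := by
    rcases (norm_nonneg S).lt_or_eq with h | h
    · exact h
    · exfalso
      have hS0 : S = 0 := norm_eq_zero.1 h.symm
      apply hne
      intro i
      refine le_antisymm (hNleM i) ?_
      intro x hx
      have h1 := hSreM x hx
      rw [hS0] at h1
      simp only [ContinuousLinearMap.zero_apply, inner_zero_left, Complex.zero_re] at h1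
      have h2 : ∑ j, ‖x - P j x‖^2 = 0 := by
        have h1' : (1/(n:ℝ)) * ∑ j, ‖x - P j x‖^2 = 0 := h1.symm
        have hn' : (1/(n:ℝ)) ≠ 0 := by positivity
        rcases mul_eq_zero.1 h1' with h | h
        · exact absurd h hn'
        · exact h
      have h3 : ‖x - P i x‖^2 = 0 := by
        have := (Finset.sum_eq_zero_iff_of_nonneg
          (fun j _ => by positivity : ∀ j ∈ Finset.univ, (0:ℝ) ≤ ‖x - P j x‖^2)).1 h2 i
          (Finset.mem_univ i)
        exact this
      have h4 : x = P i x := by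
        have h5 : ‖x - P i x‖ = 0 := by nlinarith [norm_nonneg (x - P i x)]
        exact sub_eq_zero.1 (norm_eq_zero.1 h5)
      rw [h4]
      exact hPmem i x
  have hTQ : ‖T - Q‖ = ‖S‖ := by
    rw [show T - Q = -S from by rw [hSdef, neg_sub], norm_neg]
  set v : ℝ := ((n:ℝ) * ‖S‖ - 1)/((n:ℝ) - 1) with hv
  have hupper : ∀ c ∈ {c : ℝ | ∃ x : Fin n → H,
      (∀ i, x i ∈ (N i)ᗮ ⊓ M) ∧ x ≠ 0 ∧
      c = (1 / ((n : ℝ) - 1)) *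
        (∑ i, ∑ j ∈ Finset.univ.erase i, ((inner ℂ (x i) (x j) : ℂ)).re) /
        (∑ i, ‖x i‖ ^ 2)}, c ≤ v := by
    rintro c ⟨x, hmem, hx0, rfl⟩
    have hxiM : ∀ i, x i ∈ M := fun i => (Submodule.mem_inf.1 (hmem i)).2
    have hxiO : ∀ i, x i ∈ (N i)ᗮ := fun i => (Submodule.mem_inf.1 (hmem i)).1
    have hyM : (∑ i, x i) ∈ M := Submodule.sum_mem M fun i _ => hxiM i
    have hBpos : 0 < ∑ i, ‖x i‖ ^ 2 := by
      obtain ⟨i, hi⟩ := Function.ne_iff.1 hx0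
      exact Finset.sum_pos' (fun j _ => by positivity)
        ⟨i, Finset.mem_univ i, pow_pos (norm_pos_iff.2 hi) 2⟩
    have hC : ∑ i, ‖(∑ k, x k) - P i (∑ k, x k)‖ ^ 2
        ≤ (n:ℝ) * (‖S‖ * ‖∑ k, x k‖ ^ 2) := by
      have h1 : ∑ i, ‖(∑ k, x k) - P i (∑ k, x k)‖ ^ 2
          = (n:ℝ) * ((inner ℂ (S (∑ k, x k)) (∑ k, x k) : ℂ)).re := by
        rw [hSreM _ hyM]; field_simp
      rw [h1]
      exact mul_le_mul_of_nonneg_left (hub _) hn0.le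
    have h1 : ‖∑ k, x k‖ ^ 2
        = ∑ i, ((inner ℂ (x i) ((∑ k, x k) - P i (∑ k, x k)) : ℂ)).re := by
      have h2 : ((inner ℂ (∑ k, x k) (∑ k, x k) : ℂ))
          = ∑ i, (inner ℂ (x i) ((∑ k, x k) - P i (∑ k, x k)) : ℂ) := by
        conv_lhs => rw [sum_inner]
        refine Finset.sum_congr rfl fun i _ => ?_
        rw [inner_sub_right, (Submodule.mem_orthogonal' _ _).1 (hxiO i) _ (hPmem i _),
          sub_zero]
      rw [← inner_self_re (∑ k, x k), h2, Complex.re_sum]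
    have h2 : ∀ i, ((inner ℂ (x i) ((∑ k, x k) - P i (∑ k, x k)) : ℂ)).re
        ≤ ‖x i‖ * ‖(∑ k, x k) - P i (∑ k, x k)‖ := fun i => by
      calc ((inner ℂ (x i) ((∑ k, x k) - P i (∑ k, x k)) : ℂ)).re
          ≤ ‖(inner ℂ (x i) ((∑ k, x k) - P i (∑ k, x k)) : ℂ)‖ := by
            exact Complex.re_le_norm _
        _ ≤ ‖x i‖ * ‖(∑ k, x k) - P i (∑ k, x k)‖ := norm_inner_le_norm _ _
    have h3 : (∑ i, ‖x i‖ * ‖(∑ k, x k) - P i (∑ k, x k)‖) ^ 2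
        ≤ (∑ i, ‖x i‖ ^ 2) * ∑ i, ‖(∑ k, x k) - P i (∑ k, x k)‖ ^ 2 :=
      Finset.sum_mul_sq_le_sq_mul_sq Finset.univ _ _
    have h4 : ‖∑ k, x k‖ ^ 2 ≤ ∑ i, ‖x i‖ * ‖(∑ k, x k) - P i (∑ k, x k)‖ := by
      rw [h1]; exact Finset.sum_le_sum fun i _ => h2 i
    have hykey : ‖∑ k, x k‖ ^ 2 ≤ (n:ℝ) * ‖S‖ * (∑ i, ‖x i‖ ^ 2) := by
      rcases eq_or_ne (∑ k, x k) 0 with h0 | h0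
      · have hz : ‖(0:H)‖ ^ 2 = 0 := by simp
        rw [h0, hz]
        positivity
      · have hp : 0 < ‖∑ k, x k‖ ^ 2 := pow_pos (norm_pos_iff.2 h0) 2
        have h5 : (‖∑ k, x k‖ ^ 2) ^ 2
            ≤ (∑ i, ‖x i‖ * ‖(∑ k, x k) - P i (∑ k, x k)‖) ^ 2 :=
          pow_le_pow_left₀ (by positivity) h4 2
        have h6 : (∑ i, ‖x i‖ ^ 2) * (∑ i, ‖(∑ k, x k) - P i (∑ k, x k)‖ ^ 2)
            ≤ (∑ i, ‖x i‖ ^ 2) * ((n:ℝ) * (‖S‖ * ‖∑ k, x k‖ ^ 2)) :=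
          mul_le_mul_of_nonneg_left hC hBpos.le
        nlinarith
    rw [sum_erase_re x]
    have hA : ‖∑ i, x i‖ ^ 2 - (∑ i, ‖x i‖ ^ 2)
        ≤ ((n:ℝ) * ‖S‖ - 1) * (∑ i, ‖x i‖ ^ 2) := by nlinarith [hykey]
    calc (1/((n:ℝ)-1)) * (‖∑ i, x i‖ ^ 2 - ∑ i, ‖x i‖ ^ 2) / (∑ i, ‖x i‖ ^ 2)
        = ((‖∑ i, x i‖ ^ 2 - ∑ i, ‖x i‖ ^ 2)/(∑ i, ‖x i‖ ^ 2)) * (1/((n:ℝ)-1)) := by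
          ring
      _ ≤ ((n:ℝ) * ‖S‖ - 1) * (1/((n:ℝ)-1)) := by
          refine mul_le_mul_of_nonneg_right ?_ (by positivity)
          rw [div_le_iff₀ hBpos]
          exact hA
      _ = v := by rw [hv]; ring
  have hexist : ∀ w : ℝ, w < v → ∃ c ∈ {c : ℝ | ∃ x : Fin n → H,
      (∀ i, x i ∈ (N i)ᗮ ⊓ M) ∧ x ≠ 0 ∧
      c = (1 / ((n : ℝ) - 1)) *
        (∑ i, ∑ j ∈ Finset.univ.erase i, ((inner ℂ (x i) (x j) : ℂ)).re) /
        (∑ i, ‖x i‖ ^ 2)}, w < c := by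
    intro w hw
    have hvw : 0 < v - w := sub_pos.2 hw
    set δ : ℝ := min (‖S‖/2) ((v - w) * ((n:ℝ)-1) / (2*(n:ℝ))) with hδ
    have hδpos : 0 < δ := lt_min (by positivity)
      (div_pos (mul_pos hvw hn1) (by positivity))
    obtain ⟨x₀, hx₀n, hx₀⟩ := pos_norm_exists S hSsa hSpos hδpos
    set x' : H := Q x₀ with hx'
    have hx'M : x' ∈ M := hQmem x₀
    have hx'n : ‖x'‖ ≤ 1 := le_trans (proj_norm_le hQsa hQid x₀) hx₀n
    have hrr : ((inner ℂ (S x') x' : ℂ)).re = ((inner ℂ (S x₀) x₀ : ℂ)).re := by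
      rw [hx', hSQ x₀]
      rw [← sym hQsa (S x₀) x₀, hQfix (hSmem x₀)]
    set r : ℝ := ((inner ℂ (S x') x' : ℂ)).re with hr
    have hrgt : ‖S‖ - δ < r := by rw [hrr]; exact hx₀
    have hδle : δ ≤ ‖S‖/2 := min_le_left _ _
    have hrpos : 0 < r := by linarith
    have hBr : ∑ i, ‖x' - P i x'‖ ^ 2 = (n:ℝ) * r := by
      rw [hr, hSreM x' hx'M]; field_simp
    refine ⟨_, ⟨fun i => x' - P i x', fun i => ?_, ?_, rfl⟩, ?_⟩
    · exact Submodule.mem_inf.2 ⟨proj_sub_mem (hPsa i) (hPid i) (hPrg i) x',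
        M.sub_mem hx'M (hNleM i (hPmem i x'))⟩
    · intro h0
      have hB0 : ∑ i, ‖x' - P i x'‖ ^ 2 = 0 := by
        refine Finset.sum_eq_zero fun i _ => ?_
        have hz := congrFun h0 i
        simp only [Pi.zero_apply] at hz
        rw [hz]
        simp
      rw [hB0] at hBr
      nlinarith
    · have hyeq : ∑ i, (x' - P i x') = (n:ℂ) • S x' := by
        rw [Finset.sum_sub_distrib, Finset.sum_const, Finset.card_univ, Fintype.card_fin]
        rw [hSapp, hQfix hx'M, smul_sub, smul_smul, mul_one_div_cancel hnC, one_smul]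
        congr 1
        exact (Nat.cast_smul_eq_nsmul ℂ n x').symm
      have hnum : ∑ i, ∑ j ∈ Finset.univ.erase i,
          ((inner ℂ (x' - P i x') (x' - P j x') : ℂ)).re
          = (n:ℝ)^2 * ‖S x'‖ ^ 2 - (n:ℝ) * r := by
        have he := sum_erase_re (fun i => x' - P i x')
        rw [he, hBr, hyeq, norm_smul]
        simp only [Complex.norm_natCast]
        ring
      have hxnorm : r ≤ ‖S x'‖ := by
        have ha : r ≤ ‖S x'‖ * ‖x'‖ := by
          rw [hr]
          calc ((inner ℂ (S x') x' : ℂ)).re ≤ ‖(inner ℂ (S x') x' : ℂ)‖ := by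
                exact Complex.re_le_norm _
            _ ≤ ‖S x'‖ * ‖x'‖ := norm_inner_le_norm _ _
        nlinarith [norm_nonneg (S x')]
      have hr2 : r^2 ≤ ‖S x'‖ ^ 2 := by nlinarith
      have hnrpos : 0 < (n:ℝ) * r := by positivity
      have key1 : (n:ℝ) * r - 1 ≤ ((n:ℝ)^2 * ‖S x'‖ ^ 2 - (n:ℝ)*r) / ((n:ℝ)*r) := by
        rw [le_div_iff₀ hnrpos]
        nlinarith
      have key2 : w < ((n:ℝ)*r - 1)/((n:ℝ)-1) := by
        rw [lt_div_iff₀ hn1]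
        have hδle2 : δ ≤ (v - w) * ((n:ℝ)-1) / (2*(n:ℝ)) := min_le_right _ _
        have hveq : v * ((n:ℝ)-1) = (n:ℝ)*‖S‖ - 1 := by rw [hv]; field_simp
        have hδn : (n:ℝ) * δ ≤ (v - w) * ((n:ℝ)-1) / 2 := by
          calc (n:ℝ) * δ ≤ (n:ℝ) * ((v - w) * ((n:ℝ)-1) / (2*(n:ℝ))) :=
                mul_le_mul_of_nonneg_left hδle2 hn0.le
            _ = (v - w) * ((n:ℝ)-1) / 2 := by field_simp
        nlinarith [mul_lt_mul_of_pos_left hrgt hn0, mul_pos hvw hn1]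
      calc w < ((n:ℝ)*r - 1)/((n:ℝ)-1) := key2
        _ ≤ (1 / ((n : ℝ) - 1)) *
            (∑ i, ∑ j ∈ Finset.univ.erase i,
              ((inner ℂ (x' - P i x') (x' - P j x') : ℂ)).re) /
            (∑ i, ‖x' - P i x'‖ ^ 2) := by
          rw [hnum, hBr]
          have he1 : (1/((n:ℝ)-1)) * ((n:ℝ)^2 * ‖S x'‖ ^ 2 - (n:ℝ)*r) / ((n:ℝ)*r)
              = (((n:ℝ)^2 * ‖S x'‖ ^ 2 - (n:ℝ)*r) / ((n:ℝ)*r)) * (1/((n:ℝ)-1)) := by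
            ring
          have he2 : ((n:ℝ)*r - 1)/((n:ℝ)-1) = ((n:ℝ)*r - 1) * (1/((n:ℝ)-1)) := by
            ring
          rw [he1, he2]
          exact mul_le_mul_of_nonneg_right key1 (by positivity)
  have hnonempty : {c : ℝ | ∃ x : Fin n → H,
      (∀ i, x i ∈ (N i)ᗮ ⊓ M) ∧ x ≠ 0 ∧
      c = (1 / ((n : ℝ) - 1)) *
        (∑ i, ∑ j ∈ Finset.univ.erase i, ((inner ℂ (x i) (x j) : ℂ)).re) /
        (∑ i, ‖x i‖ ^ 2)}.Nonempty := by
    obtain ⟨c, hc, -⟩ := hexist (v - 1) (by linarith)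
    exact ⟨c, hc⟩
  have hsup := csSup_eq_of_forall_le_of_forall_lt_exists_gt hnonempty hupper hexist
  rw [hTQ, show ((n:ℝ)/((n:ℝ)-1)) * ‖S‖ - 1/((n:ℝ)-1) = v from by rw [hv]; field_simp]
  unfold cosine
  rw [← hMdef]
  exact hsup
end

section
/- Let n ≥ 2 and let N_1, …, N_n be closed subspaces of a complex Hilbert space H. If for every k with 2 ≤ k ≤ n the Friedrichs cosine satisfies c(M_k, N_k) < 1, where M_k denotes the closure of N_1 + ⋯ + N_{k−1}, then c(N_1, …, N_n) < 1. -/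
set_option linter.unusedSectionVars false
set_option linter.unnecessarySimpa false
set_option linter.unreachableTactic false
set_option linter.unusedTactic false
set_option linter.unnecessarySeqFocus false
set_option maxHeartbeats 1000000

/-- The Friedrichs cosine `c(M, N)` of two subspaces of a complex Hilbert space: the
supremum of `|⟪x, y⟫| / (‖x‖‖y‖)` over nonzero `x ∈ M ⊓ (M ⊓ N)ᗮ` and nonzero
`y ∈ N ⊓ (M ⊓ N)ᗮ`, with `sSup ∅ = 0` by convention. -/
noncomputable def friedrichsCosine {H : Type*} [NormedAddCommGroup H] [InnerProductSpace ℂ H]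
    (M N : Submodule ℂ H) : ℝ :=
  sSup {c : ℝ | ∃ x ∈ M ⊓ (M ⊓ N)ᗮ, ∃ y ∈ N ⊓ (M ⊓ N)ᗮ, x ≠ 0 ∧ y ≠ 0 ∧
    c = ‖(inner ℂ x y : ℂ)‖ / (‖x‖ * ‖y‖)}

namespace Stmt6Aux

variable {H : Type*} [NormedAddCommGroup H] [InnerProductSpace ℂ H] [CompleteSpace H]

local notation "⟪" x ", " y "⟫" => @inner ℂ _ _ x y

lemma fc_nonneg (M N : Submodule ℂ H) : 0 ≤ friedrichsCosine M N :=
  Real.sSup_nonneg fun c hc => by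
    obtain ⟨x, _, y, _, _, _, rfl⟩ := hc
    positivity


lemma inner_le_fc (M N : Submodule ℂ H) {x y : H}
    (hx : x ∈ M ⊓ (M ⊓ N)ᗮ) (hy : y ∈ N ⊓ (M ⊓ N)ᗮ) :
    ‖⟪x, y⟫‖ ≤ friedrichsCosine M N * (‖x‖ * ‖y‖) := by
  rcases eq_or_ne x 0 with rfl | hx0
  · simpa using mul_nonneg (fc_nonneg M N) (by positivity : (0:ℝ) ≤ ‖(0:H)‖ * ‖y‖)
  rcases eq_or_ne y 0 with rfl | hy0
  · simpa using mul_nonneg (fc_nonneg M N) (by positivity : (0:ℝ) ≤ ‖x‖ * ‖(0:H)‖)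
  have hxn : (0:ℝ) < ‖x‖ := norm_pos_iff.2 hx0
  have hyn : (0:ℝ) < ‖y‖ := norm_pos_iff.2 hy0
  have hbdd : BddAbove {c : ℝ | ∃ x ∈ M ⊓ (M ⊓ N)ᗮ, ∃ y ∈ N ⊓ (M ⊓ N)ᗮ, x ≠ 0 ∧ y ≠ 0 ∧
      c = ‖(inner ℂ x y : ℂ)‖ / (‖x‖ * ‖y‖)} := by
    refine ⟨1, ?_⟩
    rintro c ⟨a, _, b, _, ha, hb, rfl⟩
    exact div_le_one_of_le₀ (norm_inner_le_norm a b) (by positivity)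
  have hmem : ‖⟪x, y⟫‖ / (‖x‖ * ‖y‖) ∈ {c : ℝ | ∃ x ∈ M ⊓ (M ⊓ N)ᗮ, ∃ y ∈ N ⊓ (M ⊓ N)ᗮ,
      x ≠ 0 ∧ y ≠ 0 ∧ c = ‖(inner ℂ x y : ℂ)‖ / (‖x‖ * ‖y‖)} :=
    ⟨x, hx, y, hy, hx0, hy0, rfl⟩
  have hle : ‖⟪x, y⟫‖ / (‖x‖ * ‖y‖) ≤ friedrichsCosine M N := le_csSup hbdd hmem
  rw [div_le_iff₀ (by positivity)] at hle
  linarith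


/-- extension to all of `m ∈ M`. -/
lemma inner_le_fc' (M N : Submodule ℂ H) (hM : IsClosed (M : Set H)) (hN : IsClosed (N : Set H))
    {m y : H} (hm : m ∈ M) (hy : y ∈ N ⊓ (M ⊓ N)ᗮ) :
    ‖⟪m, y⟫‖ ≤ friedrichsCosine M N * (‖m‖ * ‖y‖) := by
  haveI : CompleteSpace (M ⊓ N : Submodule ℂ H) := by
    have : IsClosed ((M ⊓ N : Submodule ℂ H) : Set H) := by
      rw [Submodule.coe_inf]; exact hM.inter hN
    exact this.completeSpace_coe
  set K := M ⊓ N with hK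
  set a : H := (Submodule.orthogonalProjectionOnto K m : H) with ha
  have haK : a ∈ K := (Submodule.orthogonalProjectionOnto K m).2
  have hsub : m - a ∈ Kᗮ := Submodule.sub_starProjection_mem_orthogonal m
  have hmem : m - a ∈ M ⊓ Kᗮ := ⟨M.sub_mem hm haK.1, hsub⟩
  have h1 : ⟪a, y⟫ = 0 := hy.2 a haK
  have h2 : ⟪m, y⟫ = ⟪m - a, y⟫ := by rw [inner_sub_left, h1, sub_zero]
  have hnorm : ‖m - a‖ ≤ ‖m‖ := by
    have hp : (RCLike.re ⟪a, m - a⟫ : ℝ) = 0 := by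
      rw [Submodule.inner_right_of_mem_orthogonal haK hsub]; simp
    have := @norm_add_sq ℂ _ _ _ _ a (m - a)
    simp only [add_sub_cancel] at this
    nlinarith [norm_nonneg (m - a), norm_nonneg a, norm_nonneg m, sq_nonneg ‖a‖]
  rw [h2]
  calc ‖⟪m - a, y⟫‖ ≤ friedrichsCosine M N * (‖m - a‖ * ‖y‖) := inner_le_fc M N hmem hy
    _ ≤ friedrichsCosine M N * (‖m‖ * ‖y‖) := by
        have := fc_nonneg M N; gcongr


/-- coercivity of the pair. -/
lemma coercive (M N : Submodule ℂ H) (hM : IsClosed (M : Set H)) (hN : IsClosed (N : Set H))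
    {m y : H} (hm : m ∈ M) (hy : y ∈ N ⊓ (M ⊓ N)ᗮ) :
    (1 - friedrichsCosine M N) * (‖m‖ ^ 2 + ‖y‖ ^ 2) ≤ ‖m + y‖ ^ 2 := by
  have h1 := inner_le_fc' M N hM hN hm hy
  have h2 := @norm_add_sq ℂ _ _ _ _ m y
  have h3 : |RCLike.re ⟪m, y⟫| ≤ ‖⟪m, y⟫‖ := RCLike.abs_re_le_norm _
  have h4 := fc_nonneg M N
  nlinarith [sq_nonneg (‖m‖ - ‖y‖), abs_le.1 h3, norm_nonneg m, norm_nonneg y]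


/-- Bounded decomposition of elements of the closure of `M ⊔ N`. -/
lemma decomp (M N : Submodule ℂ H) (hM : IsClosed (M : Set H)) (hN : IsClosed (N : Set H))
    (hc : friedrichsCosine M N < 1) {u : H} (hu : u ∈ (M ⊔ N).topologicalClosure) :
    ∃ m ∈ M, ∃ y ∈ N ⊓ (M ⊓ N)ᗮ, u = m + y ∧
      (1 - friedrichsCosine M N) * (‖m‖ ^ 2 + ‖y‖ ^ 2) ≤ ‖u‖ ^ 2 := by
  set c := friedrichsCosine M N with hcdef
  have hc0 : 0 ≤ c := fc_nonneg M N
  have h1c : 0 < 1 - c := by linarith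
  haveI : CompleteSpace (M ⊓ N : Submodule ℂ H) := by
    have : IsClosed ((M ⊓ N : Submodule ℂ H) : Set H) := by
      rw [Submodule.coe_inf]; exact hM.inter hN
    exact this.completeSpace_coe
  set N' : Submodule ℂ H := N ⊓ (M ⊓ N)ᗮ with hN'def
  have hN'c : IsClosed (N' : Set H) := by
    rw [hN'def, Submodule.coe_inf]
    exact hN.inter (Submodule.isClosed_orthogonal _)
  -- M ⊔ N = M ⊔ N'
  have hsup : M ⊔ N = M ⊔ N' := by
    refine le_antisymm (sup_le le_sup_left ?_) (sup_le le_sup_left (le_trans inf_le_left le_sup_right))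
    have hKN : (M ⊓ N : Submodule ℂ H) ≤ N := inf_le_right
    have := Submodule.sup_orthogonal_inf_of_hasOrthogonalProjection hKN
    calc N = (M ⊓ N) ⊔ ((M ⊓ N)ᗮ ⊓ N) := this.symm
      _ ≤ M ⊔ N' := sup_le (le_trans inf_le_left le_sup_left)
          (by rw [inf_comm] at *; exact le_sup_right.trans_eq' (by rw [hN'def, inf_comm]))
  -- sequence in M ⊔ N' converging to u
  have hu' : u ∈ closure ((M ⊔ N' : Submodule ℂ H) : Set H) := by
    rw [← hsup]
    exact hu
  obtain ⟨f, hf, hflim⟩ := mem_closure_iff_seq_limit.1 hu'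
  choose ms hms ys hys hsum using fun j => Submodule.mem_sup.1 (hf j)
  -- coercivity for differences
  have key : ∀ j l, ‖ms j - ms l‖ ^ 2 + ‖ys j - ys l‖ ^ 2 ≤ (1 - c)⁻¹ * ‖f j - f l‖ ^ 2 := by
    intro j l
    have h := coercive M N hM hN (M.sub_mem (hms j) (hms l)) (N'.sub_mem (hys j) (hys l))
    have he : ms j - ms l + (ys j - ys l) = f j - f l := by
      rw [← hsum j, ← hsum l]; abel
    rw [he] at h
    rw [le_inv_mul_iff₀ h1c]
    exact h
  have hfc : CauchySeq f := hflim.cauchySeq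
  have hcauchy : CauchySeq ms := by
    rw [Metric.cauchySeq_iff'] at hfc ⊢
    intro ε hε
    obtain ⟨J, hJ⟩ := hfc (Real.sqrt (1 - c) * ε) (by positivity)
    refine ⟨J, fun j hj => ?_⟩
    have h1 := key j J
    have h2 := hJ j hj
    rw [dist_eq_norm] at h2 ⊢
    have h3 : ‖f j - f J‖ ^ 2 < (Real.sqrt (1 - c) * ε) ^ 2 := by
      have := norm_nonneg (f j - f J); nlinarith
    have h4 : (Real.sqrt (1 - c) * ε) ^ 2 = (1 - c) * ε ^ 2 := by
      rw [mul_pow, Real.sq_sqrt h1c.le]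
    have h5 : ‖ms j - ms J‖ ^ 2 < ε ^ 2 := by
      have h6 : (1 - c)⁻¹ * ‖f j - f J‖ ^ 2 < ε ^ 2 := by
        rw [inv_mul_lt_iff₀ h1c]
        nlinarith
      nlinarith [sq_nonneg ‖ys j - ys J‖]
    exact lt_of_pow_lt_pow_left₀ 2 hε.le h5
  obtain ⟨m, hmlim⟩ := cauchySeq_tendsto_of_complete hcauchy
  have hmM : m ∈ M := hM.mem_of_tendsto hmlim (Filter.Eventually.of_forall hms)
  have hylim : Filter.Tendsto (fun j => f j - ms j) Filter.atTop (nhds (u - m)) :=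
    hflim.sub hmlim
  have hyeq : ∀ j, f j - ms j = ys j := fun j => by rw [← hsum j]; abel
  have hylim' : Filter.Tendsto ys Filter.atTop (nhds (u - m)) := by
    rw [show ys = fun j => f j - ms j from funext fun j => (hyeq j).symm]
    exact hylim
  have hyN' : u - m ∈ N' := hN'c.mem_of_tendsto hylim' (Filter.Eventually.of_forall hys)
  refine ⟨m, hmM, u - m, hyN', by abel, ?_⟩
  -- pass bound to the limit
  have hj : ∀ j, (1 - c) * (‖ms j‖ ^ 2 + ‖ys j‖ ^ 2) ≤ ‖f j‖ ^ 2 := fun j => by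
    have h := coercive M N hM hN (hms j) (hys j)
    rwa [hsum j] at h
  have hlhs : Filter.Tendsto (fun j => (1 - c) * (‖ms j‖ ^ 2 + ‖ys j‖ ^ 2)) Filter.atTop
      (nhds ((1 - c) * (‖m‖ ^ 2 + ‖u - m‖ ^ 2))) :=
    (((hmlim.norm.pow 2).add (hylim'.norm.pow 2)).const_mul _)
  have hrhs : Filter.Tendsto (fun j => ‖f j‖ ^ 2) Filter.atTop (nhds (‖u‖ ^ 2)) :=
    hflim.norm.pow 2
  exact le_of_tendsto_of_tendsto' hlhs hrhs hj


/-- The two-subspace coercivity estimate -/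
lemma two_subspace (M N : Submodule ℂ H) (hM : IsClosed (M : Set H)) (hN : IsClosed (N : Set H))
    (hc : friedrichsCosine M N < 1) :
    ∀ u ∈ (M ⊔ N).topologicalClosure,
      haveI : CompleteSpace M := hM.completeSpace_coe
      haveI : CompleteSpace N := hN.completeSpace_coe
      (1 - friedrichsCosine M N) * ‖u‖ ^ 2 ≤
        ‖(Submodule.orthogonalProjectionOnto M u : H)‖ ^ 2 + ‖(Submodule.orthogonalProjectionOnto N u : H)‖ ^ 2 := by
  haveI : CompleteSpace M := hM.completeSpace_coe
  haveI : CompleteSpace N := hN.completeSpace_coe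
  intro u hu
  set c := friedrichsCosine M N with hcdef
  have hc0 : 0 ≤ c := fc_nonneg M N
  have h1c : 0 < 1 - c := by linarith
  obtain ⟨m, hm, y, hy, hue, hbound⟩ := decomp M N hM hN hc hu
  set a : ℝ := ‖(Submodule.orthogonalProjectionOnto M u : H)‖ with hadef
  set b : ℝ := ‖(Submodule.orthogonalProjectionOnto N u : H)‖ with hbdef
  -- ⟪u, m⟫ = ⟪P_M u, m⟫
  have hum : ‖⟪u, m⟫‖ ≤ a * ‖m‖ := by
    have h0 : ⟪u - (Submodule.orthogonalProjectionOnto M u : H), m⟫ = 0 :=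
      Submodule.starProjection_inner_eq_zero u m hm
    have : ⟪u, m⟫ = ⟪(Submodule.orthogonalProjectionOnto M u : H), m⟫ := by
      have := inner_sub_left (𝕜 := ℂ) u (Submodule.orthogonalProjectionOnto M u : H) m
      rw [h0] at this
      linear_combination -this
    rw [this]
    exact (norm_inner_le_norm _ _)
  have hy' : y = u - m := by rw [hue]; abel
  have hyN : u - m ∈ N := by rw [← hy']; exact hy.1
  have hun : ‖⟪u, u - m⟫‖ ≤ b * ‖u - m‖ := by
    have h0 : ⟪u - (Submodule.orthogonalProjectionOnto N u : H), u - m⟫ = 0 :=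
      Submodule.starProjection_inner_eq_zero u (u - m) hyN
    have : ⟪u, u - m⟫ = ⟪(Submodule.orthogonalProjectionOnto N u : H), u - m⟫ := by
      have := inner_sub_left (𝕜 := ℂ) u (Submodule.orthogonalProjectionOnto N u : H) (u - m)
      rw [h0] at this
      linear_combination -this
    rw [this]
    exact (norm_inner_le_norm _ _)
  -- ‖u‖² ≤ a‖m‖ + b‖y‖
  have hsplit : ‖u‖ ^ 2 ≤ a * ‖m‖ + b * ‖u - m‖ := by
    have h1 : (‖u‖ : ℝ) ^ 2 = RCLike.re ⟪u, u⟫ := (inner_self_eq_norm_sq (𝕜 := ℂ) u).symm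
    have h2 : ⟪u, u⟫ = ⟪u, m⟫ + ⟪u, u - m⟫ := by
      rw [← inner_add_right]; congr 1; abel
    have h3 : RCLike.re ⟪u, u⟫ ≤ ‖⟪u, m⟫‖ + ‖⟪u, u - m⟫‖ := by
      rw [h2, map_add]
      have r1 : RCLike.re ⟪u, m⟫ ≤ ‖⟪u, m⟫‖ := RCLike.re_le_norm _
      have r2 : RCLike.re ⟪u, u - m⟫ ≤ ‖⟪u, u - m⟫‖ := RCLike.re_le_norm _
      linarith
    linarith [h1, h3, hum, hun]
  rw [← hy'] at hsplit hun
  -- Cauchy-Schwarz in ℝ²  and conclude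
  have hCS : (a * ‖m‖ + b * ‖y‖) ^ 2 ≤ (a ^ 2 + b ^ 2) * (‖m‖ ^ 2 + ‖y‖ ^ 2) := by
    nlinarith [sq_nonneg (a * ‖y‖ - b * ‖m‖)]
  rcases eq_or_lt_of_le (norm_nonneg u) with h0 | h0
  · rw [← h0]; nlinarith [sq_nonneg a, sq_nonneg b]
  have h4 : ‖u‖ ^ 4 ≤ (a ^ 2 + b ^ 2) * (‖m‖ ^ 2 + ‖y‖ ^ 2) := by
    calc ‖u‖ ^ 4 = (‖u‖ ^ 2) ^ 2 := by ring
      _ ≤ (a * ‖m‖ + b * ‖y‖) ^ 2 := by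
          have hnn : (0:ℝ) ≤ a * ‖m‖ + b * ‖y‖ := le_trans (by positivity) hsplit
          nlinarith [sq_nonneg ‖u‖]
      _ ≤ _ := hCS
  have h5 : (‖m‖ ^ 2 + ‖y‖ ^ 2) ≤ (1 - c)⁻¹ * ‖u‖ ^ 2 := by
    rw [le_inv_mul_iff₀ h1c]; exact hbound
  have h6 : ‖u‖ ^ 4 ≤ (a ^ 2 + b ^ 2) * ((1 - c)⁻¹ * ‖u‖ ^ 2) := by
    calc ‖u‖ ^ 4 ≤ (a ^ 2 + b ^ 2) * (‖m‖ ^ 2 + ‖y‖ ^ 2) := h4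
      _ ≤ _ := by have : (0:ℝ) ≤ a ^ 2 + b ^ 2 := by positivity
                  exact mul_le_mul_of_nonneg_left h5 this
  have hu2 : (0:ℝ) < ‖u‖ ^ 2 := by positivity
  rw [← sub_nonneg]
  have h7 : (1 - c) * ‖u‖ ^ 4 ≤ (a ^ 2 + b ^ 2) * ‖u‖ ^ 2 := by
    have := mul_le_mul_of_nonneg_left h6 h1c.le
    calc (1 - c) * ‖u‖ ^ 4 ≤ (1 - c) * ((a ^ 2 + b ^ 2) * ((1 - c)⁻¹ * ‖u‖ ^ 2)) := this
      _ = (a ^ 2 + b ^ 2) * ‖u‖ ^ 2 := by field_simp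
  nlinarith [h7, hu2]


lemma sum_submodule_eq_sup {ι : Type*} (s : Finset ι) (p : ι → Submodule ℂ H) :
    ∑ i ∈ s, p i = s.sup p := by
  classical
  induction s using Finset.cons_induction with
  | empty => simp
  | cons a s ha ih => rw [Finset.sum_cons, Finset.sup_cons, Submodule.add_eq_sup, ih]

lemma closure_sup_closure_left (A B : Submodule ℂ H) :
    (A.topologicalClosure ⊔ B).topologicalClosure = (A ⊔ B).topologicalClosure := by
  refine le_antisymm ?_
    (Submodule.topologicalClosure_mono (sup_le_sup_right A.le_topologicalClosure B))
  refine Submodule.topologicalClosure_minimal _ ?_ (A ⊔ B).isClosed_topologicalClosure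
  exact sup_le (Submodule.topologicalClosure_mono le_sup_left)
    (le_trans le_sup_right (A ⊔ B).le_topologicalClosure)

/-- Key induction: uniform coercivity of the family of projections. -/
lemma lemC {n : ℕ} (hn : 2 ≤ n) (N : Fin n → Submodule ℂ H)
    (hNc : ∀ i, IsClosed ((N i : Set H)))
    (h : ∀ k : Fin n, 0 < (k : ℕ) →
      friedrichsCosine
        ((∑ i ∈ Finset.univ.filter (fun i => i < k), N i).topologicalClosure) (N k) < 1) :
    haveI : ∀ i, CompleteSpace (N i) := fun i => (hNc i).completeSpace_coe
    ∃ δ > 0, δ ≤ 1 ∧ ∀ u ∈ (∑ j, N j).topologicalClosure,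
      δ * ‖u‖ ^ 2 ≤ ∑ i, ‖(Submodule.orthogonalProjectionOnto (N i) u : H)‖ ^ 2 := by
  haveI : ∀ i, CompleteSpace (N i) := fun i => (hNc i).completeSpace_coe
  have main : ∀ k : ℕ, 1 ≤ k → k ≤ n → ∃ δ > 0, δ ≤ 1 ∧
      ∀ u ∈ (∑ i ∈ Finset.univ.filter (fun i : Fin n => (i : ℕ) < k), N i).topologicalClosure,
        δ * ‖u‖ ^ 2 ≤ ∑ i ∈ Finset.univ.filter (fun i : Fin n => (i : ℕ) < k),
          ‖(Submodule.orthogonalProjectionOnto (N i) u : H)‖ ^ 2 := by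
    intro k hk1
    induction k, hk1 using Nat.le_induction with
    | base =>
      intro _
      have hz : (0 : ℕ) < n := by omega
      set z : Fin n := ⟨0, hz⟩ with hzdef
      have hfil : Finset.univ.filter (fun i : Fin n => (i : ℕ) < 1) = {z} := by
        ext i
        simp [Finset.mem_filter, Nat.lt_one_iff, Fin.ext_iff, hzdef]
      rw [hfil]
      refine ⟨1, one_pos, le_refl 1, ?_⟩
      intro u hu
      rw [Finset.sum_singleton] at hu ⊢
      have hle : (N z).topologicalClosure ≤ N z :=
        Submodule.topologicalClosure_minimal _ le_rfl (hNc z)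
      have huN : u ∈ N z := hle hu
      rw [show ((Submodule.orthogonalProjectionOnto (N z) u : H)) = u from Submodule.starProjection_eq_self_iff.2 huN]
      simp
    | succ k hk1 ih =>
      intro hk2
      obtain ⟨δ, hδ, hδ1, hbound⟩ := ih (by omega)
      set kf : Fin n := ⟨k, by omega⟩ with hkf
      set M : Submodule ℂ H :=
        (∑ i ∈ Finset.univ.filter (fun i : Fin n => (i : ℕ) < k), N i).topologicalClosure
        with hMdef
      have hMc : IsClosed (M : Set H) := Submodule.isClosed_topologicalClosure _
      haveI : CompleteSpace M := hMc.completeSpace_coe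
      have hfilkf : Finset.univ.filter (fun i : Fin n => i < kf)
          = Finset.univ.filter (fun i : Fin n => (i : ℕ) < k) := by
        apply Finset.filter_congr
        intro i _
        simp [Fin.lt_def, hkf]
      have hcos : friedrichsCosine M (N kf) < 1 := by
        have hkv : (kf : ℕ) = k := rfl
        have := h kf (by omega)
        rwa [hfilkf] at this
      set c := friedrichsCosine M (N kf) with hcdef
      have hc0 : 0 ≤ c := fc_nonneg _ _
      have h1c : 0 < 1 - c := by linarith
      -- the next filter is insert kf
      have hfil : Finset.univ.filter (fun i : Fin n => (i : ℕ) < k + 1)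
          = insert kf (Finset.univ.filter (fun i : Fin n => (i : ℕ) < k)) := by
        ext i
        simp only [Finset.mem_filter, Finset.mem_insert, Finset.mem_univ, true_and]
        constructor
        · intro hi
          rcases Nat.lt_succ_iff_lt_or_eq.1 hi with h' | h'
          · exact Or.inr h'
          · exact Or.inl (Fin.ext h')
        · rintro (rfl | hi)
          · exact Nat.lt_succ_self k
          · omega
      have hknot : kf ∉ Finset.univ.filter (fun i : Fin n => (i : ℕ) < k) := by
        simp [hkf]
      -- closure identification
      have hclos : (∑ i ∈ Finset.univ.filter (fun i : Fin n => (i : ℕ) < k + 1), N i).topologicalClosure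
          = (M ⊔ N kf).topologicalClosure := by
        rw [hfil, Finset.sum_insert hknot, Submodule.add_eq_sup, sup_comm, hMdef,
          closure_sup_closure_left, sup_comm]
      refine ⟨min δ 1 * (1 - c), by positivity, ?_, ?_⟩
      · nlinarith [min_le_right δ 1, lt_min hδ one_pos, hc0, h1c]
      intro u hu
      rw [hclos] at hu
      have htwo := two_subspace M (N kf) hMc (hNc kf) hcos u hu
      -- P_i u = P_i (P_M u) for i < k
      have hNle : ∀ i : Fin n, (i : ℕ) < k → N i ≤ M := by
        intro i hi
        refine le_trans ?_ (Submodule.le_topologicalClosure _)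
        rw [sum_submodule_eq_sup]
        exact Finset.le_sup (by simp [hi])
      set v : H := (Submodule.orthogonalProjectionOnto M u : H) with hvdef
      have hvM : v ∈ M := (Submodule.orthogonalProjectionOnto M u).2
      have hPi : ∀ i : Fin n, (i : ℕ) < k →
          Submodule.orthogonalProjectionOnto (N i) u = Submodule.orthogonalProjectionOnto (N i) v := by
        intro i hi
        have horth : u - v ∈ Mᗮ := Submodule.sub_starProjection_mem_orthogonal u
        have horth' : u - v ∈ (N i)ᗮ := Submodule.orthogonal_le (hNle i hi) horth
        have hz : Submodule.orthogonalProjectionOnto (N i) (u - v) = 0 :=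
          Submodule.orthogonalProjectionOnto_apply_of_mem_orthogonal (K := N i) horth'
        have hsub : Submodule.orthogonalProjectionOnto (N i) u - Submodule.orthogonalProjectionOnto (N i) v = 0 := by
          rw [← map_sub, hz]
        exact sub_eq_zero.1 hsub
      have hsum1 : ∑ i ∈ Finset.univ.filter (fun i : Fin n => (i : ℕ) < k),
          ‖(Submodule.orthogonalProjectionOnto (N i) u : H)‖ ^ 2
          = ∑ i ∈ Finset.univ.filter (fun i : Fin n => (i : ℕ) < k),
          ‖(Submodule.orthogonalProjectionOnto (N i) v : H)‖ ^ 2 := by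
        apply Finset.sum_congr rfl
        intro i hi
        rw [hPi i (by simpa using (Finset.mem_filter.1 hi).2)]
      have hIH : δ * ‖v‖ ^ 2 ≤ ∑ i ∈ Finset.univ.filter (fun i : Fin n => (i : ℕ) < k),
          ‖(Submodule.orthogonalProjectionOnto (N i) v : H)‖ ^ 2 := hbound v hvM
      rw [hfil, Finset.sum_insert hknot]
      rw [hsum1]
      have hmin : min δ 1 ≤ δ := min_le_left _ _
      have hmin1 : min δ 1 ≤ 1 := min_le_right _ _
      have hminpos : 0 < min δ 1 := lt_min hδ one_pos
      set a : ℝ := ‖(Submodule.orthogonalProjectionOnto M u : H)‖ with hadef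
      set b : ℝ := ‖(Submodule.orthogonalProjectionOnto (N kf) u : H)‖ with hbdef
      have hva : ‖v‖ = a := rfl
      calc min δ 1 * (1 - c) * ‖u‖ ^ 2 ≤ min δ 1 * (a ^ 2 + b ^ 2) := by
            rw [mul_assoc]
            apply mul_le_mul_of_nonneg_left htwo hminpos.le
        _ = min δ 1 * a ^ 2 + min δ 1 * b ^ 2 := by ring
        _ ≤ δ * ‖v‖ ^ 2 + b ^ 2 := by
            rw [hva]
            have h1 : min δ 1 * a ^ 2 ≤ δ * a ^ 2 :=
              mul_le_mul_of_nonneg_right hmin (sq_nonneg a)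
            have h2 : min δ 1 * b ^ 2 ≤ 1 * b ^ 2 :=
              mul_le_mul_of_nonneg_right hmin1 (sq_nonneg b)
            linarith
        _ ≤ _ := by
            have := hIH
            linarith
  obtain ⟨δ, hδ, hδ1, hbound⟩ := main n (by omega) le_rfl
  refine ⟨δ, hδ, hδ1, ?_⟩
  have hfil : Finset.univ.filter (fun i : Fin n => (i : ℕ) < n) = Finset.univ :=
    Finset.filter_true_of_mem fun i _ => i.isLt
  rw [hfil] at hbound
  exact hbound


theorem stmt_6' {n : ℕ} (hn : 2 ≤ n) (N : Fin n → Submodule ℂ H)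
    (hNc : ∀ i, IsClosed ((N i : Set H)))
    (h : ∀ k : Fin n, 0 < (k : ℕ) →
      friedrichsCosine
        ((∑ i ∈ Finset.univ.filter (fun i => i < k), N i).topologicalClosure) (N k) < 1) :
    cosine N < 1 := by
  haveI : ∀ i, CompleteSpace (N i) := fun i => (hNc i).completeSpace_coe
  obtain ⟨δ, hδ, hδ1, hbound⟩ := lemC hn N hNc h
  have hnR : (2 : ℝ) ≤ (n : ℝ) := by exact_mod_cast hn
  have hn1 : (0 : ℝ) < (n : ℝ) - 1 := by linarith
  have hnd : (0 : ℝ) < (n : ℝ) + δ := by linarith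
  set ε : ℝ := (n : ℝ) * δ / (((n : ℝ) - 1) * ((n : ℝ) + δ)) with hεdef
  have hε : 0 < ε := by positivity
  have hε1 : ε ≤ 1 := by
    rw [hεdef, div_le_one (by positivity)]
    nlinarith
  have hle : cosine N ≤ 1 - ε := by
    apply Real.sSup_le _ (by linarith)
    rintro r ⟨x, hx, hx0, rfl⟩
    set Q : ℝ := ∑ i, ‖x i‖ ^ 2 with hQdef
    set s : H := ∑ i, x i with hsdef
    set T : ℝ := ‖s‖ ^ 2 with hTdef
    have hT : 0 ≤ T := sq_nonneg _
    have hQpos : 0 < Q := by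
      obtain ⟨i, hi⟩ := Function.ne_iff.1 hx0
      have hxi : (0:ℝ) < ‖x i‖ := norm_pos_iff.2 (by simpa using hi)
      apply Finset.sum_pos' (fun j _ => sq_nonneg _) ⟨i, Finset.mem_univ i, by positivity⟩
    -- the numerator identity
    have hnum : (∑ i, ∑ j ∈ Finset.univ.erase i, (⟪x i, x j⟫).re) = T - Q := by
      have h1 : T = ∑ i, ∑ j, (⟪x i, x j⟫).re := by
        rw [hTdef, ← inner_self_eq_norm_sq (𝕜 := ℂ) s]
        rw [show (⟪s, s⟫) = ∑ i, ∑ j, ⟪x i, x j⟫ by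
          rw [hsdef, sum_inner]
          exact Finset.sum_congr rfl fun i _ => inner_sum _ _ _]
        rw [map_sum]
        exact Finset.sum_congr rfl fun i _ => by rw [map_sum]; rfl
      have h2 : ∀ i : Fin n, (∑ j ∈ Finset.univ.erase i, (⟪x i, x j⟫).re) + (⟪x i, x i⟫).re
          = ∑ j, (⟪x i, x j⟫).re := fun i =>
        Finset.sum_erase_add Finset.univ _ (Finset.mem_univ i)
      have h3 : ∀ i : Fin n, (⟪x i, x i⟫).re = ‖x i‖ ^ 2 := fun i =>
        inner_self_eq_norm_sq (𝕜 := ℂ) (x i)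
      have h4 : ∑ i, ((∑ j ∈ Finset.univ.erase i, (⟪x i, x j⟫).re) + ‖x i‖ ^ 2)
          = ∑ i, ∑ j, (⟪x i, x j⟫).re := by
        apply Finset.sum_congr rfl
        intro i _
        rw [← h3 i, h2 i]
      rw [Finset.sum_add_distrib] at h4
      rw [← hQdef] at h4
      linarith [h1, h4]
    -- the vector u
    set u : H := ((n : ℂ))⁻¹ • s with hudef
    have huN : u ∈ (∑ j, N j).topologicalClosure := by
      apply Submodule.smul_mem
      rw [hsdef]
      exact Submodule.sum_mem _ fun i _ => (hx i).2
    have hnC : ((n : ℂ)) ≠ 0 := by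
      simp only [ne_eq, Nat.cast_eq_zero]
      omega
    have hnnorm : ‖((n : ℂ))⁻¹‖ = ((n : ℝ))⁻¹ := by
      rw [norm_inv, Complex.norm_natCast]
    -- ‖u‖² = T / n²
    have hu2 : ‖u‖ ^ 2 = T / (n : ℝ) ^ 2 := by
      rw [hudef, norm_smul, hnnorm, mul_pow, hTdef]
      field_simp
    -- re⟪u, s⟫ = T / n
    have husC : ⟪u, s⟫ = ((‖s‖ ^ 2 / (n : ℝ) : ℝ) : ℂ) := by
      rw [hudef, inner_smul_left, inner_self_eq_norm_sq_to_K (𝕜 := ℂ) s, map_inv₀,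
        Complex.conj_natCast]
      push_cast
      exact (div_eq_inv_mul _ _).symm
    have hus : (⟪u, s⟫).re = T / (n : ℝ) := by
      rw [husC, Complex.ofReal_re, hTdef]
    -- ∑ ‖u - x i‖² = Q - T/n
    have hdist : ∑ i, ‖u - x i‖ ^ 2 = Q - T / (n : ℝ) := by
      have h5 : ∀ i : Fin n, ‖u - x i‖ ^ 2 = ‖u‖ ^ 2 - 2 * (⟪u, x i⟫).re + ‖x i‖ ^ 2 := by
        intro i
        have := norm_sub_sq (𝕜 := ℂ) u (x i)
        rwa [RCLike.re_to_complex] at this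
      rw [Finset.sum_congr rfl fun i _ => h5 i]
      rw [Finset.sum_add_distrib, Finset.sum_sub_distrib]
      rw [← hQdef, Finset.sum_const, Finset.card_univ, Fintype.card_fin]
      rw [← Finset.mul_sum]
      have h6 : ∑ i, (⟪u, x i⟫).re = (⟪u, s⟫).re := by
        rw [hsdef, inner_sum]
        exact (Complex.re_sum _ _).symm
      rw [h6, hus, hu2]
      have hnne : ((n : ℝ)) ≠ 0 := by positivity
      field_simp
      rw [nsmul_eq_mul]
      have hT3 : (n : ℝ) * ((n : ℝ) * (T / (n : ℝ) ^ 2)) = T := by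
        rw [← mul_assoc, ← pow_two, mul_div_assoc', mul_comm, mul_div_assoc,
          div_self (pow_ne_zero 2 hnne), mul_one]
      linear_combination hT3
    -- projections bound
    have hproj : ∀ i : Fin n, ‖(Submodule.orthogonalProjectionOnto (N i) u : H)‖ ≤ ‖u - x i‖ := by
      intro i
      have hz : Submodule.orthogonalProjectionOnto (N i) (x i) = 0 :=
        Submodule.orthogonalProjectionOnto_apply_of_mem_orthogonal (K := N i) (hx i).1
      have heq : Submodule.orthogonalProjectionOnto (N i) u = Submodule.orthogonalProjectionOnto (N i) (u - x i) := by
        rw [map_sub, hz, sub_zero]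
      rw [heq]
      have hop := Submodule.orthogonalProjectionOnto_norm_le (N i)
      calc ‖(Submodule.orthogonalProjectionOnto (N i) (u - x i) : H)‖
          = ‖Submodule.orthogonalProjectionOnto (N i) (u - x i)‖ := rfl
        _ ≤ ‖Submodule.orthogonalProjectionOnto (N i)‖ * ‖u - x i‖ :=
            (Submodule.orthogonalProjectionOnto (N i)).le_opNorm _
        _ ≤ 1 * ‖u - x i‖ := by
            apply mul_le_mul_of_nonneg_right hop (norm_nonneg _)
        _ = ‖u - x i‖ := one_mul _
    -- key inequality
    have hkey : δ * (T / (n : ℝ) ^ 2) ≤ Q - T / (n : ℝ) := by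
      calc δ * (T / (n : ℝ) ^ 2) = δ * ‖u‖ ^ 2 := by rw [hu2]
        _ ≤ ∑ i, ‖(Submodule.orthogonalProjectionOnto (N i) u : H)‖ ^ 2 := hbound u huN
        _ ≤ ∑ i, ‖u - x i‖ ^ 2 := by
            apply Finset.sum_le_sum
            intro i _
            have := hproj i
            nlinarith [norm_nonneg ((Submodule.orthogonalProjectionOnto (N i) u : H)), norm_nonneg (u - x i)]
        _ = Q - T / (n : ℝ) := hdist
    have key2 : T * ((n : ℝ) + δ) ≤ (n : ℝ) ^ 2 * Q := by
      have hn2 : (0 : ℝ) < (n : ℝ) ^ 2 := by positivity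
      have := mul_le_mul_of_nonneg_left hkey hn2.le
      have hnne : ((n : ℝ)) ≠ 0 := by positivity
      rw [mul_sub] at this
      rw [show (n : ℝ) ^ 2 * (δ * (T / (n : ℝ) ^ 2)) = δ * T by field_simp <;> ring] at this
      rw [show (n : ℝ) ^ 2 * (T / (n : ℝ)) = (n : ℝ) * T by field_simp <;> ring] at this
      nlinarith
    -- conclude
    rw [hnum]
    have lhs_eq : 1 / ((n : ℝ) - 1) * (T - Q) / Q = (T - Q) / (((n : ℝ) - 1) * Q) := by
      rw [one_div, inv_mul_eq_div, div_div]
    have rhs_eq : 1 - ε = (((n : ℝ) - 1) * ((n : ℝ) + δ) - (n : ℝ) * δ) /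
        (((n : ℝ) - 1) * ((n : ℝ) + δ)) := by
      rw [hεdef]
      field_simp
    rw [lhs_eq, rhs_eq, div_le_div_iff₀ (by positivity) (by positivity)]
    nlinarith [mul_le_mul_of_nonneg_left key2 hn1.le]
  linarith

end Stmt6Aux

/-- If, for every `k` with `2 ≤ k ≤ n` (here: `k : Fin n` with `0 < k`),
the Friedrichs cosine of the closure of `N₁ + ⋯ + N_{k−1}` and `N_k` is `< 1`, then
`c(N₁, …, Nₙ) < 1`. -/
theorem stmt_6 {H : Type*} [NormedAddCommGroup H] [InnerProductSpace ℂ H] [CompleteSpace H]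
    {n : ℕ} (hn : 2 ≤ n) (N : Fin n → Submodule ℂ H)
    (hNc : ∀ i, IsClosed ((N i : Set H)))
    (h : ∀ k : Fin n, 0 < (k : ℕ) →
      friedrichsCosine
        ((∑ i ∈ Finset.univ.filter (fun i => i < k), N i).topologicalClosure) (N k) < 1) :
    cosine N < 1 :=
  Stmt6Aux.stmt_6' hn N hNc h
end

section
/- Let n ≥ 2 and let N_1, …, N_n be closed subspaces of a complex Hilbert space H, and let N denote the closure of N_1 + ⋯ + N_n. Let P_{N_1^⊥}, …, P_{N_n^⊥} denote the orthogonal projections onto the orthogonal complements N_1^⊥, …, N_n^⊥, and let P_N denote the orthogonal projection onto N. Then c(N_1, …, N_n) < 1 if and only if ‖P_{N_1^⊥} P_{N_2^⊥} ⋯ P_{N_n^⊥} P_N‖ < 1 in the operator norm. -/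
set_option linter.unusedSectionVars false

section ProjAPI
variable {H : Type*} [NormedAddCommGroup H] [InnerProductSpace ℂ H] [CompleteSpace H]
variable {p : H →L[ℂ] H} {U : Submodule ℂ H}

lemma proj_inner_comm (hsa : IsSelfAdjoint p) (a b : H) :
    (inner ℂ (p a) b : ℂ) = inner ℂ a (p b) := by
  rw [← ContinuousLinearMap.adjoint_inner_left, hsa.adjoint_eq]

lemma proj_mem (hr : LinearMap.range (p : H →ₗ[ℂ] H) = U) (y : H) : p y ∈ U := by
  rw [← hr]; exact LinearMap.mem_range_self _ y

lemma proj_fix (hip : IsIdempotentElem p) (hr : LinearMap.range (p : H →ₗ[ℂ] H) = U)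
    {y : H} (hy : y ∈ U) : p y = y := by
  rw [← hr] at hy
  obtain ⟨w, rfl⟩ := hy
  have := congrArg (fun T : H →L[ℂ] H => T w) hip
  simpa [ContinuousLinearMap.mul_apply] using this

lemma proj_sub_inner (hsa : IsSelfAdjoint p) (hip : IsIdempotentElem p)
    (hr : LinearMap.range (p : H →ₗ[ℂ] H) = U) (y : H) {w : H} (hw : w ∈ U) :
    (inner ℂ (y - p y) w : ℂ) = 0 := by
  rw [← proj_fix hip hr hw, ← proj_inner_comm hsa]
  have : p (y - p y) = 0 := by
    have := congrArg (fun T : H →L[ℂ] H => T y) hip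
    simp only [ContinuousLinearMap.mul_apply] at this
    simp [map_sub, this]
  rw [this, inner_zero_left]

lemma proj_pyth (hsa : IsSelfAdjoint p) (hip : IsIdempotentElem p)
    (hr : LinearMap.range (p : H →ₗ[ℂ] H) = U) (y : H) :
    ‖y‖^2 = ‖p y‖^2 + ‖y - p y‖^2 := by
  have h0 : (inner ℂ (p y) (y - p y) : ℂ) = 0 := by
    rw [← inner_conj_symm, proj_sub_inner hsa hip hr y (proj_mem hr y)]
    simp
  have : ‖p y + (y - p y)‖^2 = ‖p y‖^2 + ‖y - p y‖^2 := by
    rw [@norm_add_sq ℂ]; simp [h0]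
  simpa using this

lemma proj_contr (hsa : IsSelfAdjoint p) (hip : IsIdempotentElem p)
    (hr : LinearMap.range (p : H →ₗ[ℂ] H) = U) (y : H) : ‖p y‖ ≤ ‖y‖ := by
  have h := proj_pyth hsa hip hr y
  nlinarith [norm_nonneg (p y), norm_nonneg y, sq_nonneg ‖y - p y‖]

lemma proj_contr' (hsa : IsSelfAdjoint p) (hip : IsIdempotentElem p)
    (hr : LinearMap.range (p : H →ₗ[ℂ] H) = U) (y : H) : ‖y - p y‖ ≤ ‖y‖ := by
  have h := proj_pyth hsa hip hr y
  nlinarith [norm_nonneg (y - p y), norm_nonneg y, sq_nonneg ‖p y‖]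

lemma proj_dist_min (hsa : IsSelfAdjoint p) (hip : IsIdempotentElem p)
    (hr : LinearMap.range (p : H →ₗ[ℂ] H) = U) (y : H) {w : H} (hw : w ∈ U) :
    ‖y - p y‖ ≤ ‖y - w‖ := by
  have h0 : (inner ℂ (y - p y) (p y - w) : ℂ) = 0 :=
    proj_sub_inner hsa hip hr y (sub_mem (proj_mem hr y) hw)
  have : ‖(y - p y) + (p y - w)‖^2 = ‖y - p y‖^2 + ‖p y - w‖^2 := by
    rw [@norm_add_sq ℂ]; simp [h0]
  have h2 : ‖y - w‖^2 = ‖y - p y‖^2 + ‖p y - w‖^2 := by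
    rw [← this, sub_add_sub_cancel]
  nlinarith [norm_nonneg (y - w), norm_nonneg (y - p y), sq_nonneg ‖p y - w‖]

lemma proj_sub_mem_orth (hsa : IsSelfAdjoint p) (hip : IsIdempotentElem p)
    (hr : LinearMap.range (p : H →ₗ[ℂ] H) = U) (y : H) : y - p y ∈ Uᗮ := by
  intro w hw
  rw [← inner_conj_symm, proj_sub_inner hsa hip hr y hw]
  simp

end ProjAPI

section ListAPI
variable {H : Type*} [NormedAddCommGroup H] [InnerProductSpace ℂ H] [CompleteSpace H]
variable {n : ℕ} {N : Fin n → Submodule ℂ H} {P : Fin n → H →L[ℂ] H}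

/-- apply a list of the projections -/
noncomputable def app (P : Fin n → H →L[ℂ] H) (l : List (Fin n)) (u : H) : H :=
  ((l.map P).prod) u

lemma app_nil (u : H) : app P [] u = u := rfl

lemma app_cons (i : Fin n) (t : List (Fin n)) (u : H) :
    app P (i :: t) u = P i (app P t u) := by
  simp [app, ContinuousLinearMap.mul_apply]

lemma app_append (a b : List (Fin n)) (u : H) :
    app P (a ++ b) u = app P a (app P b u) := by
  simp [app, ContinuousLinearMap.mul_apply]

variable (hP : ∀ i, IsSelfAdjoint (P i) ∧ IsIdempotentElem (P i) ∧
      LinearMap.range (P i : H →ₗ[ℂ] H) = (N i)ᗮ)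

section
include hP

lemma app_contr (l : List (Fin n)) (u : H) : ‖app P l u‖ ≤ ‖u‖ := by
  induction l with
  | nil => simp [app_nil]
  | cons i t ih =>
      rw [app_cons]
      exact le_trans (proj_contr (hP i).1 (hP i).2.1 (hP i).2.2 _) ih

lemma lemF (l : List (Fin n)) (u : H) (η : ℝ)
    (h : ∀ a j b, l = a ++ j :: b → ‖app P b u - P j (app P b u)‖ < η) :
    ‖u - app P l u‖ ≤ l.length * η := by
  induction l with
  | nil => simp [app_nil]
  | cons i t ih =>
      have h1 : ‖app P t u - P i (app P t u)‖ < η := h [] i t rfl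
      have h2 : ‖u - app P t u‖ ≤ t.length * η := by
        refine ih (fun a j b hb => h (i :: a) j b ?_)
        simp [hb]
      calc ‖u - app P (i :: t) u‖
          ≤ ‖u - app P t u‖ + ‖app P t u - app P (i :: t) u‖ := by
            simpa using norm_sub_le_norm_sub_add_norm_sub u (app P t u) (app P (i :: t) u)
        _ ≤ t.length * η + η := by
            rw [app_cons]; exact add_le_add h2 (le_of_lt h1)
        _ = (i :: t).length * η := by simp; ring

lemma lemG (a b : List (Fin n)) (i : Fin n) (u : H) (η : ℝ) (hη : 0 ≤ η)
    (h : η ≤ ‖app P b u - P i (app P b u)‖) :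
    ‖app P (a ++ i :: b) u‖^2 ≤ ‖u‖^2 - η^2 := by
  set v := app P b u with hv
  have h1 : ‖app P (a ++ i :: b) u‖ ≤ ‖P i v‖ := by
    rw [app_append, app_cons]
    exact app_contr hP a _
  have h2 : ‖v‖^2 = ‖P i v‖^2 + ‖v - P i v‖^2 := proj_pyth (hP i).1 (hP i).2.1 (hP i).2.2 v
  have h3 : ‖v‖ ≤ ‖u‖ := app_contr hP b u
  have h4 : η ^ 2 ≤ ‖v - P i v‖ ^2 := by
    have h0 : (0:ℝ) ≤ ‖v - P i v‖ := norm_nonneg _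
    nlinarith
  nlinarith [norm_nonneg (app P (a ++ i :: b) u), norm_nonneg (P i v), norm_nonneg u, norm_nonneg v]

lemma lemC (l : List (Fin n)) (u : H) :
    ‖u - app P l u‖ ≤ 3^l.length * ∑ i, ‖u - P i u‖ := by
  have hs : (0:ℝ) ≤ ∑ i, ‖u - P i u‖ :=
    Finset.sum_nonneg (fun i _ => norm_nonneg _)
  induction l with
  | nil => simpa [app_nil] using hs
  | cons i t ih =>
      have hι : ‖u - P i u‖ ≤ ∑ j, ‖u - P j u‖ :=
        Finset.single_le_sum (f := fun j => ‖u - P j u‖) (fun j _ => norm_nonneg _)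
          (Finset.mem_univ i)
      have hlip : ‖P i u - P i (app P t u)‖ ≤ ‖u - app P t u‖ := by
        rw [← map_sub]
        exact proj_contr (hP i).1 (hP i).2.1 (hP i).2.2 _
      calc ‖u - app P (i :: t) u‖
          ≤ ‖u - P i u‖ + ‖P i u - app P (i :: t) u‖ :=
            norm_sub_le_norm_sub_add_norm_sub _ _ _
        _ ≤ ∑ j, ‖u - P j u‖ + ‖u - app P t u‖ := by
            rw [app_cons]; exact add_le_add hι hlip
        _ ≤ ∑ j, ‖u - P j u‖ + 3^t.length * ∑ j, ‖u - P j u‖ := by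
            exact add_le_add_right (ih) _
        _ ≤ 3^(i :: t).length * ∑ j, ‖u - P j u‖ := by
            have h1 : (1:ℝ) ≤ 3 ^ t.length := one_le_pow₀ (by norm_num)
            simp only [List.length_cons, pow_succ]
            nlinarith

end

end ListAPI

section IPHelp
variable {H : Type*} [NormedAddCommGroup H] [InnerProductSpace ℂ H]

lemma abs_re_inner_le (a b : H) : |((inner ℂ a b : ℂ)).re| ≤ ‖a‖*‖b‖ := by
  refine le_trans (Complex.abs_re_le_norm _) ?_
  exact norm_inner_le_norm a b

lemma re_inner_le (a b : H) : ((inner ℂ a b : ℂ)).re ≤ ‖a‖*‖b‖ :=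
  le_trans (le_abs_self _) (abs_re_inner_le a b)

lemma re_inner_self (a : H) : ((inner ℂ a a : ℂ)).re = ‖a‖^2 := by
  have := @inner_self_eq_norm_sq ℂ _ _ _ _ a
  simpa using this

lemma norm_sub_sq'' (a b : H) :
    ‖a - b‖^2 = ‖a‖^2 - 2*((inner ℂ a b : ℂ)).re + ‖b‖^2 := by
  have := @norm_sub_sq ℂ _ _ _ _ a b
  simpa using this

lemma re_inner_comm (a b : H) : ((inner ℂ a b : ℂ)).re = ((inner ℂ b a : ℂ)).re := by
  rw [← inner_conj_symm a b, Complex.conj_re]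

lemma norm_sum_sq_eq {n : ℕ} (x : Fin n → H) :
    ‖∑ i, x i‖^2 = (∑ i, ‖x i‖^2) +
      ∑ i, ∑ j ∈ Finset.univ.erase i, ((inner ℂ (x i) (x j) : ℂ)).re := by
  have h1 : ‖∑ i, x i‖^2 = ((inner ℂ (∑ i, x i) (∑ i, x i) : ℂ)).re :=
    (re_inner_self _).symm
  rw [h1, sum_inner, Complex.re_sum]
  have h2 : ∀ i : Fin n, ((inner ℂ (x i) (∑ j, x j) : ℂ)).re
      = ‖x i‖^2 + ∑ j ∈ Finset.univ.erase i, ((inner ℂ (x i) (x j) : ℂ)).re := by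
    intro i
    rw [inner_sum, Complex.re_sum, ← re_inner_self (x i)]
    exact (Finset.add_sum_erase _ _ (Finset.mem_univ i)).symm
  rw [Finset.sum_congr rfl (fun i _ => h2 i), Finset.sum_add_distrib]

end IPHelp

section Main
variable {H : Type*} [NormedAddCommGroup H] [InnerProductSpace ℂ H] [CompleteSpace H]
variable {n : ℕ}

/-- The key intermediate condition. -/
def StarCond (P : Fin n → H →L[ℂ] H) (M : Submodule ℂ H) : Prop :=
  ∃ δ : ℝ, 0 < δ ∧ ∀ z ∈ M, δ * ‖z‖^2 ≤ ∑ i, ‖z - P i z‖^2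

lemma lemB2 (hn : 2 ≤ n) (N : Fin n → Submodule ℂ H)
    (P : Fin n → H →L[ℂ] H)
    (hP : ∀ i, IsSelfAdjoint (P i) ∧ IsIdempotentElem (P i) ∧
      LinearMap.range (P i : H →ₗ[ℂ] H) = (N i)ᗮ)
    (hstar : StarCond P ((∑ j, N j).topologicalClosure)) :
    cosine N < 1 := by
  obtain ⟨δ, hδ, hs⟩ := hstar
  set m : ℝ := (n : ℝ) - 1 with hm
  have hm1 : (1:ℝ) ≤ m := by
    have : (2:ℝ) ≤ (n:ℝ) := by exact_mod_cast hn
    simp [hm]; linarith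
  have hm0 : 0 < m := lt_of_lt_of_le one_pos hm1
  clear_value m
  set β : ℝ := (2*m^2 - δ) / (m * (δ + 2*m)) with hβ
  clear_value β
  have hden : 0 < m * (δ + 2*m) := by nlinarith
  have hmax1 : max β 0 < 1 := by
    refine max_lt ?_ one_pos
    rw [hβ, div_lt_one hden]
    nlinarith
  refine lt_of_le_of_lt (Real.sSup_le ?_ (le_max_right β 0)) hmax1
  rintro c ⟨x, hxmem, hxne, rfl⟩
  rw [← hm]
  set D : ℝ := ∑ i, ‖x i‖^2 with hD
  set S : ℝ := ∑ i, ∑ j ∈ Finset.univ.erase i, ((inner ℂ (x i) (x j) : ℂ)).re with hS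
  have hDpos : 0 < D := by
    obtain ⟨i, hi⟩ : ∃ i, x i ≠ 0 := by
      by_contra h; push_neg at h; exact hxne (funext h)
    have h0 : 0 < ‖x i‖ := norm_pos_iff.mpr hi
    have h1 : 0 < ‖x i‖^2 := by positivity
    have h2 : ‖x i‖^2 ≤ D := Finset.single_le_sum
      (f := fun j => ‖x j‖^2) (fun j _ => sq_nonneg _) (Finset.mem_univ i)
    linarith
  have hfix : ∀ i, P i (x i) = x i := fun i =>
    proj_fix (hP i).2.1 (hP i).2.2 (hxmem i).1
  set σ := ∑ i, x i with hσ
  have hσM : σ ∈ (∑ j, N j).topologicalClosure :=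
    Submodule.sum_mem _ (fun i _ => (hxmem i).2)
  -- Fact 1
  have fact1 : ‖σ‖^2 = D + S := norm_sum_sq_eq x
  -- Fact 2
  have fact2 : ∀ i, ‖σ - P i σ‖ ≤ ∑ j ∈ Finset.univ.erase i, ‖x j - x i‖ := by
    intro i
    have hterm : ∀ j, x j - P i (x j)
        = ((x j - x i) - P i (x j - x i)) := by
      intro j
      rw [map_sub, hfix i]
      abel
    have h1 : σ - P i σ = ∑ j, ((x j - x i) - P i (x j - x i)) := by
      rw [hσ, map_sum, ← Finset.sum_sub_distrib]
      exact Finset.sum_congr rfl (fun j _ => hterm j)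
    have h2 : σ - P i σ = ∑ j ∈ Finset.univ.erase i, ((x j - x i) - P i (x j - x i)) := by
      rw [h1]
      refine (Finset.sum_erase _ ?_).symm
      simp
    rw [h2]
    refine le_trans (norm_sum_le _ _) (Finset.sum_le_sum (fun j _ => ?_))
    exact proj_contr' (hP i).1 (hP i).2.1 (hP i).2.2 _
  -- Fact 3 : Cauchy-Schwarz on each erase-sum
  have fact3 : ∀ i, (∑ j ∈ Finset.univ.erase i, ‖x j - x i‖)^2
      ≤ m * ∑ j ∈ Finset.univ.erase i, ‖x j - x i‖^2 := by
    intro i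
    have hcs := Finset.sum_mul_sq_le_sq_mul_sq (Finset.univ.erase i)
      (fun j => ‖x j - x i‖) (fun _ => (1:ℝ))
    have hcard : ((Finset.univ.erase i).card : ℝ) = m := by
      rw [Finset.card_erase_of_mem (Finset.mem_univ i), Finset.card_univ, Fintype.card_fin,
        Nat.cast_sub (by omega : 1 ≤ n)]
      simp [hm]
    simp only [mul_one, one_pow] at hcs
    calc (∑ j ∈ Finset.univ.erase i, ‖x j - x i‖)^2
        ≤ (∑ j ∈ Finset.univ.erase i, ‖x j - x i‖^2) * (∑ _j ∈ Finset.univ.erase i, (1:ℝ)) := hcs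
      _ = m * ∑ j ∈ Finset.univ.erase i, ‖x j - x i‖^2 := by
          rw [Finset.sum_const, nsmul_eq_mul, mul_one, hcard, mul_comm]
  -- Fact 4
  set W : ℝ := ∑ i, ∑ j ∈ Finset.univ.erase i, ‖x j - x i‖^2 with hW
  have fact4 : W = 2*m*D - 2*S := by
    have ht : ∀ i, ∀ j, ‖x j - x i‖^2
        = ‖x j‖^2 + ‖x i‖^2 - 2*((inner ℂ (x i) (x j) : ℂ)).re := by
      intro i j
      rw [norm_sub_sq'' (x j) (x i), re_inner_comm (x j) (x i)]
      ring
    have h1 : W = ∑ i, ((D - ‖x i‖^2) + m * ‖x i‖^2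
        - 2 * ∑ j ∈ Finset.univ.erase i, ((inner ℂ (x i) (x j) : ℂ)).re) := by
      rw [hW]
      refine Finset.sum_congr rfl (fun i _ => ?_)
      rw [Finset.sum_congr rfl (fun j _ => ht i j)]
      rw [Finset.sum_sub_distrib, Finset.sum_add_distrib, Finset.sum_erase_eq_sub (Finset.mem_univ i),
        ← Finset.mul_sum, Finset.sum_const, nsmul_eq_mul]
      have hcard : ((Finset.univ.erase i).card : ℝ) = m := by
        rw [Finset.card_erase_of_mem (Finset.mem_univ i), Finset.card_univ, Fintype.card_fin,
          Nat.cast_sub (by omega : 1 ≤ n)]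
        simp [hm]
      rw [hcard]
    rw [h1, Finset.sum_sub_distrib, Finset.sum_add_distrib, Finset.sum_sub_distrib,
      ← Finset.mul_sum, ← Finset.mul_sum, ← hD, ← hS, Finset.sum_const, Finset.card_univ,
      nsmul_eq_mul]
    have : ((Fintype.card (Fin n) : ℝ)) = m + 1 := by simp [hm]
    rw [this]
    ring
  -- star applied to σ
  have hstarσ : δ * ‖σ‖^2 ≤ ∑ i, ‖σ - P i σ‖^2 := hs σ hσM
  have hchain : ∑ i, ‖σ - P i σ‖^2 ≤ m * W := by
    rw [hW, Finset.mul_sum]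
    refine Finset.sum_le_sum (fun i _ => ?_)
    refine le_trans ?_ (fact3 i)
    have h2 := fact2 i
    have h0 : (0:ℝ) ≤ ‖σ - P i σ‖ := norm_nonneg _
    nlinarith
  have key : S * (δ + 2*m) ≤ (2*m^2 - δ) * D := by nlinarith
  -- conclude
  refine le_trans ?_ (le_max_left β 0)
  have hme : m ≠ 0 := ne_of_gt hm0
  rw [div_le_iff₀ hDpos, hβ,
    show (2*m^2 - δ) / (m * (δ + 2*m)) * D = ((2*m^2 - δ) * D) / (m * (δ + 2*m)) from by ring,
    le_div_iff₀ hden]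
  have hclean : ∀ u : ℝ, 1 / m * u * (m * (δ + 2*m)) = u * (δ + 2*m) := by
    intro u; field_simp
  calc 1 / m * S * (m * (δ + 2*m)) = S * (δ + 2*m) := hclean S
    _ ≤ (2*m^2 - δ) * D := key

lemma elem_le_one (hn : 2 ≤ n) (x : Fin n → H) (hxne : x ≠ 0) :
    (1 / ((n : ℝ) - 1)) *
        (∑ i, ∑ j ∈ Finset.univ.erase i, ((inner ℂ (x i) (x j) : ℂ)).re) /
        (∑ i, ‖x i‖ ^ 2) ≤ 1 := by
  set m : ℝ := (n : ℝ) - 1 with hm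
  have hm1 : (1:ℝ) ≤ m := by
    have : (2:ℝ) ≤ (n:ℝ) := by exact_mod_cast hn
    simp [hm]; linarith
  have hm0 : 0 < m := lt_of_lt_of_le one_pos hm1
  set D : ℝ := ∑ i, ‖x i‖^2 with hD
  set S : ℝ := ∑ i, ∑ j ∈ Finset.univ.erase i, ((inner ℂ (x i) (x j) : ℂ)).re with hS
  have hDpos : 0 < D := by
    obtain ⟨i, hi⟩ : ∃ i, x i ≠ 0 := by
      by_contra h; push_neg at h; exact hxne (funext h)
    have h0 : 0 < ‖x i‖ := norm_pos_iff.mpr hi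
    have h1 : 0 < ‖x i‖^2 := by positivity
    have h2 : ‖x i‖^2 ≤ D := Finset.single_le_sum
      (f := fun j => ‖x j‖^2) (fun j _ => sq_nonneg _) (Finset.mem_univ i)
    linarith
  have hSle : S ≤ m * D := by
    have h1 : S ≤ ∑ i, ∑ j ∈ Finset.univ.erase i, (‖x i‖^2 + ‖x j‖^2)/2 := by
      refine Finset.sum_le_sum (fun i _ => Finset.sum_le_sum (fun j _ => ?_))
      have := re_inner_le (x i) (x j)
      nlinarith [sq_nonneg (‖x i‖ - ‖x j‖)]
    have h2 : ∀ i : Fin n, ∑ j ∈ Finset.univ.erase i, (‖x i‖^2 + ‖x j‖^2)/2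
        = (m * ‖x i‖^2 + (D - ‖x i‖^2))/2 := by
      intro i
      have hcard : ((Finset.univ.erase i).card : ℝ) = m := by
        rw [Finset.card_erase_of_mem (Finset.mem_univ i), Finset.card_univ, Fintype.card_fin,
          Nat.cast_sub (by omega : 1 ≤ n)]
        simp [hm]
      rw [← Finset.sum_div, Finset.sum_add_distrib, Finset.sum_const, nsmul_eq_mul, hcard,
        Finset.sum_erase_eq_sub (Finset.mem_univ i), ← hD]
    have h3 : ∑ i, ((m * ‖x i‖^2 + (D - ‖x i‖^2))/2 : ℝ) = m * D := by
      rw [← Finset.sum_div, Finset.sum_add_distrib, ← Finset.mul_sum, Finset.sum_sub_distrib,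
        Finset.sum_const, Finset.card_univ, Fintype.card_fin, nsmul_eq_mul, ← hD]
      have : ((n:ℝ)) = m + 1 := by simp [hm]
      rw [this]
      ring
    calc S ≤ _ := h1
      _ = ∑ i, ((m * ‖x i‖^2 + (D - ‖x i‖^2))/2 : ℝ) := Finset.sum_congr rfl (fun i _ => h2 i)
      _ = m * D := h3
  rw [div_le_one hDpos]
  calc 1/m * S ≤ 1/m * (m * D) := by
        apply mul_le_mul_of_nonneg_left hSle
        positivity
    _ = D := by field_simp

set_option maxHeartbeats 1000000 in
lemma lemB1 (hn : 2 ≤ n) (N : Fin n → Submodule ℂ H)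
    (hNc : ∀ i, IsClosed ((N i : Set H)))
    (P : Fin n → H →L[ℂ] H)
    (hP : ∀ i, IsSelfAdjoint (P i) ∧ IsIdempotentElem (P i) ∧
      LinearMap.range (P i : H →ₗ[ℂ] H) = (N i)ᗮ)
    (hns : ¬ StarCond P ((∑ j, N j).topologicalClosure)) :
    1 ≤ cosine N := by
  set MC := {c : ℝ | ∃ x : Fin n → H,
    (∀ i, x i ∈ (N i)ᗮ ⊓ (∑ j, N j).topologicalClosure) ∧ x ≠ 0 ∧
    c = (1 / ((n : ℝ) - 1)) *
        (∑ i, ∑ j ∈ Finset.univ.erase i, ((inner ℂ (x i) (x j) : ℂ)).re) /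
        (∑ i, ‖x i‖ ^ 2)} with hMC
  have hcos : cosine N = sSup MC := rfl
  have hbdd : BddAbove MC := by
    refine ⟨1, ?_⟩
    rintro c ⟨x, _, hxne, rfl⟩
    exact elem_le_one hn x hxne
  have hcompl : ∀ i, ((N i)ᗮ)ᗮ = N i := by
    intro i
    haveI : CompleteSpace (N i) := (hNc i).completeSpace_coe
    exact Submodule.orthogonal_orthogonal (N i)
  have hNiM : ∀ i, N i ≤ (∑ j, N j).topologicalClosure := fun i =>
    le_trans (Finset.single_le_sum (f := N) (fun j _ => bot_le) (Finset.mem_univ i))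
      (Submodule.le_topologicalClosure _)
  have hm2 : (2:ℝ) ≤ (n:ℝ) := by exact_mod_cast hn
  refine le_of_forall_pos_le_add ?_
  intro ε hε
  -- choose t
  set t : ℝ := min (ε/6) 4⁻¹ with htdef
  have ht0 : 0 < t := by
    apply lt_min (by linarith) (by norm_num)
  have ht4 : t ≤ 4⁻¹ := min_le_right _ _
  have htε : 3 * t ≤ ε := by
    have := min_le_left (ε/6) 4⁻¹
    have h : t ≤ ε/6 := by rw [htdef]; exact this
    linarith
  -- get z from ¬ Star
  rw [StarCond] at hns
  push_neg at hns
  obtain ⟨z, hzM, hz⟩ := hns (t^2) (by positivity)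
  have hsum0 : (0:ℝ) ≤ ∑ i, ‖z - P i z‖^2 :=
    Finset.sum_nonneg (fun i _ => sq_nonneg _)
  set r : ℝ := ‖z‖ with hr
  have hr0 : 0 < r := by
    rcases (norm_nonneg z).eq_or_lt with h0 | h0
    · exfalso
      rw [← hr] at *
      rw [← h0] at hz
      nlinarith
    · exact h0
  have hd : ∀ i, ‖z - P i z‖ < t * r := by
    intro i
    have h1 : ‖z - P i z‖^2 ≤ ∑ j, ‖z - P j z‖^2 :=
      Finset.single_le_sum (f := fun j => ‖z - P j z‖^2) (fun j _ => sq_nonneg _)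
        (Finset.mem_univ i)
    have h2 : ‖z - P i z‖^2 < (t*r)^2 := by
      calc ‖z - P i z‖^2 ≤ _ := h1
        _ < t^2 * r^2 := hz
        _ = (t*r)^2 := by ring
    exact lt_of_pow_lt_pow_left₀ 2 (by positivity) h2
  -- the vectors
  set x : Fin n → H := fun i => P i z with hx
  have hximem : ∀ i, x i ∈ (N i)ᗮ ⊓ (∑ j, N j).topologicalClosure := by
    intro i
    refine ⟨proj_mem (hP i).2.2 z, ?_⟩
    have h1 : z - P i z ∈ N i := by
      rw [← hcompl i]
      exact proj_sub_mem_orth (hP i).1 (hP i).2.1 (hP i).2.2 z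
    have h2 : x i = z - (z - P i z) := by rw [hx]; simp
    rw [h2]
    exact Submodule.sub_mem _ hzM (hNiM i h1)
  have hxlow : ∀ i, r * (1 - t) ≤ ‖x i‖ := by
    intro i
    have h1 : r - ‖x i‖ ≤ ‖z - x i‖ := by
      have := norm_sub_norm_le z (x i)
      linarith [this]
    have h2 := hd i
    rw [hx] at *
    nlinarith
  have hxipos : ∀ i, 0 < ‖x i‖ := by
    intro i
    have := hxlow i
    nlinarith
  have hxne : x ≠ 0 := by
    intro h0
    have i0 : Fin n := ⟨0, by omega⟩
    have := hxipos i0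
    rw [h0] at this
    simp at this
  -- bounds
  set D : ℝ := ∑ i, ‖x i‖^2 with hD
  set S : ℝ := ∑ i, ∑ j ∈ Finset.univ.erase i, ((inner ℂ (x i) (x j) : ℂ)).re with hS
  have hDpos : 0 < D := by
    have i0 : Fin n := ⟨0, by omega⟩
    have h1 : 0 < ‖x i0‖^2 := by have := hxipos i0; positivity
    have h2 : ‖x i0‖^2 ≤ D := Finset.single_le_sum
      (f := fun j => ‖x j‖^2) (fun j _ => sq_nonneg _) (Finset.mem_univ i0)
    linarith
  have hDup : D ≤ n * r^2 := by
    rw [hD]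
    calc ∑ i, ‖x i‖^2 ≤ ∑ _i : Fin n, r^2 := by
          refine Finset.sum_le_sum (fun i _ => ?_)
          have h1 : ‖x i‖ ≤ r := by
            rw [hx]
            exact proj_contr (hP i).1 (hP i).2.1 (hP i).2.2 z
          nlinarith [norm_nonneg (x i)]
      _ = n * r^2 := by
          rw [Finset.sum_const, Finset.card_univ, Fintype.card_fin, nsmul_eq_mul]
  have hij : ∀ i j : Fin n, r^2 * (1 - 3*t) ≤ ((inner ℂ (x i) (x j) : ℂ)).re := by
    intro i j
    set ei := z - P i z with hei
    set ej := z - P j z with hej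
    have hxi : x i = z - ei := by rw [hx, hei]; simp
    have hxj : x j = z - ej := by rw [hx, hej]; simp
    have hinner : ((inner ℂ (x i) (x j) : ℂ)).re
        = ((inner ℂ z z : ℂ)).re - ((inner ℂ z ej : ℂ)).re - ((inner ℂ ei z : ℂ)).re
          + ((inner ℂ ei ej : ℂ)).re := by
      rw [hxi, hxj]
      simp only [inner_sub_left, inner_sub_right, Complex.sub_re, Complex.add_re]
      ring
    have hzz : ((inner ℂ z z : ℂ)).re = r^2 := re_inner_self z
    have h1 := abs_re_inner_le z ej
    have h2 := abs_re_inner_le ei z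
    have h3 := abs_re_inner_le ei ej
    have hei' : ‖ei‖ < t*r := hd i
    have hej' : ‖ej‖ < t*r := hd j
    have hein : 0 ≤ ‖ei‖ := norm_nonneg _
    have hejn : 0 ≤ ‖ej‖ := norm_nonneg _
    rw [hinner, hzz]
    have ht1 : t ≤ 1 := by linarith [ht4]
    have habs1 : |((inner ℂ z ej : ℂ)).re| ≤ t * r * r := by
      refine le_trans h1 ?_
      have : ‖z‖ * ‖ej‖ ≤ r * (t*r) := by
        apply mul_le_mul (le_of_eq hr.symm) (le_of_lt hej') hejn (le_of_lt hr0)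
      linarith [this]
    have habs2 : |((inner ℂ ei z : ℂ)).re| ≤ t * r * r := by
      refine le_trans h2 ?_
      have : ‖ei‖ * ‖z‖ ≤ (t*r) * r := by
        apply mul_le_mul (le_of_lt hei') (le_of_eq hr.symm) (norm_nonneg z) (by positivity)
      linarith [this]
    have habs3 : |((inner ℂ ei ej : ℂ)).re| ≤ (t*r) * (t*r) := by
      refine le_trans h3 ?_
      apply mul_le_mul (le_of_lt hei') (le_of_lt hej') hejn (by positivity)
    have e1 := abs_le.mp habs1
    have e2 := abs_le.mp habs2
    have e3 := abs_le.mp habs3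
    have ht2 : t*r*(t*r) ≤ t*r*r := by
      nlinarith [mul_nonneg (mul_nonneg (sub_nonneg.mpr ht1) ht0.le) (sq_nonneg r)]
    nlinarith [e1.1, e2.1, e3.1, ht2]
  have hSlow : (n:ℝ) * ((n:ℝ) - 1) * (r^2 * (1 - 3*t)) ≤ S := by
    have h1 : ∀ i : Fin n, ((n:ℝ) - 1) * (r^2 * (1 - 3*t))
        ≤ ∑ j ∈ Finset.univ.erase i, ((inner ℂ (x i) (x j) : ℂ)).re := by
      intro i
      have hcard : ((Finset.univ.erase i).card : ℝ) = (n:ℝ) - 1 := by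
        rw [Finset.card_erase_of_mem (Finset.mem_univ i), Finset.card_univ, Fintype.card_fin,
          Nat.cast_sub (by omega : 1 ≤ n)]
        simp
      have := Finset.card_nsmul_le_sum (Finset.univ.erase i)
        (fun j => ((inner ℂ (x i) (x j) : ℂ)).re) (r^2 * (1 - 3*t)) (fun j _ => hij i j)
      rw [nsmul_eq_mul, hcard] at this
      exact this
    have h2 := Finset.card_nsmul_le_sum Finset.univ
      (fun i => ∑ j ∈ Finset.univ.erase i, ((inner ℂ (x i) (x j) : ℂ)).re)
      (((n:ℝ) - 1) * (r^2 * (1 - 3*t))) (fun i _ => h1 i)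
    rw [Finset.card_univ, Fintype.card_fin, nsmul_eq_mul] at h2
    calc (n:ℝ) * ((n:ℝ) - 1) * (r^2 * (1 - 3*t))
        = (n:ℝ) * (((n:ℝ) - 1) * (r^2 * (1 - 3*t))) := by ring
      _ ≤ S := h2
  -- conclude
  have hmem : (1 / ((n : ℝ) - 1)) * S / D ∈ MC := by
    rw [hMC]
    exact ⟨x, hximem, hxne, by rw [hS, hD]⟩
  have hle : (1 / ((n : ℝ) - 1)) * S / D ≤ cosine N := by
    rw [hcos]
    exact le_csSup hbdd hmem
  have hgoal : 1 - ε ≤ (1 / ((n : ℝ) - 1)) * S / D := by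
    rw [le_div_iff₀ hDpos]
    have hm0 : (0:ℝ) < (n:ℝ) - 1 := by linarith
    have hkey : (n:ℝ) * r^2 * (1 - 3*t) ≤ 1 / ((n:ℝ) - 1) * S := by
      have h1 : 1 / ((n:ℝ) - 1) * ((n:ℝ) * ((n:ℝ) - 1) * (r^2 * (1 - 3*t)))
          = (n:ℝ) * r^2 * (1 - 3*t) := by
        field_simp
      calc (n:ℝ) * r^2 * (1 - 3*t)
          = 1 / ((n:ℝ) - 1) * ((n:ℝ) * ((n:ℝ) - 1) * (r^2 * (1 - 3*t))) := h1.symm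
        _ ≤ 1 / ((n:ℝ) - 1) * S := by
            apply mul_le_mul_of_nonneg_left hSlow (by positivity)
    have h3t : 0 < 1 - 3*t := by
      have : (3:ℝ) * t ≤ 3 * 4⁻¹ := by linarith
      linarith
    rcases le_or_gt (1 - ε) 0 with hcase | hcase
    · have : (1 - ε) * D ≤ 0 := mul_nonpos_of_nonpos_of_nonneg hcase (le_of_lt hDpos)
      have hpos : 0 ≤ (n:ℝ) * r^2 * (1 - 3*t) := by positivity
      linarith
    · have h4 : (1 - ε) * D ≤ (1 - ε) * ((n:ℝ) * r^2) :=
        mul_le_mul_of_nonneg_left hDup (le_of_lt hcase)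
      have h5 : (1 - ε) * ((n:ℝ) * r^2) ≤ (1 - 3*t) * ((n:ℝ) * r^2) := by
        apply mul_le_mul_of_nonneg_right (by linarith) (by positivity)
      calc (1 - ε) * D ≤ (1 - ε) * ((n:ℝ) * r^2) := h4
        _ ≤ (1 - 3*t) * ((n:ℝ) * r^2) := h5
        _ = (n:ℝ) * r^2 * (1 - 3*t) := by ring
        _ ≤ 1 / ((n:ℝ) - 1) * S := hkey
  linarith

lemma T_apply (P : Fin n → H →L[ℂ] H) (Q : H →L[ℂ] H) (z : H) :
    ((List.ofFn P).prod * Q) z = app P (List.finRange n) (Q z) := by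
  rw [ContinuousLinearMap.mul_apply, app, List.ofFn_eq_map]

lemma lemA2 (hn : 2 ≤ n) (N : Fin n → Submodule ℂ H)
    (P : Fin n → H →L[ℂ] H)
    (hP : ∀ i, IsSelfAdjoint (P i) ∧ IsIdempotentElem (P i) ∧
      LinearMap.range (P i : H →ₗ[ℂ] H) = (N i)ᗮ)
    (Q : H →L[ℂ] H)
    (hQ : IsSelfAdjoint Q ∧ IsIdempotentElem Q ∧
      LinearMap.range (Q : H →ₗ[ℂ] H) = (∑ j, N j).topologicalClosure)
    (h : ‖(List.ofFn P).prod * Q‖ < 1) :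
    StarCond P ((∑ j, N j).topologicalClosure) := by
  set T := (List.ofFn P).prod * Q with hT
  have hn0 : (0:ℝ) < n := by
    have : (2:ℝ) ≤ (n:ℝ) := by exact_mod_cast hn
    linarith
  have hT1 : 0 < 1 - ‖T‖ := by linarith
  refine ⟨((1 - ‖T‖)/3^n)^2/n, by positivity, ?_⟩
  intro z hzM
  have hQz : Q z = z := proj_fix hQ.2.1 hQ.2.2 hzM
  set s := ∑ i, ‖z - P i z‖ with hs
  have hs0 : 0 ≤ s := Finset.sum_nonneg (fun i _ => norm_nonneg _)
  have hC : ‖z - app P (List.finRange n) z‖ ≤ 3^n * s := by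
    have := lemC hP (List.finRange n) z
    rwa [List.length_finRange] at this
  have hTz : T z = app P (List.finRange n) z := by rw [hT, T_apply, hQz]
  have h1 : ‖z‖ - ‖T z‖ ≤ 3^n * s := by
    rw [hTz]
    linarith [norm_sub_norm_le z (app P (List.finRange n) z)]
  have h2 : ‖T z‖ ≤ ‖T‖ * ‖z‖ := T.le_opNorm z
  have h3 : (1 - ‖T‖) * ‖z‖ ≤ 3^n * s := by nlinarith
  have h4 : ((1 - ‖T‖)/3^n * ‖z‖)^2 ≤ s^2 := by
    apply pow_le_pow_left₀ (by positivity)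
    rw [div_mul_eq_mul_div, div_le_iff₀ (by positivity : (0:ℝ) < 3^n)]
    linarith
  have hCS : s^2 ≤ (∑ i, ‖z - P i z‖^2) * n := by
    have hcs := Finset.sum_mul_sq_le_sq_mul_sq Finset.univ (fun i => ‖z - P i z‖)
      (fun _ => (1:ℝ))
    simp only [mul_one, one_pow] at hcs
    rw [Finset.sum_const, Finset.card_univ, Fintype.card_fin, nsmul_eq_mul, mul_one] at hcs
    calc s^2 = (∑ i, ‖z - P i z‖)^2 := by rw [hs]
      _ ≤ (∑ i, ‖z - P i z‖^2) * n := by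
          refine le_trans hcs ?_
          apply mul_le_mul_of_nonneg_left (le_refl _) ?_ |>.trans ?_
          · exact Finset.sum_nonneg (fun i _ => sq_nonneg _)
          · exact le_refl _
  rw [div_mul_eq_mul_div, div_le_iff₀ hn0]
  calc ((1 - ‖T‖)/3^n)^2 * ‖z‖^2 = ((1 - ‖T‖)/3^n * ‖z‖)^2 := by ring
    _ ≤ s^2 := h4
    _ ≤ (∑ i, ‖z - P i z‖^2) * n := hCS

set_option maxHeartbeats 1000000 in
lemma lemA1 (hn : 2 ≤ n) (N : Fin n → Submodule ℂ H)
    (P : Fin n → H →L[ℂ] H)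
    (hP : ∀ i, IsSelfAdjoint (P i) ∧ IsIdempotentElem (P i) ∧
      LinearMap.range (P i : H →ₗ[ℂ] H) = (N i)ᗮ)
    (Q : H →L[ℂ] H)
    (hQ : IsSelfAdjoint Q ∧ IsIdempotentElem Q ∧
      LinearMap.range (Q : H →ₗ[ℂ] H) = (∑ j, N j).topologicalClosure)
    (hstar : StarCond P ((∑ j, N j).topologicalClosure)) :
    ‖(List.ofFn P).prod * Q‖ < 1 := by
  set T := (List.ofFn P).prod * Q with hT
  obtain ⟨δ0, hδ0, hstar0⟩ := hstar
  set δ := min δ0 1 with hδdef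
  have hδpos : 0 < δ := lt_min hδ0 one_pos
  have hδ1 : δ ≤ 1 := min_le_right _ _
  have hstar' : ∀ z ∈ (∑ j, N j).topologicalClosure, δ * ‖z‖^2 ≤ ∑ i, ‖z - P i z‖^2 := by
    intro z hz
    refine le_trans ?_ (hstar0 z hz)
    apply mul_le_mul_of_nonneg_right (min_le_left _ _) (sq_nonneg _)
  have hn2 : (2:ℝ) ≤ (n:ℝ) := by exact_mod_cast hn
  have hn0 : (0:ℝ) < n := by linarith
  set c : ℝ := 2*(n:ℝ)*((n:ℝ)+1) with hc
  have hc0 : 0 < c := by rw [hc]; positivity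
  have hc12 : 12 ≤ c := by rw [hc]; nlinarith
  set η : ℝ := Real.sqrt δ / c with hη
  have hsq : Real.sqrt δ ^ 2 = δ := Real.sq_sqrt hδpos.le
  have hsqle : Real.sqrt δ ≤ 1 := by
    nlinarith [Real.sqrt_nonneg δ]
  have hηpos : 0 < η := div_pos (Real.sqrt_pos.mpr hδpos) hc0
  have hη1 : η ≤ 1 := by
    rw [hη, div_le_one hc0]
    linarith
  set ρ : ℝ := max (Real.sqrt (1 - η^2)) (1/2) with hρ
  have hρ0 : (0:ℝ) ≤ ρ := le_trans (by norm_num) (le_max_right _ _)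
  have hρ1 : ρ < 1 := by
    refine max_lt ?_ (by norm_num)
    have h1 : Real.sqrt (1 - η^2) < Real.sqrt 1 := by
      apply Real.sqrt_lt_sqrt (by nlinarith) (by nlinarith)
    rwa [Real.sqrt_one] at h1
  -- unit-ball bound
  have hunit : ∀ z : H, ‖z‖ ≤ 1 → ‖T z‖ ≤ ρ := by
    intro z hz1
    set u := Q z with hu
    have huM : u ∈ (∑ j, N j).topologicalClosure := proj_mem hQ.2.2 z
    have hu1 : ‖u‖ ≤ 1 := le_trans (proj_contr hQ.1 hQ.2.1 hQ.2.2 z) hz1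
    have hTz : T z = app P (List.finRange n) u := by rw [hT, T_apply, hu]
    by_cases hcase : ∃ (a : List (Fin n)) (i : Fin n) (b : List (Fin n)), List.finRange n = a ++ i :: b ∧
        η ≤ ‖app P b u - P i (app P b u)‖
    · obtain ⟨a, i, b, hl, hd⟩ := hcase
      have hG := lemG hP a b i u η hηpos.le hd
      rw [← hl] at hG
      have h2 : ‖T z‖^2 ≤ 1 - η^2 := by
        rw [hTz]
        nlinarith [norm_nonneg u]
      have h3 : ‖T z‖ ≤ Real.sqrt (1 - η^2) := by
        have h4 := Real.sqrt_le_sqrt h2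
        rwa [Real.sqrt_sq (norm_nonneg _)] at h4
      exact le_trans h3 (le_max_left _ _)
    · push_neg at hcase
      have hdall : ∀ i : Fin n, ‖u - P i u‖ ≤ ((n:ℝ)+1) * η := by
        intro i
        obtain ⟨a, b, hl⟩ := List.append_of_mem (List.mem_finRange i)
        have hb : ∀ a' j b', b = a' ++ j :: b' →
            ‖app P b' u - P j (app P b' u)‖ < η := by
          intro a' j b' hb'
          exact hcase (a ++ i :: a') j b' (by rw [hl, hb']; simp)
        have hF : ‖u - app P b u‖ ≤ b.length * η := lemF hP b u η hb
        have hblen : b.length ≤ n := by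
          have hlen := congrArg List.length hl
          simp [List.length_finRange] at hlen
          omega
        have hblen' : (b.length : ℝ) ≤ (n:ℝ) := by exact_mod_cast hblen
        have hdi : ‖u - P i u‖ ≤ ‖u - P i (app P b u)‖ :=
          proj_dist_min (hP i).1 (hP i).2.1 (hP i).2.2 u (proj_mem (hP i).2.2 _)
        have h2 : ‖u - P i (app P b u)‖
            ≤ ‖u - app P b u‖ + ‖app P b u - P i (app P b u)‖ :=
          norm_sub_le_norm_sub_add_norm_sub _ _ _
        have h3 := hcase a i b hl
        have h4 : (b.length : ℝ) * η ≤ (n:ℝ) * η :=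
          mul_le_mul_of_nonneg_right hblen' hηpos.le
        calc ‖u - P i u‖ ≤ ‖u - P i (app P b u)‖ := hdi
          _ ≤ ‖u - app P b u‖ + ‖app P b u - P i (app P b u)‖ := h2
          _ ≤ (b.length : ℝ) * η + η := add_le_add hF h3.le
          _ ≤ (n:ℝ) * η + η := by linarith
          _ = ((n:ℝ)+1) * η := by ring
      have hsum : ∑ i, ‖u - P i u‖^2 ≤ (n:ℝ) * (((n:ℝ)+1)*η)^2 := by
        calc ∑ i, ‖u - P i u‖^2 ≤ ∑ _i : Fin n, (((n:ℝ)+1)*η)^2 := by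
              refine Finset.sum_le_sum (fun i _ => ?_)
              exact pow_le_pow_left₀ (norm_nonneg _) (hdall i) 2
          _ = (n:ℝ) * (((n:ℝ)+1)*η)^2 := by
              rw [Finset.sum_const, Finset.card_univ, Fintype.card_fin, nsmul_eq_mul]
      have hη2 : η^2 = δ / c^2 := by rw [hη, div_pow, hsq]
      have hkey : (n:ℝ) * (((n:ℝ)+1)*η)^2 = δ/(4*(n:ℝ)) := by
        have he : (n:ℝ) * (((n:ℝ)+1)*η)^2 = ((n:ℝ)*((n:ℝ)+1)^2) * η^2 := by ring
        rw [he, hη2, hc]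
        field_simp
        ring
      have hstaru := hstar' u huM
      have hu2 : ‖u‖^2 ≤ 1/(4*(n:ℝ)) := by
        have h5 : δ * ‖u‖^2 ≤ δ/(4*(n:ℝ)) := by
          rw [← hkey]
          exact le_trans hstaru hsum
        have h6 : δ/(4*(n:ℝ)) = δ * (1/(4*(n:ℝ))) := by ring
        rw [h6] at h5
        exact le_of_mul_le_mul_left h5 hδpos
      have hu14 : ‖u‖^2 ≤ 1/4 := by
        have h14 : 1/(4*(n:ℝ)) ≤ 1/4 := by
          rw [div_le_div_iff₀ (by positivity) (by norm_num)]
          linarith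
        linarith
      have hu12 : ‖u‖ ≤ 1/2 := by nlinarith [norm_nonneg u]
      calc ‖T z‖ = ‖app P (List.finRange n) u‖ := by rw [hTz]
        _ ≤ ‖u‖ := app_contr hP _ u
        _ ≤ 1/2 := hu12
        _ ≤ ρ := le_max_right _ _
  -- conclude via operator norm
  have hb : ∀ z : H, ‖T z‖ ≤ ρ * ‖z‖ := by
    intro z
    rcases eq_or_ne z 0 with rfl | hz
    · simp
    · have hz0 : 0 < ‖z‖ := norm_pos_iff.mpr hz
      have hnz : ‖((‖z‖ : ℂ))⁻¹ • z‖ = 1 := by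
        rw [norm_smul, norm_inv]
        simp only [Complex.norm_real, Real.norm_eq_abs, abs_norm]
        rw [inv_mul_cancel₀ (norm_ne_zero_iff.mpr hz)]
      have h1 : ‖T (((‖z‖ : ℂ))⁻¹ • z)‖ ≤ ρ := hunit _ (le_of_eq hnz)
      rw [map_smul, norm_smul, norm_inv] at h1
      simp only [Complex.norm_real, Real.norm_eq_abs, abs_norm] at h1
      set w := ‖T z‖
      set r := ‖z‖
      rw [show r⁻¹ * w = w / r from by ring, div_le_iff₀ hz0] at h1
      linarith
  have hTle : ‖T‖ ≤ ρ := T.opNorm_le_bound hρ0 hb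
  exact lt_of_le_of_lt hTle hρ1

end Main

/-- For `n ≥ 2` closed subspaces `N i` with `P i` the orthogonal projection
onto `(N i)ᗮ` and `Q` the orthogonal projection onto the closure `N` of `N₁ + ⋯ + Nₙ`:
`c(N₁,…,Nₙ) < 1 ↔ ‖P₁ P₂ ⋯ Pₙ Q‖ < 1`. -/
theorem stmt_7 {H : Type*} [NormedAddCommGroup H] [InnerProductSpace ℂ H] [CompleteSpace H]
    {n : ℕ} (hn : 2 ≤ n) (N : Fin n → Submodule ℂ H)
    (hNc : ∀ i, IsClosed ((N i : Set H)))
    (P : Fin n → H →L[ℂ] H)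
    (hP : ∀ i, IsSelfAdjoint (P i) ∧ IsIdempotentElem (P i) ∧
      LinearMap.range (P i : H →ₗ[ℂ] H) = (N i)ᗮ)
    (Q : H →L[ℂ] H)
    (hQ : IsSelfAdjoint Q ∧ IsIdempotentElem Q ∧
      LinearMap.range (Q : H →ₗ[ℂ] H) = (∑ j, N j).topologicalClosure) :
    cosine N < 1 ↔ ‖(List.ofFn P).prod * Q‖ < 1 := by
  constructor
  · intro hc
    have hstar : StarCond P ((∑ j, N j).topologicalClosure) := by
      by_contra h
      exact absurd hc (not_lt.mpr (lemB1 hn N hNc P hP h))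
    exact lemA1 hn N P hP Q hQ hstar
  · intro hT
    exact lemB2 hn N P hP (lemA2 hn N P hP Q hQ hT)
end

section
/- Let N_1, …, N_n be closed subspaces of a complex Hilbert space H with orthogonal projections P_{N_1}, …, P_{N_n}. Then the family {N_1, …, N_n} is perpendicular, i.e. N_i ∩ (N_i ∩ N_j)^⊥ is orthogonal to N_j ∩ (N_i ∩ N_j)^⊥ for all 1 ≤ i < j ≤ n, if and only if the projections P_{N_1}, …, P_{N_n} pairwise commute. -/
local notation "⟪" x ", " y "⟫" => @inner ℂ _ _ x y

section aux

variable {H : Type*} [NormedAddCommGroup H] [InnerProductSpace ℂ H] [CompleteSpace H]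

private lemma proj_mem_s10 {A : Submodule ℂ H} {P : H →L[ℂ] H}
    (hr : LinearMap.range (P : H →ₗ[ℂ] H) = A) (z : H) : P z ∈ A := hr ▸ ⟨z, rfl⟩

private lemma proj_fix_s10 {A : Submodule ℂ H} {P : H →L[ℂ] H}
    (hid : IsIdempotentElem P) (hr : LinearMap.range (P : H →ₗ[ℂ] H) = A) {z : H} (hz : z ∈ A) : P z = z := by
  rw [← hr] at hz
  obtain ⟨u, rfl⟩ := hz
  have := congrArg (fun T : H →L[ℂ] H => T u) hid
  simpa using this

private lemma proj_ker {A : Submodule ℂ H} {P : H →L[ℂ] H}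
    (hsa : IsSelfAdjoint P) (hid : IsIdempotentElem P) (hr : LinearMap.range (P : H →ₗ[ℂ] H) = A)
    {v : H} (hv : v ∈ Aᗮ) : P v = 0 := by
  have h0 : ⟪P v, P v⟫ = 0 := by
    have : ⟪P v, P v⟫ = ⟪v, P (P v)⟫ := hsa.isSymmetric v (P v)
    rw [this]
    have hPP : P (P v) = P v := proj_fix_s10 hid hr (proj_mem_s10 hr v)
    rw [hPP]
    exact (Submodule.mem_orthogonal' _ _).mp hv _ (proj_mem_s10 hr v)
  exact inner_self_eq_zero.mp h0

private lemma proj_sub_mem {A : Submodule ℂ H} {P : H →L[ℂ] H}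
    (hsa : IsSelfAdjoint P) (hid : IsIdempotentElem P) (hr : LinearMap.range (P : H →ₗ[ℂ] H) = A)
    (z : H) : z - P z ∈ Aᗮ := by
  rw [Submodule.mem_orthogonal]
  intro w hw
  have : ⟪w, P z⟫ = ⟪P w, z⟫ := (hsa.isSymmetric w z).symm
  rw [inner_sub_right, this, proj_fix_s10 hid hr hw, sub_self]

private lemma proj_congr {K L : Submodule ℂ H} [Submodule.HasOrthogonalProjection K]
    [Submodule.HasOrthogonalProjection L] (h : K = L) (z : H) :
    (Submodule.orthogonalProjection K z : H) = Submodule.orthogonalProjection L z := by subst h; rfl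

private lemma key {A B : Submodule ℂ H} [Submodule.HasOrthogonalProjection (A ⊓ B)]
    {P Q : H →L[ℂ] H}
    (hPsa : IsSelfAdjoint P) (hPid : IsIdempotentElem P) (hPr : LinearMap.range (P : H →ₗ[ℂ] H) = A)
    (hQsa : IsSelfAdjoint Q) (hQid : IsIdempotentElem Q) (hQr : LinearMap.range (Q : H →ₗ[ℂ] H) = B)
    (hperp : ∀ x ∈ A ⊓ (A ⊓ B)ᗮ, ∀ y ∈ B ⊓ (A ⊓ B)ᗮ, ⟪x, y⟫ = 0) (z : H) :
    P (Q z) = Submodule.orthogonalProjection (A ⊓ B) z := by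
  set M := A ⊓ B with hM
  set u : H := (Submodule.orthogonalProjection M (Q z) : H) with hu_def
  have hu : u ∈ M := SetLike.coe_mem _
  set v : H := Q z - u with hv_def
  have hvM : v ∈ Mᗮ := Submodule.sub_starProjection_mem_orthogonal (K := M) (Q z)
  have hvB : v ∈ B := B.sub_mem (proj_mem_s10 hQr z) hu.2
  -- v ⟂ A
  have hvA : v ∈ Aᗮ := by
    rw [Submodule.mem_orthogonal]
    intro x hx
    set m : H := (Submodule.orthogonalProjection M x : H) with hm_def
    have hmM : m ∈ M := SetLike.coe_mem _
    have hwM : x - m ∈ Mᗮ := Submodule.sub_starProjection_mem_orthogonal (K := M) x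
    have hwA : x - m ∈ A := A.sub_mem hx hmM.1
    have h1 : ⟪x - m, v⟫ = 0 := hperp _ ⟨hwA, hwM⟩ _ ⟨hvB, hvM⟩
    have h2 : ⟪m, v⟫ = 0 := (Submodule.mem_orthogonal _ _).mp hvM _ hmM
    have : x = (x - m) + m := by abel
    rw [this, inner_add_left, h1, h2, add_zero]
  have hPv : P v = 0 := proj_ker hPsa hPid hPr hvA
  have hQz : Q z = u + v := by rw [hv_def]; abel
  have h3 : P (Q z) = u := by
    rw [hQz, map_add, hPv, add_zero, proj_fix_s10 hPid hPr hu.1]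
  -- Submodule.orthogonalProjection M (Q z) = Submodule.orthogonalProjection M z
  have hzQ : z - Q z ∈ Mᗮ := by
    refine Submodule.orthogonal_le ?_ (proj_sub_mem hQsa hQid hQr z)
    exact inf_le_right
  have h4 : (Submodule.orthogonalProjection M z : H) = u := by
    have : Submodule.orthogonalProjection M z - Submodule.orthogonalProjection M (Q z)
        = Submodule.orthogonalProjection M (z - Q z) := by rw [map_sub]
    have h5 : Submodule.orthogonalProjection M (z - Q z) = 0 :=
      Submodule.orthogonalProjectionOnto_apply_of_mem_orthogonal hzQ
    have h6 : Submodule.orthogonalProjection M z = Submodule.orthogonalProjection M (Q z) := by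
      rw [← sub_eq_zero, this, h5]
    rw [h6]
  rw [h3, h4]

private lemma key_comm {A B : Submodule ℂ H}
    (hA : IsClosed (A : Set H)) (hB : IsClosed (B : Set H))
    {P Q : H →L[ℂ] H}
    (hPsa : IsSelfAdjoint P) (hPid : IsIdempotentElem P) (hPr : LinearMap.range (P : H →ₗ[ℂ] H) = A)
    (hQsa : IsSelfAdjoint Q) (hQid : IsIdempotentElem Q) (hQr : LinearMap.range (Q : H →ₗ[ℂ] H) = B)
    (hperp : ∀ x ∈ A ⊓ (A ⊓ B)ᗮ, ∀ y ∈ B ⊓ (A ⊓ B)ᗮ, ⟪x, y⟫ = 0) :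
    P * Q = Q * P := by
  haveI : CompleteSpace (A ⊓ B : Submodule ℂ H) := by
    have h : IsClosed ((A ⊓ B : Submodule ℂ H) : Set H) := by
      rw [Submodule.coe_inf]; exact hA.inter hB
    exact h.completeSpace_coe
  haveI : Submodule.HasOrthogonalProjection (B ⊓ A : Submodule ℂ H) := by
    rw [inf_comm]; infer_instance
  have hperp' : ∀ x ∈ B ⊓ (B ⊓ A)ᗮ, ∀ y ∈ A ⊓ (B ⊓ A)ᗮ, ⟪x, y⟫ = 0 := by
    intro x hx y hy
    rw [inf_comm B A] at hx hy
    exact inner_eq_zero_symm.mp (hperp y hy x hx)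
  ext z
  rw [ContinuousLinearMap.mul_apply, ContinuousLinearMap.mul_apply,
    key hPsa hPid hPr hQsa hQid hQr hperp z,
    key hQsa hQid hQr hPsa hPid hPr hperp' z]
  exact proj_congr (inf_comm A B) z

end aux

/-- A family `N₁, …, Nₙ` of closed subspaces of a complex Hilbert space is
perpendicular (i.e. `Nᵢ ⊓ (Nᵢ ⊓ Nⱼ)ᗮ ⟂ Nⱼ ⊓ (Nᵢ ⊓ Nⱼ)ᗮ` for all `i < j`) if and only if
the orthogonal projections `P₁, …, Pₙ` pairwise commute. -/
theorem stmt_10 {H : Type*} [NormedAddCommGroup H] [InnerProductSpace ℂ H] [CompleteSpace H]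
    {n : ℕ} (N : Fin n → Submodule ℂ H) (hNc : ∀ i, IsClosed ((N i : Set H)))
    (P : Fin n → H →L[ℂ] H)
    (hP : ∀ i, IsSelfAdjoint (P i) ∧ IsIdempotentElem (P i) ∧ LinearMap.range (P i : H →ₗ[ℂ] H) = N i) :
    (∀ i j : Fin n, i < j →
        ∀ x ∈ N i ⊓ (N i ⊓ N j)ᗮ, ∀ y ∈ N j ⊓ (N i ⊓ N j)ᗮ, (inner ℂ x y : ℂ) = 0) ↔
      (∀ i j : Fin n, P i * P j = P j * P i) := by
  constructor
  · intro h i j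
    rcases lt_trichotomy i j with hij | rfl | hij
    · exact key_comm (hNc i) (hNc j) (hP i).1 (hP i).2.1 (hP i).2.2
        (hP j).1 (hP j).2.1 (hP j).2.2 (h i j hij)
    · rfl
    · exact (key_comm (hNc j) (hNc i) (hP j).1 (hP j).2.1 (hP j).2.2
        (hP i).1 (hP i).2.1 (hP i).2.2 (h j i hij)).symm
  · intro h i j _hij x hx y hy
    have hxi : P i x = x := proj_fix_s10 (hP i).2.1 (hP i).2.2 hx.1
    have hyj : P j y = y := proj_fix_s10 (hP j).2.1 (hP j).2.2 hy.1
    have hw : P i (P j y) ∈ N i ⊓ N j := by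
      constructor
      · exact proj_mem_s10 (hP i).2.2 _
      · have : P i (P j y) = P j (P i y) := by
          have := congrArg (fun T : H →L[ℂ] H => T y) (h i j)
          simpa using this
        rw [this]
        exact proj_mem_s10 (hP j).2.2 _
    calc ⟪x, y⟫ = ⟪P i x, P j y⟫ := by rw [hxi, hyj]
      _ = ⟪x, P i (P j y)⟫ := (hP i).1.isSymmetric x (P j y)
      _ = 0 := (Submodule.mem_orthogonal' _ _).mp hx.2 _ hw
end

section
/- Let n ≥ 2 and let N_1, …, N_n be closed subspaces of a complex Hilbert space H such that c(N_1, …, N_n) = 0. Then the family {N_1, …, N_n} is perpendicular, i.e. N_i ∩ (N_i ∩ N_j)^⊥ is orthogonal to N_j ∩ (N_i ∩ N_j)^⊥ for all 1 ≤ i < j ≤ n (equivalently, the orthogonal projections P_{N_1}, …, P_{N_n} pairwise commute). -/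
/-- If `n ≥ 2` closed subspaces `N₁, …, Nₙ` of a complex Hilbert space
satisfy `c(N₁, …, Nₙ) = 0`, then the family is perpendicular: for all `i < j`, the subspaces
`Nᵢ ⊓ (Nᵢ ⊓ Nⱼ)ᗮ` and `Nⱼ ⊓ (Nᵢ ⊓ Nⱼ)ᗮ` are mutually orthogonal. -/
theorem stmt_11 {H : Type*} [NormedAddCommGroup H] [InnerProductSpace ℂ H] [CompleteSpace H]
    {n : ℕ} (hn : 2 ≤ n) (N : Fin n → Submodule ℂ H)
    (hNc : ∀ i, IsClosed ((N i : Set H)))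
    (hc : cosine N = 0) :
    ∀ i j : Fin n, i < j →
      ∀ x ∈ N i ⊓ (N i ⊓ N j)ᗮ, ∀ y ∈ N j ⊓ (N i ⊓ N j)ᗮ, (inner ℂ x y : ℂ) = 0 := by
  intro i j hij u hu v hv
  have hij' : i ≠ j := hij.ne
  have hn1 : (1 : ℝ) ≤ (n : ℝ) - 1 := by
    have : (2 : ℝ) ≤ (n : ℝ) := by exact_mod_cast hn
    linarith
  have hn0 : (n : ℝ) - 1 ≠ 0 := by linarith
  set S : Set ℝ := {c : ℝ | ∃ x : Fin n → H,
    (∀ i, x i ∈ (N i)ᗮ ⊓ (∑ j, N j).topologicalClosure) ∧ x ≠ 0 ∧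
    c = (1 / ((n : ℝ) - 1)) *
        (∑ i, ∑ j ∈ Finset.univ.erase i, ((inner ℂ (x i) (x j) : ℂ)).re) /
        (∑ i, ‖x i‖ ^ 2)} with hSdef
  have hS : cosine N = sSup S := rfl
  -- denominator is positive for nonzero tuples
  have hden : ∀ x : Fin n → H, x ≠ 0 → 0 < ∑ k, ‖x k‖ ^ 2 := by
    intro x hx
    obtain ⟨k, hk⟩ := Function.ne_iff.mp hx
    have h1 : (0 : ℝ) < ‖x k‖ ^ 2 := by
      have := norm_pos_iff.mpr hk
      positivity
    have h2 : ‖x k‖ ^ 2 ≤ ∑ l, ‖x l‖ ^ 2 :=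
      Finset.single_le_sum (f := fun l => ‖x l‖ ^ 2) (fun l _ => by positivity)
        (Finset.mem_univ k)
    linarith
  -- the set S is bounded above by 1
  have hbdd : BddAbove S := by
    refine ⟨1, fun c hc' => ?_⟩
    obtain ⟨x, hx1, hx2, rfl⟩ := hc'
    have hd := hden x hx2
    have e1 : ∀ k : Fin n, ∑ l ∈ Finset.univ.erase k, ‖x l‖ ^ 2
        = (∑ l, ‖x l‖ ^ 2) - ‖x k‖ ^ 2 := by
      intro k
      have h := Finset.sum_erase_add Finset.univ (fun l => ‖x l‖ ^ 2) (Finset.mem_univ k)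
      linarith
    have e2 : ∀ k : Fin n, ((Finset.univ.erase k).card : ℝ) = (n : ℝ) - 1 := by
      intro k
      rw [Finset.card_erase_of_mem (Finset.mem_univ k), Finset.card_univ, Fintype.card_fin]
      have h1n : 1 ≤ n := le_trans one_le_two hn
      push_cast [Nat.cast_sub h1n]
      ring
    have hnum : (∑ k, ∑ l ∈ Finset.univ.erase k, ((inner ℂ (x k) (x l) : ℂ)).re)
        ≤ ((n : ℝ) - 1) * (∑ k, ‖x k‖ ^ 2) := by
      have step1 : (∑ k, ∑ l ∈ Finset.univ.erase k, ((inner ℂ (x k) (x l) : ℂ)).re)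
          ≤ ∑ k, ∑ l ∈ Finset.univ.erase k, (‖x k‖ ^ 2 + ‖x l‖ ^ 2) / 2 := by
        apply Finset.sum_le_sum
        intro k _
        apply Finset.sum_le_sum
        intro l _
        have h1 : ((inner ℂ (x k) (x l) : ℂ)).re ≤ ‖x k‖ * ‖x l‖ := by
          simpa using re_inner_le_norm (𝕜 := ℂ) (x k) (x l)
        nlinarith [sq_nonneg (‖x k‖ - ‖x l‖)]
      have step2 : (∑ k, ∑ l ∈ Finset.univ.erase k, (‖x k‖ ^ 2 + ‖x l‖ ^ 2) / 2)
          = ((n : ℝ) - 1) * (∑ k, ‖x k‖ ^ 2) := by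
        have inner_eq : ∀ k : Fin n, ∑ l ∈ Finset.univ.erase k, (‖x k‖ ^ 2 + ‖x l‖ ^ 2) / 2
            = (((n : ℝ) - 1) * ‖x k‖ ^ 2 + ((∑ l, ‖x l‖ ^ 2) - ‖x k‖ ^ 2)) / 2 := by
          intro k
          rw [← Finset.sum_div, Finset.sum_add_distrib, Finset.sum_const, e1 k,
            nsmul_eq_mul, e2 k]
        rw [Finset.sum_congr rfl (fun k _ => inner_eq k), ← Finset.sum_div,
          Finset.sum_add_distrib, Finset.sum_sub_distrib, Finset.sum_const,
          ← Finset.mul_sum, Finset.card_univ, Fintype.card_fin, nsmul_eq_mul]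
        ring
      linarith [step1, step2.le, step2.ge]
    rw [div_le_one hd]
    have h3 : (0 : ℝ) ≤ 1 / ((n : ℝ) - 1) := by positivity
    calc 1 / ((n : ℝ) - 1) * (∑ k, ∑ l ∈ Finset.univ.erase k, ((inner ℂ (x k) (x l) : ℂ)).re)
        ≤ 1 / ((n : ℝ) - 1) * (((n : ℝ) - 1) * (∑ k, ‖x k‖ ^ 2)) :=
          mul_le_mul_of_nonneg_left hnum h3
      _ = ∑ k, ‖x k‖ ^ 2 := by field_simp
  -- Key orthogonality: (N i)ᗮ ⊓ Ncl ⊥ (N j)ᗮ ⊓ Ncl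
  have key : ∀ a ∈ (N i)ᗮ ⊓ (∑ l, N l).topologicalClosure,
      ∀ b ∈ (N j)ᗮ ⊓ (∑ l, N l).topologicalClosure, (inner ℂ a b : ℂ) = 0 := by
    intro a ha b hb
    by_contra hz
    set z : ℂ := inner ℂ a b with hzdef
    have hb0 : b ≠ 0 := by rintro rfl; exact hz (inner_zero_right a)
    set x : Fin n → H := fun k =>
      if k = i then a else if k = j then (starRingEnd ℂ z) • b else 0 with hxdef
    have hxi : x i = a := by simp [hxdef]
    have hxj : x j = (starRingEnd ℂ z) • b := by simp [hxdef, hij'.symm]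
    have hxo : ∀ k, k ≠ i → k ≠ j → x k = 0 := by
      intro k h1 h2; simp [hxdef, h1, h2]
    have hx2 : x ≠ 0 := by
      intro h
      have hxj0 : x j = 0 := congrFun h j
      rw [hxj] at hxj0
      rcases smul_eq_zero.mp hxj0 with h' | h'
      · exact hz (by simpa using congrArg (starRingEnd ℂ) h')
      · exact hb0 h'
    have hx1 : ∀ k, x k ∈ (N k)ᗮ ⊓ (∑ l, N l).topologicalClosure := by
      intro k
      by_cases h1 : k = i
      · subst h1; rw [hxi]; exact ha
      · by_cases h2 : k = j
        · subst h2; rw [hxj]; exact Submodule.smul_mem _ _ hb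
        · rw [hxo k h1 h2]; exact Submodule.zero_mem _
    have hmem : (1 / ((n : ℝ) - 1)) *
        (∑ k, ∑ l ∈ Finset.univ.erase k, ((inner ℂ (x k) (x l) : ℂ)).re) /
        (∑ k, ‖x k‖ ^ 2) ∈ S := ⟨x, hx1, hx2, rfl⟩
    have hvanish : ∀ k ∈ Finset.univ, k ∉ ({i, j} : Finset (Fin n)) →
        (∑ l ∈ Finset.univ.erase k, ((inner ℂ (x k) (x l) : ℂ)).re) = 0 := by
      intro k _ hk
      simp only [Finset.mem_insert, Finset.mem_singleton, not_or] at hk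
      rw [hxo k hk.1 hk.2]
      simp
    have hFi : ∑ l ∈ Finset.univ.erase i, ((inner ℂ (x i) (x l) : ℂ)).re
        = Complex.normSq z := by
      rw [Finset.sum_eq_single_of_mem j
        (Finset.mem_erase.mpr ⟨hij'.symm, Finset.mem_univ j⟩)]
      · rw [hxi, hxj, inner_smul_right, ← hzdef, mul_comm, Complex.mul_conj]
        simp
      · intro l hl hlj
        have hli : l ≠ i := (Finset.mem_erase.mp hl).1
        rw [hxo l hli hlj, inner_zero_right]
        simp
    have hFj : ∑ l ∈ Finset.univ.erase j, ((inner ℂ (x j) (x l) : ℂ)).re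
        = Complex.normSq z := by
      rw [Finset.sum_eq_single_of_mem i
        (Finset.mem_erase.mpr ⟨hij', Finset.mem_univ i⟩)]
      · have hba : (inner ℂ b a : ℂ) = starRingEnd ℂ z := by rw [hzdef, ← inner_conj_symm]
        rw [hxi, hxj, inner_smul_left, hba, Complex.conj_conj, Complex.mul_conj]
        simp
      · intro l hl hli
        have hlj : l ≠ j := (Finset.mem_erase.mp hl).1
        rw [hxo l hli hlj, inner_zero_right]
        simp
    have hnum : (∑ k, ∑ l ∈ Finset.univ.erase k, ((inner ℂ (x k) (x l) : ℂ)).re)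
        = 2 * Complex.normSq z := by
      rw [← Finset.sum_subset (Finset.subset_univ ({i, j} : Finset (Fin n))) hvanish,
        Finset.sum_pair hij', hFi, hFj]
      ring
    have hle : (1 / ((n : ℝ) - 1)) *
        (∑ k, ∑ l ∈ Finset.univ.erase k, ((inner ℂ (x k) (x l) : ℂ)).re) /
        (∑ k, ‖x k‖ ^ 2) ≤ 0 := by
      have := le_csSup hbdd hmem
      rwa [← hS, hc] at this
    rw [hnum] at hle
    have h1 : 0 < Complex.normSq z := Complex.normSq_pos.mpr hz
    have h2 : 0 < ∑ k, ‖x k‖ ^ 2 := hden x hx2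
    have h3 : 0 < 1 / ((n : ℝ) - 1) := by positivity
    have : 0 < (1 / ((n : ℝ) - 1)) * (2 * Complex.normSq z) / (∑ k, ‖x k‖ ^ 2) :=
      div_pos (mul_pos h3 (by linarith)) h2
    linarith
  -- Step B: deduce the perpendicularity
  haveI : CompleteSpace (N i) := (hNc i).completeSpace_coe
  haveI : CompleteSpace (N j) := (hNc j).completeSpace_coe
  have hle_cl : ∀ k : Fin n, N k ≤ (∑ l, N l).topologicalClosure := fun k =>
    le_trans (Finset.single_le_sum (fun l _ => zero_le) (Finset.mem_univ k))
      (Submodule.le_topologicalClosure _)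
  obtain ⟨hui, huperp⟩ := Submodule.mem_inf.mp hu
  obtain ⟨hvj, _⟩ := Submodule.mem_inf.mp hv
  set Pv : H := (Submodule.orthogonalProjection (N i) v : H) with hPvdef
  have hPvi : Pv ∈ N i := (Submodule.orthogonalProjection (N i) v).2
  have hw_perp : v - Pv ∈ (N i)ᗮ := Submodule.sub_starProjection_mem_orthogonal (K := N i) v
  have hw_cl : v - Pv ∈ (∑ l, N l).topologicalClosure :=
    Submodule.sub_mem _ (hle_cl j hvj) (hle_cl i hPvi)
  set Qw : H := (Submodule.orthogonalProjection (N j) (v - Pv) : H) with hQwdef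
  have hQwj : Qw ∈ N j := (Submodule.orthogonalProjection (N j) (v - Pv)).2
  have hr_perp : (v - Pv) - Qw ∈ (N j)ᗮ := Submodule.sub_starProjection_mem_orthogonal (K := N j) _
  have hr_cl : (v - Pv) - Qw ∈ (∑ l, N l).topologicalClosure :=
    Submodule.sub_mem _ hw_cl (hle_cl j hQwj)
  have h0 : (inner ℂ (v - Pv) ((v - Pv) - Qw) : ℂ) = 0 :=
    key _ (Submodule.mem_inf.mpr ⟨hw_perp, hw_cl⟩) _
      (Submodule.mem_inf.mpr ⟨hr_perp, hr_cl⟩)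
  have hr0 : (v - Pv) - Qw = 0 := by
    have h1 : (inner ℂ Qw ((v - Pv) - Qw) : ℂ) = 0 :=
      (Submodule.mem_orthogonal _ _).mp hr_perp Qw hQwj
    have h2 : (inner ℂ ((v - Pv) - Qw) ((v - Pv) - Qw) : ℂ) = 0 := by
      rw [inner_sub_left, h0, h1, sub_zero]
    exact inner_self_eq_zero.mp h2
  have hwj : v - Pv ∈ N j := by
    have heq : v - Pv = Qw := by rwa [sub_eq_zero] at hr0
    rw [heq]; exact hQwj
  have hPvj : Pv ∈ N j := by
    have heq : Pv = v - (v - Pv) := by abel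
    rw [heq]; exact Submodule.sub_mem _ hvj hwj
  have h2 : (inner ℂ u Pv : ℂ) = 0 :=
    (Submodule.mem_orthogonal' _ _).mp huperp Pv (Submodule.mem_inf.mpr ⟨hPvi, hPvj⟩)
  have h3 : (inner ℂ u (v - Pv) : ℂ) = 0 :=
    (Submodule.mem_orthogonal _ _).mp hw_perp u hui
  have h4 : (inner ℂ u v : ℂ) = inner ℂ u Pv + inner ℂ u (v - Pv) := by
    rw [← inner_add_right]
    congr 1
    abel
  rw [h4, h2, h3, add_zero]
end

section
/- Let P_1, …, P_n be pairwise commuting orthogonal projections on a complex Hilbert space H, and let c_1, …, c_n be nonnegative real numbers. Then the positive operator c_1 P_1 + ⋯ + c_n P_n has closed range. -/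
open Finset

/-- Product of two "diagonal" sums over an orthogonal family of idempotents. -/
private lemma diag_mul {A : Type*} [Ring A] [Algebra ℂ A] {ι : Type} [Fintype ι]
    (R : ι → A) (hidem : ∀ j, IsIdempotentElem (R j))
    (horth : ∀ j k, j ≠ k → R j * R k = 0) (u v : ι → ℂ) :
    (∑ j, u j • R j) * (∑ j, v j • R j) = ∑ j, (u j * v j) • R j := by
  rw [Finset.sum_mul_sum]
  refine Finset.sum_congr rfl fun j _ => ?_
  rw [Finset.sum_eq_single_of_mem j (Finset.mem_univ j)]
  · rw [smul_mul_smul_comm, hidem j]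
  · intro k _ hk
    rw [smul_mul_smul_comm, horth j k (Ne.symm hk), smul_zero]

/-- Key decomposition: any linear combination of pairwise commuting idempotents can be
rewritten as a linear combination of pairwise orthogonal idempotents. -/
private lemma key_s13 {A : Type*} [Ring A] [Algebra ℂ A] :
    ∀ (n : ℕ) (P : Fin n → A),
      (∀ i, IsIdempotentElem (P i)) →
      (∀ i j, P i * P j = P j * P i) →
      ∀ c : Fin n → ℂ,
      ∃ (ι : Type) (_ : Fintype ι) (R : ι → A) (d : ι → ℂ),
        (∀ j, IsIdempotentElem (R j)) ∧
        (∀ j k, j ≠ k → R j * R k = 0) ∧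
        (∀ a : A, (∀ i, a * P i = P i * a) → ∀ j, a * R j = R j * a) ∧
        (∑ i, c i • P i = ∑ j, d j • R j) := by
  intro n
  induction n with
  | zero =>
    intro P _ _ c
    exact ⟨Empty, inferInstance, fun j => j.elim, fun j => j.elim,
      fun j => j.elim, fun j => j.elim, fun a _ j => j.elim, by simp⟩
  | succ n ih =>
    intro P hP hcomm c
    obtain ⟨ι, _, R, d, hidem, horth, hcommut, hsum⟩ :=
      ih (fun i => P i.castSucc) (fun i => hP i.castSucc)
        (fun i j => hcomm i.castSucc j.castSucc) (fun i => c i.castSucc)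
    set p := P (Fin.last n) with hp
    have hpidem : p * p = p := hP (Fin.last n)
    have hpR : ∀ j, p * R j = R j * p := by
      intro j
      exact hcommut p (fun i => hcomm (Fin.last n) i.castSucc) j
    set E : A := ∑ j, R j with hE
    have hpE : p * E = E * p := by
      simp only [hE, Finset.mul_sum, Finset.sum_mul]
      exact Finset.sum_congr rfl fun j _ => hpR j
    have hRE : ∀ j, R j * E = R j := by
      intro j
      rw [hE, Finset.mul_sum, Finset.sum_eq_single_of_mem j (Finset.mem_univ j)]
      · exact hidem j
      · intro k _ hk; exact horth j k (Ne.symm hk)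
    have hER : ∀ j, E * R j = R j := by
      intro j
      rw [hE, Finset.sum_mul, Finset.sum_eq_single_of_mem j (Finset.mem_univ j)]
      · exact hidem j
      · intro k _ hk; exact horth k j hk
    -- new family
    refine ⟨ι ⊕ ι ⊕ Unit, inferInstance,
      Sum.elim (fun j => R j * p) (Sum.elim (fun j => R j * (1 - p)) (fun _ => p * (1 - E))),
      Sum.elim (fun j => d j + c (Fin.last n)) (Sum.elim (fun j => d j) (fun _ => c (Fin.last n))),
      ?_, ?_, ?_, ?_⟩
    · rintro (j | j | _)
      · show R j * p * (R j * p) = R j * p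
        calc R j * p * (R j * p) = R j * (p * R j) * p := by noncomm_ring
          _ = R j * (R j * p) * p := by rw [hpR]
          _ = (R j * R j) * (p * p) := by noncomm_ring
          _ = R j * p := by rw [hidem j, hpidem]
      · show R j * (1 - p) * (R j * (1 - p)) = R j * (1 - p)
        have h1 : (1 - p) * R j = R j * (1 - p) := by
          rw [sub_mul, mul_sub, one_mul, mul_one, hpR]
        calc R j * (1 - p) * (R j * (1 - p)) = R j * ((1 - p) * R j) * (1 - p) := by noncomm_ring
          _ = R j * (R j * (1 - p)) * (1 - p) := by rw [h1]
          _ = (R j * R j) * ((1 - p) * (1 - p)) := by noncomm_ring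
          _ = R j * ((1 : A) - p - (p - p * p)) := by rw [hidem j]; noncomm_ring
          _ = R j * (1 - p) := by rw [hpidem, sub_self, sub_zero]
      · show p * (1 - E) * (p * (1 - E)) = p * (1 - E)
        have h1 : (1 - E) * p = p * (1 - E) := by
          rw [sub_mul, mul_sub, one_mul, mul_one, hpE]
        have hEidem : E * E = E := by
          rw [hE, Finset.sum_mul]
          exact Finset.sum_congr rfl fun j _ => hRE j
        calc p * (1 - E) * (p * (1 - E)) = p * ((1 - E) * p) * (1 - E) := by noncomm_ring
          _ = p * (p * (1 - E)) * (1 - E) := by rw [h1]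
          _ = (p * p) * ((1 - E) * (1 - E)) := by noncomm_ring
          _ = p * ((1 : A) - E - (E - E * E)) := by rw [hpidem]; noncomm_ring
          _ = p * (1 - E) := by rw [hEidem, sub_self, sub_zero]
    · rintro (j | j | _) (k | k | _) hne
      · have hjk : j ≠ k := fun h => hne (by rw [h])
        show R j * p * (R k * p) = 0
        calc R j * p * (R k * p) = R j * (p * R k) * p := by noncomm_ring
          _ = (R j * R k) * (p * p) := by rw [hpR]; noncomm_ring
          _ = 0 := by rw [horth j k hjk, zero_mul]
      · show R j * p * (R k * (1 - p)) = 0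
        rcases eq_or_ne j k with rfl | hjk
        · calc R j * p * (R j * (1 - p)) = R j * (p * R j) * (1 - p) := by noncomm_ring
            _ = (R j * R j) * (p * (1 - p)) := by rw [hpR]; noncomm_ring
            _ = (R j * R j) * (p - p * p) := by noncomm_ring
            _ = 0 := by rw [hpidem, sub_self, mul_zero]
        · calc R j * p * (R k * (1 - p)) = R j * (p * R k) * (1 - p) := by noncomm_ring
            _ = (R j * R k) * (p * (1 - p)) := by rw [hpR]; noncomm_ring
            _ = 0 := by rw [horth j k hjk, zero_mul]
      · show R j * p * (p * (1 - E)) = 0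
        calc R j * p * (p * (1 - E)) = R j * ((p * p) * (1 - E)) := by noncomm_ring
          _ = R j * (p - p * E) := by rw [hpidem]; noncomm_ring
          _ = R j * (p - E * p) := by rw [hpE]
          _ = R j * p - (R j * E) * p := by noncomm_ring
          _ = 0 := by rw [hRE, sub_self]
      · show R j * (1 - p) * (R k * p) = 0
        rcases eq_or_ne j k with rfl | hjk
        · calc R j * (1 - p) * (R j * p) = R j * R j * p - R j * (p * R j) * p := by noncomm_ring
            _ = R j * R j * p - R j * (R j * p) * p := by rw [hpR]
            _ = R j * R j * p - (R j * R j) * (p * p) := by noncomm_ring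
            _ = 0 := by rw [hpidem, hidem j, sub_self]
        · calc R j * (1 - p) * (R k * p) = R j * R k * p - R j * (p * R k) * p := by noncomm_ring
            _ = R j * R k * p - (R j * R k) * (p * p) := by rw [hpR]; noncomm_ring
            _ = 0 := by rw [horth j k hjk, zero_mul, zero_mul, sub_self]
      · have hjk : j ≠ k := fun h => hne (by rw [h])
        show R j * (1 - p) * (R k * (1 - p)) = 0
        have h1 : (1 - p) * R k = R k * (1 - p) := by
          rw [sub_mul, mul_sub, one_mul, mul_one, hpR]
        calc R j * (1 - p) * (R k * (1 - p)) = R j * ((1 - p) * R k) * (1 - p) := by noncomm_ring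
          _ = (R j * R k) * ((1 - p) * (1 - p)) := by rw [h1]; noncomm_ring
          _ = 0 := by rw [horth j k hjk, zero_mul]
      · show R j * (1 - p) * (p * (1 - E)) = 0
        calc R j * (1 - p) * (p * (1 - E)) = R j * ((p - p * p) * (1 - E)) := by noncomm_ring
          _ = 0 := by rw [hpidem, sub_self, zero_mul, mul_zero]
      · show p * (1 - E) * (R k * p) = 0
        calc p * (1 - E) * (R k * p) = p * (R k - E * R k) * p := by noncomm_ring
          _ = 0 := by rw [hER, sub_self, mul_zero, zero_mul]
      · show p * (1 - E) * (R k * (1 - p)) = 0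
        calc p * (1 - E) * (R k * (1 - p)) = p * (R k - E * R k) * (1 - p) := by noncomm_ring
          _ = 0 := by rw [hER, sub_self, mul_zero, zero_mul]
      · exact absurd rfl hne
    · intro a ha
      have haR : ∀ j, a * R j = R j * a :=
        hcommut a (fun i => ha i.castSucc)
      have hap : a * p = p * a := ha (Fin.last n)
      have haE : a * E = E * a := by
        simp only [hE, Finset.mul_sum, Finset.sum_mul]
        exact Finset.sum_congr rfl fun j _ => haR j
      rintro (j | j | _)
      · show a * (R j * p) = R j * p * a
        rw [← mul_assoc, haR, mul_assoc, hap, mul_assoc]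
      · show a * (R j * (1 - p)) = R j * (1 - p) * a
        rw [← mul_assoc, haR]
        rw [mul_sub, mul_one, mul_sub, mul_one, sub_mul, mul_assoc, hap, mul_assoc]
      · show a * (p * (1 - E)) = p * (1 - E) * a
        rw [← mul_assoc, hap, mul_sub, mul_one, mul_sub, mul_one, sub_mul,
          mul_assoc, haE, mul_assoc]
    · rw [Fin.sum_univ_castSucc, hsum, Fintype.sum_sum_type, Fintype.sum_sum_type]
      simp only [Sum.elim_inl, Sum.elim_inr, Finset.univ_unique, Finset.sum_singleton]
      have hA : ∑ j, (d j + c (Fin.last n)) • (R j * p)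
          = ∑ j, d j • (R j * p) + c (Fin.last n) • (E * p) := by
        simp only [add_smul, Finset.sum_add_distrib, hE, Finset.sum_mul, Finset.smul_sum]
      have hB : ∑ j, d j • (R j * (1 - p)) = ∑ j, d j • R j - ∑ j, d j • (R j * p) := by
        simp only [mul_sub, mul_one, smul_sub, Finset.sum_sub_distrib]
      have hC : (c (Fin.last n)) • (p * (1 - E))
          = c (Fin.last n) • p - c (Fin.last n) • (E * p) := by
        rw [← hpE, mul_sub, mul_one, smul_sub]
      rw [hA, hB, hC]
      abel

/-- A nonnegative linear combination `c₁ P₁ + ⋯ + cₙ Pₙ` of pairwise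
commuting orthogonal projections on a complex Hilbert space has closed range. -/
theorem stmt_13 {H : Type*} [NormedAddCommGroup H] [InnerProductSpace ℂ H] [CompleteSpace H]
    {n : ℕ} (P : Fin n → H →L[ℂ] H)
    (hP : ∀ i, IsSelfAdjoint (P i) ∧ IsIdempotentElem (P i))
    (hcomm : ∀ i j : Fin n, P i * P j = P j * P i)
    (c : Fin n → ℝ) (hc : ∀ i, 0 ≤ c i) :
    IsClosed (Set.range ⇑(∑ i, ((c i : ℂ)) • P i)) := by
  obtain ⟨ι, _, R, d, hidem, horth, _, hsum⟩ :=
    key_s13 n P (fun i => (hP i).2) hcomm (fun i => (c i : ℂ))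
  set T : H →L[ℂ] H := ∑ i, ((c i : ℂ)) • P i with hT
  -- pseudo-inverse
  set e : ι → ℂ := fun j => if d j = 0 then 0 else (d j)⁻¹ with he
  set S : H →L[ℂ] H := ∑ j, e j • R j with hS
  have hTS : T * S = ∑ j, (d j * e j) • R j := by
    rw [hsum, hS, diag_mul R hidem horth]
  have hTST : T * S * T = T := by
    rw [hTS, hsum, diag_mul R hidem horth]
    refine Finset.sum_congr rfl fun j _ => ?_
    congr 1
    rcases eq_or_ne (d j) 0 with h | h
    · simp [he, h]
    · field_simp [he, h]
      simp [he, h]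
  have hTSidem : (T * S) * (T * S) = T * S := by
    rw [← mul_assoc, hTST]
  -- range T = range (T * S), an idempotent with closed range
  have hrange : Set.range ⇑T = Set.range ⇑(T * S) := by
    apply Set.Subset.antisymm
    · rintro _ ⟨x, rfl⟩
      refine ⟨T x, ?_⟩
      show (T * S) (T x) = T x
      rw [← ContinuousLinearMap.mul_apply, hTST]
    · rintro _ ⟨x, rfl⟩
      exact ⟨S x, rfl⟩
  rw [hrange]
  have hkey : Set.range ⇑(T * S) = (⇑(1 - T * S)) ⁻¹' {0} := by
    ext x
    simp only [Set.mem_preimage, Set.mem_singleton_iff, ContinuousLinearMap.sub_apply,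
      ContinuousLinearMap.one_apply, sub_eq_zero, Set.mem_range]
    constructor
    · rintro ⟨y, rfl⟩
      show (T * S) y = (T * S) ((T * S) y)
      rw [← ContinuousLinearMap.mul_apply, hTSidem]
    · intro h
      exact ⟨x, h.symm⟩
  rw [hkey]
  exact IsClosed.preimage (1 - T * S).continuous isClosed_singleton
end

section
/- Let N_1, N_2, N_3 be closed subspaces of a complex Hilbert space H whose orthogonal projections P_{N_1}, P_{N_2}, P_{N_3} pairwise commute. Let N denote the closure of N_1 + N_2 + N_3 and let K denote the closure of N_2 + N_3. Then P_{N_1} + P_{N_2} + P_{N_3} − P_N = P_{N_1 ∩ K} + P_{N_2 ∩ N_3}, and consequently ‖(1/3)(P_{N_1} + P_{N_2} + P_{N_3}) − P_N‖ ≤ 2/3 in the operator norm. -/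
set_option maxHeartbeats 1000000
set_option linter.unusedSectionVars false
section
variable {H : Type*} [NormedAddCommGroup H] [InnerProductSpace ℂ H] [CompleteSpace H]

lemma aux_fix {e : H →L[ℂ] H} (he : IsIdempotentElem e) {x : H}
    (hx : x ∈ LinearMap.range (e : H →ₗ[ℂ] H)) : e x = x := by
  obtain ⟨y, rfl⟩ := hx
  calc e (e y) = (e * e) y := rfl
  _ = e y := by rw [he]

lemma aux_meet {p q : H →L[ℂ] H} (hps : IsSelfAdjoint p) (hpi : IsIdempotentElem p)
    (hqs : IsSelfAdjoint q) (hqi : IsIdempotentElem q) (hc : p * q = q * p) :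
    IsSelfAdjoint (p * q) ∧ IsIdempotentElem (p * q) ∧
      LinearMap.range ((p * q : H →L[ℂ] H) : H →ₗ[ℂ] H) = LinearMap.range (p : H →ₗ[ℂ] H) ⊓ LinearMap.range (q : H →ₗ[ℂ] H) := by
  refine ⟨?_, ?_, ?_⟩
  · calc star (p * q) = star q * star p := star_mul p q
    _ = q * p := by rw [hps, hqs]
    _ = p * q := hc.symm
  · show p * q * (p * q) = p * q
    calc p * q * (p * q) = p * (q * p) * q := by noncomm_ring
    _ = p * (p * q) * q := by rw [hc]
    _ = (p * p) * (q * q) := by noncomm_ring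
    _ = p * q := by rw [hpi, hqi]
  · apply le_antisymm
    · rintro x ⟨y, rfl⟩
      refine ⟨⟨q y, rfl⟩, ⟨p y, ?_⟩⟩
      calc q (p y) = (q * p) y := rfl
      _ = (p * q) y := by rw [hc]
    · rintro x ⟨⟨yp, hp⟩, ⟨yq, hq⟩⟩
      refine ⟨x, ?_⟩
      have hpx : p x = x := aux_fix hpi ⟨yp, hp⟩
      have hqx : q x = x := aux_fix hqi ⟨yq, hq⟩
      show p (q x) = x
      rw [hqx, hpx]

lemma aux_join {p q : H →L[ℂ] H} (hps : IsSelfAdjoint p) (hpi : IsIdempotentElem p)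
    (hqs : IsSelfAdjoint q) (hqi : IsIdempotentElem q) (hc : p * q = q * p) :
    IsSelfAdjoint (p + q - p * q) ∧ IsIdempotentElem (p + q - p * q) ∧
      LinearMap.range ((p + q - p * q : H →L[ℂ] H) : H →ₗ[ℂ] H) =
        (LinearMap.range (p : H →ₗ[ℂ] H) ⊔ LinearMap.range (q : H →ₗ[ℂ] H)).topologicalClosure := by
  set t : H →L[ℂ] H := p + q - p * q with ht
  clear_value t
  have hts : IsSelfAdjoint t := by
    show star t = t
    rw [ht]
    rw [star_sub, star_add, star_mul, hps, hqs, hc]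
  have hti : IsIdempotentElem t := by
    have h1 : t = 1 - (1 - p) * (1 - q) := by rw [ht]; noncomm_ring
    rw [h1]
    exact (IsIdempotentElem.mul_of_commute
      (by
        have h2 : Commute p q := hc
        exact ((Commute.one_left (1 - q)).sub_left
          (((Commute.one_right p).sub_right h2)))) hpi.one_sub hqi.one_sub).one_sub
  have htp : t * p = p := by
    have h1 : p * q * p = q * p := by rw [hc, mul_assoc, hpi]
    calc t * p = p * p + q * p - p * q * p := by rw [ht]; noncomm_ring
    _ = p + q * p - q * p := by rw [hpi, h1]
    _ = p := by abel
  have htq : t * q = q := by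
    have h1 : p * q * q = p * q := by rw [mul_assoc, hqi]
    calc t * q = p * q + q * q - p * q * q := by rw [ht]; noncomm_ring
    _ = p * q + q - p * q := by rw [hqi, h1]
    _ = q := by abel
  have hmem : ∀ x : H, x ∈ LinearMap.range (t : H →ₗ[ℂ] H) ↔ t x = x := by
    intro x
    constructor
    · exact fun hx => aux_fix hti hx
    · exact fun hx => ⟨x, hx⟩
  have hclosed : IsClosed ((LinearMap.range (t : H →ₗ[ℂ] H) : Submodule ℂ H) : Set H) := by
    have h1 : (LinearMap.range (t : H →ₗ[ℂ] H) : Submodule ℂ H) = (1 - t : H →L[ℂ] H).ker := by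
      ext x
      rw [hmem x, LinearMap.mem_ker, ContinuousLinearMap.coe_coe, ContinuousLinearMap.sub_apply,
        ContinuousLinearMap.one_apply, sub_eq_zero]
      exact eq_comm
    rw [h1]
    exact ContinuousLinearMap.isClosed_ker (1 - t)
  refine ⟨hts, hti, le_antisymm ?_ ?_⟩
  · rintro x ⟨y, rfl⟩
    apply Submodule.le_topologicalClosure
    rw [Submodule.mem_sup]
    refine ⟨p y - p (q y), ?_, q y, ⟨y, rfl⟩, ?_⟩
    · exact ⟨y - q y, by rw [map_sub]; rfl⟩
    · show p y - p (q y) + q y = t y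
      rw [ht]
      simp only [ContinuousLinearMap.sub_apply, ContinuousLinearMap.add_apply,
        ContinuousLinearMap.mul_apply]
      abel
  · refine Submodule.topologicalClosure_minimal _ (sup_le ?_ ?_) hclosed
    · rintro x ⟨y, rfl⟩
      exact ⟨p y, by show (t * p) y = p y; rw [htp]⟩
    · rintro x ⟨y, rfl⟩
      exact ⟨q y, by show (t * q) y = q y; rw [htq]⟩

lemma aux_comp_eq {e f : H →L[ℂ] H} (he : IsIdempotentElem e)
    (h : LinearMap.range (f : H →ₗ[ℂ] H) ≤ LinearMap.range (e : H →ₗ[ℂ] H)) : e * f = f := by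
  ext x
  exact aux_fix he (h ⟨x, rfl⟩)

lemma aux_uniq {e f : H →L[ℂ] H} (hes : IsSelfAdjoint e) (hei : IsIdempotentElem e)
    (hfs : IsSelfAdjoint f) (hfi : IsIdempotentElem f)
    (hr : LinearMap.range (e : H →ₗ[ℂ] H) = LinearMap.range (f : H →ₗ[ℂ] H)) : e = f := by
  have h1 : e * f = f := aux_comp_eq hei (le_of_eq hr.symm)
  have h2 : f * e = e := aux_comp_eq hfi (le_of_eq hr)
  calc e = star e := hes.symm
  _ = star (f * e) := by rw [h2]
  _ = star e * star f := by rw [star_mul]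
  _ = e * f := by rw [hes, hfs]
  _ = f := h1

lemma aux_norm_le_one {e : H →L[ℂ] H} (hes : IsSelfAdjoint e) (hei : IsIdempotentElem e) :
    ‖e‖ ≤ 1 := by
  have h : ‖e‖ * ‖e‖ = ‖e‖ := by
    calc ‖e‖ * ‖e‖ = ‖star e * e‖ := (CStarRing.norm_star_mul_self).symm
    _ = ‖e‖ := by rw [hes, hei]
  nlinarith [norm_nonneg e]

lemma aux_closure_juggle (A B C : Submodule ℂ H) :
    (A ⊔ (B ⊔ C).topologicalClosure).topologicalClosure =
      ((A ⊔ B) ⊔ C).topologicalClosure := by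
  apply le_antisymm
  · refine Submodule.topologicalClosure_minimal _ (sup_le ?_ ?_)
      (Submodule.isClosed_topologicalClosure _)
    · exact le_trans (le_trans le_sup_left le_sup_left) (Submodule.le_topologicalClosure _)
    · exact Submodule.topologicalClosure_mono (by rw [sup_assoc]; exact le_sup_right)
  · apply Submodule.topologicalClosure_mono
    rw [sup_assoc]
    exact sup_le_sup_left (Submodule.le_topologicalClosure _) A

end

/-- Let `N₁, N₂, N₃` be closed subspaces of a complex Hilbert space whose
orthogonal projections `P₁, P₂, P₃` pairwise commute, let `N` be the closure of
`N₁ + N₂ + N₃` and `K` the closure of `N₂ + N₃`. Then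
`P₁ + P₂ + P₃ − P_N = P_{N₁ ⊓ K} + P_{N₂ ⊓ N₃}`, and consequently
`‖(1/3)(P₁ + P₂ + P₃) − P_N‖ ≤ 2/3`. -/
theorem stmt_17 {H : Type*} [NormedAddCommGroup H] [InnerProductSpace ℂ H] [CompleteSpace H]
    (N₁ N₂ N₃ : Submodule ℂ H)
    (hN₁ : IsClosed (N₁ : Set H)) (hN₂ : IsClosed (N₂ : Set H)) (hN₃ : IsClosed (N₃ : Set H))
    (P₁ P₂ P₃ : H →L[ℂ] H)
    (hP₁ : IsSelfAdjoint P₁ ∧ IsIdempotentElem P₁ ∧ LinearMap.range (P₁ : H →ₗ[ℂ] H) = N₁)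
    (hP₂ : IsSelfAdjoint P₂ ∧ IsIdempotentElem P₂ ∧ LinearMap.range (P₂ : H →ₗ[ℂ] H) = N₂)
    (hP₃ : IsSelfAdjoint P₃ ∧ IsIdempotentElem P₃ ∧ LinearMap.range (P₃ : H →ₗ[ℂ] H) = N₃)
    (hc₁₂ : P₁ * P₂ = P₂ * P₁) (hc₁₃ : P₁ * P₃ = P₃ * P₁) (hc₂₃ : P₂ * P₃ = P₃ * P₂)
    (Q : H →L[ℂ] H)
    (hQ : IsSelfAdjoint Q ∧ IsIdempotentElem Q ∧
      LinearMap.range (Q : H →ₗ[ℂ] H) = (N₁ + N₂ + N₃).topologicalClosure)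
    (R : H →L[ℂ] H)
    (hR : IsSelfAdjoint R ∧ IsIdempotentElem R ∧
      LinearMap.range (R : H →ₗ[ℂ] H) = N₁ ⊓ (N₂ + N₃).topologicalClosure)
    (S : H →L[ℂ] H)
    (hS : IsSelfAdjoint S ∧ IsIdempotentElem S ∧ LinearMap.range (S : H →ₗ[ℂ] H) = N₂ ⊓ N₃) :
    P₁ + P₂ + P₃ - Q = R + S ∧ ‖(1 / (3 : ℂ)) • (P₁ + P₂ + P₃) - Q‖ ≤ 2 / 3 := by
  obtain ⟨h1s, h1i, h1r⟩ := hP₁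
  obtain ⟨h2s, h2i, h2r⟩ := hP₂
  obtain ⟨h3s, h3i, h3r⟩ := hP₃
  obtain ⟨hQs, hQi, hQr⟩ := hQ
  obtain ⟨hRs, hRi, hRr⟩ := hR
  obtain ⟨hSs, hSi, hSr⟩ := hS
  subst h1r h2r h3r
  -- meet of P₂, P₃
  obtain ⟨hms, hmi, hmr⟩ := aux_meet h2s h2i h3s h3i hc₂₃
  have hS' : S = P₂ * P₃ := by
    apply aux_uniq hSs hSi hms hmi
    rw [hSr, hmr]
  -- join of P₂, P₃
  obtain ⟨hts, hti, htr⟩ := aux_join h2s h2i h3s h3i hc₂₃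
  -- commutation of P₁ with t
  have h123 : P₁ * (P₂ * P₃) = P₂ * P₃ * P₁ := by
    rw [← mul_assoc, hc₁₂, mul_assoc, hc₁₃, ← mul_assoc]
  have hc1t : P₁ * (P₂ + P₃ - P₂ * P₃) = (P₂ + P₃ - P₂ * P₃) * P₁ := by
    rw [mul_sub, sub_mul, mul_add, add_mul, hc₁₂, hc₁₃, h123]
  -- R is the meet of P₁ and the join of P₂, P₃
  obtain ⟨hrs, hri, hrr⟩ := aux_meet h1s h1i hts hti hc1t
  have hR' : R = P₁ * (P₂ + P₃ - P₂ * P₃) := by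
    apply aux_uniq hRs hRi hrs hri
    rw [hRr, hrr, htr, Submodule.add_eq_sup]
  -- Q is the join of P₁ and the join of P₂, P₃
  obtain ⟨hqs, hqi, hqr⟩ := aux_join h1s h1i hts hti hc1t
  have hQ' : Q = P₁ + (P₂ + P₃ - P₂ * P₃) - P₁ * (P₂ + P₃ - P₂ * P₃) := by
    apply aux_uniq hQs hQi hqs hqi
    rw [hQr, hqr, htr, Submodule.add_eq_sup, Submodule.add_eq_sup,
      aux_closure_juggle]
  have hkey : P₁ + P₂ + P₃ - Q = R + S := by
    rw [hQ', hR', hS']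
    noncomm_ring
  refine ⟨hkey, ?_⟩
  -- norm estimate
  have hRleQ : LinearMap.range (R : H →ₗ[ℂ] H) ≤ LinearMap.range (Q : H →ₗ[ℂ] H) := by
    rw [hRr, hQr]
    refine le_trans inf_le_left ?_
    rw [Submodule.add_eq_sup, Submodule.add_eq_sup]
    exact le_trans (le_trans le_sup_left le_sup_left) (Submodule.le_topologicalClosure _)
  have hSleQ : LinearMap.range (S : H →ₗ[ℂ] H) ≤ LinearMap.range (Q : H →ₗ[ℂ] H) := by
    rw [hSr, hQr]
    refine le_trans inf_le_left ?_
    rw [Submodule.add_eq_sup, Submodule.add_eq_sup]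
    refine le_trans ?_ (Submodule.le_topologicalClosure _)
    exact le_trans le_sup_right le_sup_left
  have hQR : Q * R = R := aux_comp_eq hQi hRleQ
  have hQS : Q * S = S := aux_comp_eq hQi hSleQ
  have hRQ : R * Q = R := by
    calc R * Q = star R * star Q := by rw [hRs, hQs]
    _ = star (Q * R) := (star_mul _ _).symm
    _ = star R := by rw [hQR]
    _ = R := hRs
  have hSQ : S * Q = S := by
    calc S * Q = star S * star Q := by rw [hSs, hQs]
    _ = star (Q * S) := (star_mul _ _).symm
    _ = star S := by rw [hQS]
    _ = S := hSs
  have hQRi : IsIdempotentElem (Q - R) := by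
    show (Q - R) * (Q - R) = Q - R
    calc (Q - R) * (Q - R) = Q * Q - Q * R - R * Q + R * R := by noncomm_ring
    _ = Q - R := by rw [hQi, hRi, hQR, hRQ]; abel
  have hQSi : IsIdempotentElem (Q - S) := by
    show (Q - S) * (Q - S) = Q - S
    calc (Q - S) * (Q - S) = Q * Q - Q * S - S * Q + S * S := by noncomm_ring
    _ = Q - S := by rw [hQi, hSi, hQS, hSQ]; abel
  have hn1 : ‖Q - R‖ ≤ 1 := aux_norm_le_one (hQs.sub hRs) hQRi
  have hn2 : ‖Q - S‖ ≤ 1 := aux_norm_le_one (hQs.sub hSs) hQSi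
  have hsum : P₁ + P₂ + P₃ = R + S + Q := by
    rw [← hkey]; abel
  have hA : (1 / (3 : ℂ)) • (P₁ + P₂ + P₃) - Q =
      -((1 / (3 : ℂ)) • (Q - R) + (1 / (3 : ℂ)) • (Q - S)) := by
    rw [hsum]
    have h3 : ((1 : ℂ)/3 + 1/3 + 1/3) • Q = Q := by
      norm_num
    rw [← h3]
    module
  rw [hA, norm_neg]
  have hns : ‖(1 / (3 : ℂ))‖ = 1 / 3 := by
    simp
  calc ‖(1 / (3 : ℂ)) • (Q - R) + (1 / (3 : ℂ)) • (Q - S)‖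
      ≤ ‖(1 / (3 : ℂ)) • (Q - R)‖ + ‖(1 / (3 : ℂ)) • (Q - S)‖ := norm_add_le _ _
  _ = (1 / 3) * ‖Q - R‖ + (1 / 3) * ‖Q - S‖ := by rw [norm_smul, norm_smul, hns]
  _ ≤ (1 / 3) * 1 + (1 / 3) * 1 := by
      gcongr
  _ ≤ 2 / 3 := by norm_num
end
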